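/- arXiv:2310.20359 — 9 statements merged into one kernel-verified Lean document; each statement's English description precedes it below -/
import Mathlib

section
/- Every infinite crowded (i.e., without isolated points) Tychonoff space admits a continuous surjection onto either the discrete space of natural numbers ℕ or the closed unit interval [0,1]. -/
open Set Function


/-- geometric: sum of 1/2^(n+1) is 1 -/
lemma aux_geom_half : ∑' n : ℕ, ((1:ℝ)/2)^(n+1) = 1 := by
  have h : ∑' n : ℕ, ((1:ℝ)/2)^(n+1) = ∑' n : ℕ, (1/2 : ℝ) * (1/2)^n := by
    congr 1; ext n; ring
  rw [h, tsum_mul_left, tsum_geometric_of_lt_one (by norm_num) (by norm_num)]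
  norm_num

lemma aux_summable_half : Summable (fun n : ℕ => ((1:ℝ)/2)^(n+1)) := by
  have := (summable_geometric_of_lt_one (r := (1/2:ℝ)) (by norm_num) (by norm_num)).mul_left (1/2)
  convert this using 2 with n
  · rfl
  ring

noncomputable def binRem (y : ℝ) : ℕ → ℝ
  | 0 => y
  | n+1 => if 1/2 ≤ binRem y n then 2 * binRem y n - 1 else 2 * binRem y n

/-- Binary expansion existence. -/
lemma aux_digits (y : ℝ) (hy : y ∈ Set.Icc (0:ℝ) 1) :
    ∃ d : ℕ → Bool, ∑' n : ℕ, (if d n then (1:ℝ) else 0) / 2^(n+1) = y := by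
  rcases eq_or_lt_of_le hy.2 with h1 | h1
  · refine ⟨fun _ => true, ?_⟩
    simp only [if_pos]
    calc ∑' n : ℕ, (1:ℝ)/2^(n+1) = ∑' n : ℕ, ((1:ℝ)/2)^(n+1) := by
          congr 1; ext n; rw [div_pow, one_pow]
      _ = 1 := aux_geom_half
      _ = y := h1.symm
  · -- y < 1
    set d : ℕ → Bool := fun n => decide ((1:ℝ)/2 ≤ binRem y n) with hd
    have hrange : ∀ n, 0 ≤ binRem y n ∧ binRem y n < 1 := by
      intro n
      induction n with
      | zero => exact ⟨hy.1, h1⟩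
      | succ n ih =>
        rw [binRem]
        split_ifs with h
        · constructor <;> [linarith [ih.1]; linarith [ih.2]]
        · push_neg at h
          constructor <;> [linarith [ih.1]; linarith [h]]
    have key : ∀ n, y = (∑ k ∈ Finset.range n, (if d k then (1:ℝ) else 0) / 2^(k+1))
        + binRem y n / 2^n := by
      intro n
      induction n with
      | zero => simp [binRem]
      | succ n ih =>
        rw [Finset.sum_range_succ]
        have h2 : binRem y (n+1) = 2 * binRem y n - (if d n then (1:ℝ) else 0) := by
          rw [binRem]
          by_cases h : (1:ℝ)/2 ≤ binRem y n
          · rw [if_pos h, if_pos (by simp [hd, h]; linarith)]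
          · rw [if_neg h, if_neg (by simp [hd, h]; linarith), sub_zero]
        rw [h2]
        have : (2:ℝ)^(n+1) = 2 * 2^n := by ring
        rw [this]
        field_simp
        field_simp at ih
        linarith [ih]
    have hnonneg : ∀ n : ℕ, 0 ≤ (if d n then (1:ℝ) else 0) / 2^(n+1) := by
      intro n; positivity
    refine ⟨d, ?_⟩
    have hs : HasSum (fun n : ℕ => (if d n then (1:ℝ) else 0) / 2^(n+1)) y := by
      rw [hasSum_iff_tendsto_nat_of_nonneg hnonneg]
      have hP : ∀ n, ∑ k ∈ Finset.range n, (if d k then (1:ℝ) else 0) / 2^(k+1)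
          = y - binRem y n / 2^n := by
        intro n; linarith [key n]
      simp_rw [hP]
      have h0 : Filter.Tendsto (fun n : ℕ => binRem y n / 2^n) Filter.atTop (nhds 0) := by
        apply squeeze_zero (fun n => div_nonneg (hrange n).1 (by positivity)) (g := fun n : ℕ => ((1:ℝ)/2)^n)
        · intro n
          rw [div_pow, one_pow, div_le_div_iff₀ (by positivity) (by positivity), one_mul]
          calc binRem y n * 2^n ≤ 1 * 2^n := by
                have := (hrange n).2; nlinarith [pow_pos (show (0:ℝ) < 2 by norm_num) n]
            _ = 2^n := by ring
        · exact tendsto_pow_atTop_nhds_zero_of_lt_one (by norm_num) (by norm_num)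
      have := Filter.Tendsto.const_sub y h0
      simpa using this
    exact hs.tsum_eq


lemma aux_natCase {X : Type*} [TopologicalSpace X] (C : ℕ → Set X)
    (hcl : ∀ n, IsClopen (C n)) (hne : ∀ n, (C n).Nonempty) (hanti : Antitone C)
    (hempty : ⋂ n, C n = ∅) :
    ∃ f : X → ℕ, Continuous f ∧ Function.Surjective f := by
  classical
  have hex : ∀ x : X, {n : ℕ | x ∉ C n}.Nonempty := by
    intro x
    by_contra h
    rw [Set.not_nonempty_iff_eq_empty, Set.eq_empty_iff_forall_notMem] at h
    have hx : x ∈ ⋂ n, C n := Set.mem_iInter.2 fun n => by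
      have := h n; simpa using this
    rw [hempty] at hx
    exact hx
  set f : X → ℕ := fun x => sInf {n : ℕ | x ∉ C n} with hf
  have hmem : ∀ x, x ∉ C (f x) := fun x => Nat.sInf_mem (hex x)
  have hlt : ∀ x, ∀ j, j < f x → x ∈ C j := by
    intro x j hj
    by_contra hxc
    exact absurd (Nat.sInf_le hxc) (not_le.2 hj)
  -- f is locally constant
  have hlc : IsLocallyConstant f := by
    rw [IsLocallyConstant.iff_exists_open]
    intro x
    cases hk : f x with
    | zero =>
      refine ⟨(C 0)ᶜ, (hcl 0).isClosed.isOpen_compl, by simpa using (hk ▸ hmem x), ?_⟩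
      intro y hy
      exact Nat.le_zero.1 (Nat.sInf_le hy)
    | succ m =>
      refine ⟨C m \ C (m+1), (hcl m).isOpen.sdiff (hcl (m+1)).isClosed, ⟨hlt x m (hk ▸ m.lt_succ_self), hk ▸ hmem x⟩, ?_⟩
      rintro y ⟨hy1, hy2⟩
      refine le_antisymm (Nat.sInf_le hy2) ?_
      by_contra hle
      push_neg at hle
      have : f y ≤ m := Nat.lt_succ_iff.1 hle
      exact hmem y (hanti this hy1)
  -- range of f is infinite
  have hrange : {n : ℕ | n ∈ Set.range f}.Infinite := by
    rw [Set.setOf_mem_eq]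
    apply Set.infinite_of_not_bddAbove
    rintro ⟨b, hb⟩
    obtain ⟨x, hx⟩ := hne (b+1)
    have h1 : b + 1 ≤ f x := by
      by_contra h
      push_neg at h
      exact hmem x (hanti (show f x ≤ b+1 by omega) hx)
    exact absurd (hb (Set.mem_range_self x)) (not_le.2 (lt_of_lt_of_le b.lt_succ_self h1))
  set p : ℕ → Prop := fun n => n ∈ Set.range f with hp
  refine ⟨fun x => Nat.count p (f x), ?_, ?_⟩
  · exact (hlc.comp (Nat.count p)).continuous
  · intro k
    have hpn : p (Nat.nth p k) := Nat.nth_mem_of_infinite hrange k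
    obtain ⟨x, hx⟩ := hpn
    refine ⟨x, ?_⟩
    simp only [hx]
    exact Nat.count_nth_of_infinite hrange k


lemma aux_split {X : Type*} [TopologicalSpace X] [T35Space X]
    (crowded : ∀ x : X, ¬ IsOpen ({x} : Set X))
    (hB : ∀ f : X → ℝ, Continuous f → interior (Set.range f) = ∅) :
    ∀ C : Set X, IsClopen C → C.Nonempty →
      ∃ A B : Set X, (IsClopen A ∧ A.Nonempty) ∧ (IsClopen B ∧ B.Nonempty) ∧
        Disjoint A B ∧ A ∪ B = C := by
  intro C hC hCne
  obtain ⟨x, hx⟩ := hCne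
  -- find a second point
  have h2 : ∃ y ∈ C, y ≠ x := by
    by_contra h
    push_neg at h
    have : C = {x} := Set.eq_singleton_iff_unique_mem.2 ⟨hx, h⟩
    exact crowded x (this ▸ hC.isOpen)
  obtain ⟨y, hyC, hyx⟩ := h2
  obtain ⟨f, fcont, fx0, fy1⟩ :=
    CompletelyRegularSpace.completely_regular x {y} isClosed_singleton (by simpa using hyx.symm)
  set F : X → ℝ := fun z => (f z : ℝ) with hF
  have Fcont : Continuous F := continuous_subtype_val.comp fcont
  have hI : interior (Set.range F) = ∅ := hB F Fcont
  have hc : ∃ c ∈ Set.Ioo (0:ℝ) 1, c ∉ Set.range F := by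
    by_contra h
    push_neg at h
    have hsub : Set.Ioo (0:ℝ) 1 ⊆ Set.range F := h
    have : Set.Ioo (0:ℝ) 1 ⊆ interior (Set.range F) :=
      interior_maximal hsub isOpen_Ioo
    rw [hI] at this
    exact this (by norm_num : (1/2 : ℝ) ∈ Set.Ioo (0:ℝ) 1)
  obtain ⟨c, hcI, hcR⟩ := hc
  set U : Set X := F ⁻¹' Set.Iio c with hU
  have hUopen : IsOpen U := isOpen_Iio.preimage Fcont
  have hUeq : U = F ⁻¹' Set.Iic c := by
    ext z
    simp only [hU, Set.mem_preimage, Set.mem_Iio, Set.mem_Iic]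
    constructor
    · exact le_of_lt
    · intro h
      rcases lt_or_eq_of_le h with h' | h'
      · exact h'
      · exact absurd ⟨z, h'⟩ hcR
  have hUclosed : IsClosed U := hUeq ▸ isClosed_Iic.preimage Fcont
  have hUclopen : IsClopen U := ⟨hUclosed, hUopen⟩
  refine ⟨C ∩ U, C ∩ Uᶜ, ⟨hC.inter hUclopen, ⟨x, hx, ?_⟩⟩,
    ⟨hC.inter hUclopen.compl, ⟨y, hyC, ?_⟩⟩, ?_, ?_⟩
  · show F x < c
    have : F x = 0 := by rw [hF]; simp [fx0]
    rw [this]; exact hcI.1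
  · show ¬ F y < c
    have : F y = 1 := by
      have := fy1 (Set.mem_singleton y)
      rw [hF]; simp [this]
    rw [this]; exact not_lt.2 (le_of_lt hcI.2)
  · exact (disjoint_compl_right.mono inf_le_right inf_le_right)
  · rw [Set.inter_union_compl]  -- might need different form


open Classical in
noncomputable def treeS {X : Type*} (A B : Set X → Set X) (x : X) : ℕ → Set X
  | 0 => Set.univ
  | n+1 => if x ∈ A (treeS A B x n) then A (treeS A B x n) else B (treeS A B x n)

open Classical in
noncomputable def treeE {X : Type*} (A B : Set X → Set X) (d : ℕ → Bool) : ℕ → Set X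
  | 0 => Set.univ
  | n+1 => if d n then A (treeE A B d n) else B (treeE A B d n)

lemma aux_treeCase {X : Type*} [TopologicalSpace X] [Nonempty X]
    (A B : Set X → Set X)
    (hAB : ∀ C : Set X, IsClopen C → C.Nonempty →
      (IsClopen (A C) ∧ (A C).Nonempty) ∧ (IsClopen (B C) ∧ (B C).Nonempty) ∧
        Disjoint (A C) (B C) ∧ A C ∪ B C = C)
    (hP : ∀ C : ℕ → Set X, (∀ n, IsClopen (C n)) → (∀ n, (C n).Nonempty) → Antitone C →
      (⋂ n, C n).Nonempty) :
    ∃ g : X → unitInterval, Continuous g ∧ Function.Surjective g := by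
  classical
  -- invariant for treeS
  have hinv : ∀ (x : X) (n : ℕ), IsClopen (treeS A B x n) ∧ (treeS A B x n).Nonempty ∧
      x ∈ treeS A B x n := by
    intro x n
    induction n with
    | zero => exact ⟨isClopen_univ, Set.univ_nonempty, Set.mem_univ x⟩
    | succ n ih =>
      obtain ⟨hc, hn, hxm⟩ := ih
      obtain ⟨⟨hAc, hAn⟩, ⟨hBc, hBn⟩, hdisj, huni⟩ := hAB _ hc hn
      by_cases hxa : x ∈ A (treeS A B x n)
      · rw [treeS, if_pos hxa]
        exact ⟨hAc, hAn, hxa⟩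
      · rw [treeS, if_neg hxa]
        refine ⟨hBc, hBn, ?_⟩
        have : x ∈ A (treeS A B x n) ∪ B (treeS A B x n) := by rw [huni]; exact hxm
        rcases this with h | h
        · exact absurd h hxa
        · exact h
  -- successor set is a subset
  have hsub : ∀ (x : X) (n : ℕ), treeS A B x (n+1) ⊆ treeS A B x n := by
    intro x n
    obtain ⟨hc, hn, -⟩ := hinv x n
    obtain ⟨-, -, -, huni⟩ := hAB _ hc hn
    rw [treeS]
    split_ifs with h
    · exact Set.subset_union_left.trans huni.le
    · exact Set.subset_union_right.trans huni.le
  -- locality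
  have hloc : ∀ (n : ℕ) (x y : X), y ∈ treeS A B x n → treeS A B y n = treeS A B x n := by
    intro n
    induction n with
    | zero => intro x y _; rfl
    | succ n ih =>
      intro x y hy
      have hy' : y ∈ treeS A B x n := hsub x n hy
      have hSeq : treeS A B y n = treeS A B x n := ih x y hy'
      obtain ⟨hc, hn, -⟩ := hinv x n
      obtain ⟨-, -, hdisj, -⟩ := hAB _ hc hn
      by_cases hxa : x ∈ A (treeS A B x n)
      · rw [treeS, if_pos hxa] at hy
        rw [treeS, hSeq, if_pos hy, treeS, if_pos hxa]
      · rw [treeS, if_neg hxa] at hy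
        have hyA : y ∉ A (treeS A B x n) := fun h => hdisj.ne_of_mem h hy rfl
        rw [treeS, hSeq, if_neg hyA, treeS, if_neg hxa]
  -- bit agreement on clopen neighborhoods
  have hbit : ∀ (n : ℕ) (x y : X), y ∈ treeS A B x (n+1) →
      ((y ∈ A (treeS A B y n)) ↔ (x ∈ A (treeS A B x n))) := by
    intro n x y hy
    have hSeq := hloc n x y (hsub x n hy)
    rw [hSeq]
    obtain ⟨hc, hn, -⟩ := hinv x n
    obtain ⟨-, -, hdisj, -⟩ := hAB _ hc hn
    by_cases hxa : x ∈ A (treeS A B x n)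
    · rw [treeS, if_pos hxa] at hy
      exact ⟨fun _ => hxa, fun _ => hy⟩
    · rw [treeS, if_neg hxa] at hy
      have hyA : y ∉ A (treeS A B x n) := fun h => hdisj.ne_of_mem h hy rfl
      exact ⟨fun h => absurd h hyA, fun h => absurd h hxa⟩
  -- the function
  set t : ℕ → X → ℝ := fun n x => (if x ∈ A (treeS A B x n) then (1:ℝ) else 0) / 2^(n+1)
    with ht
  have htc : ∀ n, Continuous (t n) := by
    intro n
    have hlc : IsLocallyConstant (t n) := by
      rw [IsLocallyConstant.iff_exists_open]
      intro x
      refine ⟨treeS A B x (n+1), (hinv x (n+1)).1.isOpen, (hinv x (n+1)).2.2, ?_⟩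
      intro y hy
      have := hbit n x y hy
      simp only [ht]
      by_cases hxa : x ∈ A (treeS A B x n)
      · rw [if_pos hxa, if_pos (this.2 hxa)]
      · rw [if_neg hxa, if_neg (fun h => hxa (this.1 h))]
    exact hlc.continuous
  have htb : ∀ (n : ℕ) (x : X), ‖t n x‖ ≤ ((1:ℝ)/2)^(n+1) := by
    intro n x
    simp only [ht]
    rw [div_pow, one_pow]
    split_ifs with h
    · rw [norm_div, norm_one]
      simp [abs_of_nonneg (by positivity : (0:ℝ) ≤ (2:ℝ)^(n+1))]
    · simp [le_of_lt (by positivity : (0:ℝ) < 1 / (2:ℝ)^(n+1))]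
  have hge : ∀ x, 0 ≤ ∑' n, t n x := by
    intro x
    apply tsum_nonneg
    intro n
    simp only [ht]
    positivity
  have hsummable : ∀ x, Summable (fun n => t n x) := by
    intro x
    apply Summable.of_nonneg_of_le (fun n => by simp only [ht]; positivity)
      (fun n => ?_) aux_summable_half
    have := htb n x
    rwa [Real.norm_eq_abs, abs_of_nonneg (by simp only [ht]; positivity)] at this
  have hle : ∀ x, ∑' n, t n x ≤ 1 := by
    intro x
    calc ∑' n, t n x ≤ ∑' n : ℕ, ((1:ℝ)/2)^(n+1) := by
          apply Summable.tsum_le_tsum (fun n => ?_) (hsummable x) aux_summable_half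
          have := htb n x
          rwa [Real.norm_eq_abs, abs_of_nonneg (by simp only [ht]; positivity)] at this
      _ = 1 := aux_geom_half
  refine ⟨fun x => ⟨∑' n, t n x, hge x, hle x⟩, ?_, ?_⟩
  · apply Continuous.subtype_mk
    exact continuous_tsum htc aux_summable_half htb
  · -- surjectivity
    rintro ⟨y, hy⟩
    obtain ⟨d, hd⟩ := aux_digits y hy
    -- the branch sets
    have hE : ∀ n, IsClopen (treeE A B d n) ∧ (treeE A B d n).Nonempty := by
      intro n
      induction n with
      | zero => exact ⟨isClopen_univ, Set.univ_nonempty⟩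
      | succ n ih =>
        obtain ⟨⟨hAc, hAn⟩, ⟨hBc, hBn⟩, -, -⟩ := hAB _ ih.1 ih.2
        rw [treeE]
        split_ifs with h
        · exact ⟨hAc, hAn⟩
        · exact ⟨hBc, hBn⟩
    have hEsub : ∀ n, treeE A B d (n+1) ⊆ treeE A B d n := by
      intro n
      obtain ⟨-, -, -, huni⟩ := hAB _ (hE n).1 (hE n).2
      rw [treeE]
      split_ifs with h
      · exact Set.subset_union_left.trans huni.le
      · exact Set.subset_union_right.trans huni.le
    obtain ⟨x, hx⟩ := hP (treeE A B d) (fun n => (hE n).1) (fun n => (hE n).2)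
      (antitone_nat_of_succ_le hEsub)
    rw [Set.mem_iInter] at hx
    -- x follows the branch d
    have hSE : ∀ n, treeS A B x n = treeE A B d n := by
      intro n
      induction n with
      | zero => rfl
      | succ n ih =>
        obtain ⟨-, -, hdisj, -⟩ := hAB _ (hE n).1 (hE n).2
        have hx1 := hx (n+1)
        rw [treeE] at hx1
        by_cases hdn : d n
        · rw [if_pos hdn] at hx1
          have hxa : x ∈ A (treeS A B x n) := ih ▸ hx1
          rw [treeS, if_pos hxa, treeE, if_pos hdn, ih]
        · rw [if_neg hdn] at hx1
          have hxb : x ∈ B (treeS A B x n) := ih ▸ hx1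
          have hxa : x ∉ A (treeS A B x n) := fun h =>
            hdisj.ne_of_mem (ih ▸ h) (ih ▸ hxb : x ∈ B (treeE A B d n)) rfl
          rw [treeS, if_neg hxa, treeE, if_neg hdn, ih]
    have hbits : ∀ n, t n x = (if d n then (1:ℝ) else 0) / 2^(n+1) := by
      intro n
      obtain ⟨-, -, hdisj, -⟩ := hAB _ (hE n).1 (hE n).2
      have hx1 := hx (n+1)
      rw [treeE] at hx1
      simp only [ht]
      by_cases hdn : d n
      · rw [if_pos hdn] at hx1 ⊢
        rw [if_pos (by rw [hSE n]; exact hx1)]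
      · rw [if_neg hdn] at hx1 ⊢
        rw [if_neg (by rw [hSE n]; exact fun h => hdisj.ne_of_mem h hx1 rfl)]
    refine ⟨x, ?_⟩
    apply Subtype.ext
    show ∑' n, t n x = y
    rw [← hd]
    congr 1
    ext n
    exact hbits n

/-- Every infinite crowded Tychonoff space admits a continuous surjection onto
either the discrete space `ℕ` or the closed unit interval `[0,1]`. -/
theorem stmt_0 (X : Type*) [TopologicalSpace X] [T35Space X] [Infinite X]
    (crowded : ∀ x : X, ¬ IsOpen ({x} : Set X)) :
    (∃ f : X → ℕ, Continuous f ∧ Function.Surjective f) ∨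
    (∃ g : X → unitInterval, Continuous g ∧ Function.Surjective g) := by
  classical
  by_cases hA : ∃ f : X → ℝ, Continuous f ∧ (interior (Set.range f)).Nonempty
  · right
    obtain ⟨f, hf, ⟨c, hc⟩⟩ := hA
    obtain ⟨ε, hε, hball⟩ := Metric.isOpen_iff.1 isOpen_interior c hc
    set a : ℝ := c - ε/2 with ha
    set b : ℝ := c + ε/2 with hb
    have hab : a < b := by rw [ha, hb]; linarith
    have hIcc : Set.Icc a b ⊆ Set.range f := by
      intro z hz
      apply interior_subset (hball ?_)
      rw [Real.ball_eq_Ioo]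
      obtain ⟨hz1, hz2⟩ := hz
      constructor
      · rw [ha] at hz1; linarith
      · rw [hb] at hz2; linarith
    refine ⟨fun x => Set.projIcc (0:ℝ) 1 zero_le_one ((f x - a)/(b - a)), ?_, ?_⟩
    · exact continuous_projIcc.comp ((hf.sub continuous_const).div_const _)
    · intro t
      have ht := t.2
      rw [Set.mem_Icc] at ht
      set v : ℝ := a + t.1 * (b - a) with hv
      have hvm : v ∈ Set.Icc a b := by
        rw [Set.mem_Icc, hv]
        constructor
        · nlinarith [ht.1, sub_pos.2 hab]
        · nlinarith [ht.2, sub_pos.2 hab]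
      obtain ⟨x, hx⟩ := hIcc hvm
      refine ⟨x, ?_⟩
      have hne : b - a ≠ 0 := ne_of_gt (sub_pos.2 hab)
      have hval : (f x - a)/(b - a) = t.1 := by
        rw [hx, hv]
        field_simp
        ring
      show Set.projIcc (0:ℝ) 1 zero_le_one ((f x - a)/(b - a)) = t
      rw [hval, Set.projIcc_of_mem zero_le_one (Set.mem_Icc.2 ht)]
  · push_neg at hA
    have hB : ∀ f : X → ℝ, Continuous f → interior (Set.range f) = ∅ := hA
    by_cases hP : ∀ C : ℕ → Set X, (∀ n, IsClopen (C n)) → (∀ n, (C n).Nonempty) →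
        Antitone C → (⋂ n, C n).Nonempty
    · right
      have hsplit := aux_split crowded hB
      have hchoice : ∀ C : Set X, ∃ AB : Set X × Set X, IsClopen C → C.Nonempty →
          (IsClopen AB.1 ∧ AB.1.Nonempty) ∧ (IsClopen AB.2 ∧ AB.2.Nonempty) ∧
            Disjoint AB.1 AB.2 ∧ AB.1 ∪ AB.2 = C := by
        intro C
        by_cases h : IsClopen C ∧ C.Nonempty
        · obtain ⟨A, B, props⟩ := hsplit C h.1 h.2
          exact ⟨(A, B), fun _ _ => props⟩
        · exact ⟨(∅, ∅), fun h1 h2 => absurd ⟨h1, h2⟩ h⟩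
      choose AB hABp using hchoice
      exact aux_treeCase (fun C => (AB C).1) (fun C => (AB C).2)
        (fun C h1 h2 => hABp C h1 h2) hP
    · left
      push_neg at hP
      obtain ⟨C, h1, h2, h3, h4⟩ := hP
      exact aux_natCase C h1 h2 h3 h4
end

section
/- A zero-dimensional separable metrizable space that contains a closed copy of ℕ (an infinite closed discrete subset) retracts onto that copy; consequently a noncompact zero-dimensional subset of ℝ maps continuously onto the discrete space ℕ. -/
/-- A space is zero-dimensional if it has a base of clopen sets. -/
def HasClopenBasis (X : Type*) [TopologicalSpace X] : Prop :=
  ∃ B : Set (Set X), TopologicalSpace.IsTopologicalBasis B ∧ ∀ U ∈ B, IsClopen U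

open TopologicalSpace Set Filter Topology Function in
/-- If a sequence in a T1 space has no cluster point, its range is an infinite
closed discrete subset. -/
theorem auxNoCluster {X : Type*} [TopologicalSpace X] [T1Space X] (v : ℕ → X)
    (hv : ∀ x : X, ¬ MapClusterPt x atTop v) :
    (Set.range v).Infinite ∧ IsClosed (Set.range v) ∧ DiscreteTopology (Set.range v) := by
  classical
  have key : ∀ x : X, ∃ U : Set X, IsOpen U ∧ x ∈ U ∧ ∃ N, ∀ n, N ≤ n → v n ∉ U := by
    intro x
    have h := hv x
    rw [mapClusterPt_iff_frequently] at h
    push_neg at h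
    obtain ⟨s, hs, hev⟩ := h
    obtain ⟨U, hUs, hUo, hxU⟩ := mem_nhds_iff.1 hs
    obtain ⟨N, hN⟩ := eventually_atTop.1 hev
    exact ⟨U, hUo, hxU, N, fun n hn hmem => hN n hn (hUs hmem)⟩
  have hfin : ∀ x : X, ∃ U : Set X, IsOpen U ∧ x ∈ U ∧ (U ∩ Set.range v).Finite := by
    intro x
    obtain ⟨U, hUo, hxU, N, hN⟩ := key x
    refine ⟨U, hUo, hxU, ((Set.finite_Iio N).image v).subset ?_⟩
    rintro y ⟨hyU, n, rfl⟩
    refine ⟨n, ?_, rfl⟩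
    by_contra hlt
    exact hN n (le_of_not_gt hlt) hyU
  refine ⟨?_, ?_, ?_⟩
  · intro hFin
    haveI : Finite ↥(Set.range v) := hFin.to_subtype
    obtain ⟨y, hy⟩ := Finite.exists_infinite_fiber
      (fun n => (⟨v n, mem_range_self n⟩ : Set.range v))
    rw [Set.infinite_coe_iff] at hy
    obtain ⟨U, hUo, hxU, N, hN⟩ := key y.val
    obtain ⟨n, hns, hn⟩ := hy.exists_gt N
    have hveq : (⟨v n, Set.mem_range_self n⟩ : Set.range v) = y := hns
    have : v n = y.val := congrArg Subtype.val hveq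
    exact hN n hn.le (this ▸ hxU)
  · rw [← closure_subset_iff_isClosed]
    intro x hx
    obtain ⟨U, hUo, hxU, hUfin⟩ := hfin x
    have h1 : x ∈ closure (U ∩ Set.range v) := hUo.inter_closure ⟨hxU, hx⟩
    rw [hUfin.isClosed.closure_eq] at h1
    exact h1.2
  · rw [discreteTopology_subtype_iff]
    intro x hx
    obtain ⟨U, hUo, hxU, hUfin⟩ := hfin x
    rw [inf_principal_eq_bot]
    apply mem_nhdsWithin.mpr
    refine ⟨U \ ((U ∩ Set.range v) \ {x}), ?_, ⟨hxU, fun h => h.2 rfl⟩, ?_⟩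
    · exact hUo.sdiff (hUfin.subset (Set.diff_subset)).isClosed
    · rintro y ⟨⟨hyU, hyn⟩, hyne⟩ hyr
      exact hyn ⟨⟨hyU, hyr⟩, hyne⟩

open TopologicalSpace Set Filter Topology Function in
/-- Part (1): the retraction theorem. -/
theorem auxRetract (X : Type) [TopologicalSpace X] [SeparableSpace X]
    [MetrizableSpace X] (hB : HasClopenBasis X)
    (D : Set X) (hDinf : D.Infinite) (hDcl : IsClosed D)
    (hdisc : DiscreteTopology D) :
    ∃ r : X → D, Continuous r ∧ ∀ d : D, r d = d := by
  classical
  letI : MetricSpace X := metrizableSpaceMetric X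
  haveI : SecondCountableTopology X := UniformSpace.secondCountable_of_separable X
  obtain ⟨B, hBbasis, hBclopen⟩ := hB
  have key : ∀ x : X, ∃ C : Set X, IsClopen C ∧ x ∈ C ∧ (C ∩ D).Subsingleton := by
    intro x
    by_cases hx : x ∈ D
    · have h1 : IsOpen ({(⟨x, hx⟩ : D)} : Set D) := isOpen_discrete _
      rw [isOpen_induced_iff] at h1
      obtain ⟨U, hU, hUeq⟩ := h1
      have hxU : x ∈ U := by
        have : (⟨x, hx⟩ : D) ∈ Subtype.val ⁻¹' U := by rw [hUeq]; exact rfl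
        exact this
      obtain ⟨C, hCB, hxC, hCU⟩ := hBbasis.exists_subset_of_mem_open hxU hU
      refine ⟨C, hBclopen C hCB, hxC, ?_⟩
      have huniq : ∀ y ∈ C ∩ D, y = x := by
        intro y hy
        have : (⟨y, hy.2⟩ : D) ∈ Subtype.val ⁻¹' U := hCU hy.1
        rw [hUeq] at this
        exact congrArg Subtype.val this
      intro a ha b hb
      rw [huniq a ha, huniq b hb]
    · obtain ⟨C, hCB, hxC, hCU⟩ := hBbasis.exists_subset_of_mem_open
        (show x ∈ Dᶜ from hx) hDcl.isOpen_compl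
      exact ⟨C, hBclopen C hCB, hxC, fun a ha _ _ => absurd ha.2 (hCU ha.1)⟩
  choose C hCclopen hmemC hCsub using key
  obtain ⟨T, hTc, hTU⟩ := isOpen_iUnion_countable C (fun x => (hCclopen x).isOpen)
  have hUuniv : ⋃ x ∈ T, C x = univ := by
    rw [hTU]; exact eq_univ_of_forall fun x => mem_iUnion.2 ⟨x, hmemC x⟩
  obtain ⟨d0, hd0⟩ := hDinf.nonempty
  have hTne : T.Nonempty := by
    rcases T.eq_empty_or_nonempty with h | h
    · exfalso
      rw [h] at hUuniv
      simp only [Set.biUnion_empty] at hUuniv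
      exact absurd (hUuniv ▸ mem_univ d0) (notMem_empty d0)
    · exact h
  obtain ⟨f, hf⟩ := hTc.exists_eq_range hTne
  set W : ℕ → Set X := fun n => C (f n) with hW
  have hWclopen : ∀ n, IsClopen (W n) := fun n => hCclopen (f n)
  have hWsub : ∀ n, ((W n) ∩ D).Subsingleton := fun n => hCsub (f n)
  have hWcover : ∀ x : X, ∃ n, x ∈ W n := by
    intro x
    have : x ∈ ⋃ y ∈ T, C y := hUuniv ▸ mem_univ x
    rw [hf, Set.biUnion_range] at this
    exact mem_iUnion.1 this
  set nn : X → ℕ := fun x => Nat.find (hWcover x) with hnn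
  set g : ℕ → D := fun n =>
    if h : ((W n) ∩ D).Nonempty then ⟨h.choose, h.choose_spec.2⟩ else ⟨d0, hd0⟩ with hg
  refine ⟨fun x => g (nn x), ?_, ?_⟩
  · rw [continuous_iff_continuousAt]
    intro x
    set n := nn x with hn
    have hxn : x ∈ W n := Nat.find_spec (hWcover x)
    set V : Set X := W n ∩ ⋂ j ∈ Finset.range n, (W j)ᶜ with hV
    have hVopen : IsOpen V := by
      apply ((hWclopen n).isOpen).inter
      exact isOpen_biInter_finset fun j _ => (hWclopen j).isClosed.isOpen_compl
    have hxV : x ∈ V := by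
      refine ⟨hxn, ?_⟩
      simp only [Set.mem_iInter, Finset.mem_range, Set.mem_compl_iff]
      intro j hj
      exact Nat.find_min (hWcover x) hj
    have heq : ∀ y ∈ V, nn y = n := by
      intro y hy
      rw [hnn]
      rw [Nat.find_eq_iff]
      refine ⟨hy.1, fun m hm hmem => ?_⟩
      have := hy.2
      simp only [Set.mem_iInter, Finset.mem_range, Set.mem_compl_iff] at this
      exact this m hm hmem
    have hEq : (fun y => g (nn y)) =ᶠ[𝓝 x] fun _ => g n := by
      filter_upwards [hVopen.mem_nhds hxV] with y hy
      rw [heq y hy]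
    exact (continuousAt_congr hEq).2 continuousAt_const
  · intro d
    have hd : (d : X) ∈ W (nn (d : X)) := Nat.find_spec (hWcover (d : X))
    have hne : ((W (nn (d : X))) ∩ D).Nonempty := ⟨d, hd, d.2⟩
    apply Subtype.ext
    simp only [hg, dif_pos hne]
    exact hWsub _ hne.choose_spec ⟨hd, d.2⟩

open TopologicalSpace Set Filter Topology Function in
/-- (1) A zero-dimensional separable metrizable space retracts onto any infinite
countable closed discrete subset (a closed copy of `ℕ`);
(2) consequently, a noncompact zero-dimensional subset of `ℝ` maps continuously
onto the discrete space `ℕ`. -/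
theorem stmt_2 :
    (∀ (X : Type) [TopologicalSpace X] [TopologicalSpace.SeparableSpace X]
      [TopologicalSpace.MetrizableSpace X], HasClopenBasis X →
      ∀ D : Set X, D.Infinite → D.Countable → IsClosed D → DiscreteTopology D →
        ∃ r : X → D, Continuous r ∧ ∀ d : D, r d = d) ∧
    (∀ S : Set ℝ, HasClopenBasis S → ¬ IsCompact S →
      ∃ g : S → ℕ, Continuous g ∧ Function.Surjective g) := by
  constructor
  · intro X _ _ _ hB D hDinf _ hDcl hdisc
    exact auxRetract X hB D hDinf hDcl hdisc
  · intro S hS hnc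
    rw [isCompact_iff_isSeqCompact, IsSeqCompact] at hnc
    push_neg at hnc
    obtain ⟨u, hu, hnot⟩ := hnc
    set v : ℕ → ↥S := fun n => ⟨u n, hu n⟩ with hvdef
    have hv : ∀ x : ↥S, ¬ MapClusterPt x atTop v := by
      intro x hx
      obtain ⟨ψ, hψ, htend⟩ := TopologicalSpace.FirstCountableTopology.tendsto_subseq hx
      refine hnot x.val x.property ψ hψ ?_
      have := (continuous_subtype_val.tendsto x).comp htend
      exact this
    obtain ⟨hinf, hcl, hdisc⟩ := auxNoCluster v hv
    set D : Set ↥S := Set.range v with hD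
    haveI : DiscreteTopology ↥D := hdisc
    haveI : SecondCountableTopology ↥D := inferInstance
    have hcnt : D.Countable := by
      rw [← Set.countable_coe_iff]
      exact (TopologicalSpace.separableSpace_iff_countable).1 inferInstance
    obtain ⟨r, hrc, hrd⟩ := auxRetract ↥S hS D hinf hcl hdisc
    haveI : Countable ↥D := hcnt.to_subtype
    haveI : Infinite ↥D := hinf.to_subtype
    haveI : Denumerable ↥D := (nonempty_denumerable_iff.2 ⟨‹_›, ‹_›⟩).some
    set e : ↥D ≃ ℕ := Denumerable.eqv ↥D
    refine ⟨fun x => e (r x), ?_, ?_⟩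
    · exact (continuous_of_discreteTopology).comp hrc
    · intro n
      obtain ⟨d, hd⟩ := e.surjective n
      exact ⟨d, by show e (r ↑d) = n; rw [hrd d, hd]⟩
end

section
/- Every continuous image of the ordinal space ω₁ (all countable ordinals with the order topology) of countable weight is compact and countable; hence any such infinite image has an isolated point and is not homogeneous. -/
/-- The space `ω₁` of all countable ordinals, with the (order) topology inherited
from the ordinals. -/
def Omega1 : Type 1 := {o : Ordinal.{0} // o < (Cardinal.aleph 1).ord}

instance : TopologicalSpace Omega1 := instTopologicalSpaceSubtype

/-- The weight of a topological space: the minimal cardinality of a base. -/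
noncomputable def weight (Y : Type*) [TopologicalSpace Y] : Cardinal :=
  sInf {κ | ∃ B : Set (Set Y), TopologicalSpace.IsTopologicalBasis B ∧ Cardinal.mk B = κ}

/-- A space is homogeneous if its homeomorphism group acts transitively. -/
def IsHomogeneous (Y : Type*) [TopologicalSpace Y] : Prop :=
  ∀ x y : Y, ∃ h : Y ≃ₜ Y, h x = y

noncomputable instance : LinearOrder Omega1 :=
  inferInstanceAs (LinearOrder {o : Ordinal.{0} // o < (Cardinal.aleph 1).ord})

lemma Omega1.val_embedding :
    Topology.IsEmbedding (fun x : Omega1 => (x.1 : Ordinal.{0})) :=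
  Topology.IsEmbedding.subtypeVal

lemma Omega1.iSup_lt (β : ℕ → Omega1) : (⨆ k, (β k).1) < (Cardinal.aleph 1).ord := by
  apply Ordinal.iSup_lt_ord
  · rw [Cardinal.isRegular_aleph_one.cof_eq, Cardinal.mk_nat]
    exact Cardinal.aleph0_lt_aleph_one
  · exact fun k => (β k).2

lemma Omega1.exists_sup (β : ℕ → Omega1) : ∃ s : Omega1, ∀ k, β k ≤ s :=
  ⟨⟨⨆ k, (β k).1, Omega1.iSup_lt β⟩,
    fun k => Subtype.coe_le_coe.mp (le_ciSup (Ordinal.bddAbove_range _) k)⟩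

lemma Omega1.zero_lt : (0 : Ordinal.{0}) < (Cardinal.aleph 1).ord := by
  rw [Cardinal.lt_ord, Ordinal.card_zero]
  exact Cardinal.aleph0_pos.trans Cardinal.aleph0_lt_aleph_one

/-- A continuous map from `ω₁` to a metric space is eventually constant. -/
lemma Omega1.eventually_const {Y : Type*} [MetricSpace Y] (g : Omega1 → Y)
    (hg : Continuous g) : ∃ s : Omega1, ∀ γ, s ≤ γ → g γ = g s := by
  have main : ∀ ε : ℝ, 0 < ε → ∃ b : Omega1, ∀ γ, b ≤ γ → dist (g γ) (g b) < ε := by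
    intro ε hε
    by_contra hcon
    push_neg at hcon
    choose F hF1 hF2 using hcon
    let β : ℕ → Omega1 := fun k => Nat.rec ⟨0, Omega1.zero_lt⟩ (fun _ b => F b) k
    have hstep : ∀ k, β (k + 1) = F (β k) := fun _ => rfl
    have hmono : Monotone β := monotone_nat_of_le_succ fun k => hF1 (β k)
    have hbdd : BddAbove (Set.range fun k => (β k).1) := Ordinal.bddAbove_range _
    set s : Omega1 := ⟨⨆ k, (β k).1, Omega1.iSup_lt β⟩ with hs
    have hmono' : Monotone fun k => (β k).1 := fun a b h => hmono h
    have htend : Filter.Tendsto (fun k => (β k).1) Filter.atTop (nhds (⨆ k, (β k).1)) :=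
      tendsto_atTop_ciSup hmono' hbdd
    have htend2 : Filter.Tendsto β Filter.atTop (nhds s) := by
      rw [Omega1.val_embedding.isInducing.tendsto_nhds_iff]
      exact htend
    have hgt : Filter.Tendsto (fun k => g (β k)) Filter.atTop (nhds (g s)) :=
      (hg.tendsto s).comp htend2
    obtain ⟨N, hN⟩ := Metric.tendsto_atTop.mp hgt (ε / 2) (half_pos hε)
    have h1 : dist (g (β (N + 1))) (g s) < ε / 2 := hN (N + 1) (Nat.le_succ N)
    have h2 : dist (g (β N)) (g s) < ε / 2 := hN N le_rfl
    have h3 : ε ≤ dist (g (β (N + 1))) (g (β N)) := by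
      rw [hstep N]; exact hF2 (β N)
    have h4 : dist (g (β (N + 1))) (g (β N)) ≤
        dist (g (β (N + 1))) (g s) + dist (g (β N)) (g s) := dist_triangle_right _ _ _
    linarith
  choose b hb using fun n : ℕ => main (1 / (n + 1)) (by positivity)
  obtain ⟨s, hsb⟩ := Omega1.exists_sup b
  refine ⟨s, fun γ hγ => ?_⟩
  have key : ∀ n : ℕ, dist (g γ) (g s) < 2 / (n + 1) := by
    intro n
    have hγb := hb n γ ((hsb n).trans hγ)
    have hsb' := hb n s (hsb n)
    calc dist (g γ) (g s) ≤ dist (g γ) (g (b n)) + dist (g s) (g (b n)) :=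
          dist_triangle_right _ _ _
      _ < 1 / (n + 1) + 1 / (n + 1) := add_lt_add hγb hsb'
      _ = 2 / (n + 1) := by ring
  have hle : dist (g γ) (g s) ≤ 0 := by
    have htend0 : Filter.Tendsto (fun n : ℕ => 2 / ((n : ℝ) + 1)) Filter.atTop (nhds 0) := by
      have := (tendsto_one_div_add_atTop_nhds_zero_nat (𝕜 := ℝ)).const_mul 2
      simpa [div_eq_mul_inv, mul_comm] using this
    exact ge_of_tendsto' htend0 fun n => (key n).le
  exact dist_le_zero.mp hle

/-- Every continuous Tychonoff image of `ω₁` of countable weight is compact and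
countable; hence if infinite it has an isolated point and is not homogeneous. -/
theorem stmt_8 (Y : Type*) [TopologicalSpace Y] [T35Space Y]
    (g : Omega1 → Y) (hg : Continuous g) (hsurj : Function.Surjective g)
    (hw : weight Y ≤ Cardinal.aleph0) :
    CompactSpace Y ∧ Countable Y ∧
      (Infinite Y → (∃ y : Y, IsOpen ({y} : Set Y)) ∧ ¬ IsHomogeneous Y) := by
  classical
  -- `Y` is second countable
  have hne : {κ | ∃ B : Set (Set Y), TopologicalSpace.IsTopologicalBasis B ∧
      Cardinal.mk B = κ}.Nonempty :=
    ⟨_, {s : Set Y | IsOpen s}, TopologicalSpace.isTopologicalBasis_opens, rfl⟩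
  have hmem : weight Y ∈ {κ | ∃ B : Set (Set Y), TopologicalSpace.IsTopologicalBasis B ∧
      Cardinal.mk B = κ} := csInf_mem hne
  obtain ⟨B, hB, hBcard⟩ := hmem
  have hBc : B.Countable := by
    rw [← Cardinal.le_aleph0_iff_set_countable, hBcard]; exact hw
  haveI : SecondCountableTopology Y := hB.secondCountableTopology hBc
  haveI : TopologicalSpace.MetrizableSpace Y := inferInstance
  -- `g` is eventually constant
  obtain ⟨s, hsconst⟩ : ∃ s : Omega1, ∀ γ, s ≤ γ → g γ = g s := by
    letI : MetricSpace Y := TopologicalSpace.metrizableSpaceMetric Y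
    exact Omega1.eventually_const g hg
  -- the image of `Set.Iic s` is everything
  have huniv : (Set.univ : Set Y) = g '' Set.Iic s := by
    ext y
    simp only [Set.mem_univ, true_iff]
    obtain ⟨x, rfl⟩ := hsurj y
    rcases le_total x s with h | h
    · exact ⟨x, h, rfl⟩
    · exact ⟨s, Set.self_mem_Iic, (hsconst x h).symm⟩
  -- `Set.Iic s` is compact
  have himage : (fun x : Omega1 => (x.1 : Ordinal.{0})) '' Set.Iic s = Set.Iic s.1 := by
    ext o
    constructor
    · rintro ⟨x, hx, rfl⟩; exact hx
    · intro ho; exact ⟨⟨o, lt_of_le_of_lt ho s.2⟩, ho, rfl⟩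
  have hIic : IsCompact (Set.Iic s) := by
    rw [Omega1.val_embedding.isCompact_iff, himage, ← Set.Icc_bot]
    exact isCompact_Icc
  have hcY : CompactSpace Y := by
    rw [← isCompact_univ_iff, huniv]
    exact hIic.image hg
  -- `Set.Iic s` is countable
  have hIioc : (Set.Iic s.1 : Set Ordinal.{0}).Countable := by
    rw [← Order.Iio_succ, ← Cardinal.le_aleph0_iff_set_countable,
      Ordinal.mk_Iio_ordinal, ← Cardinal.lift_aleph0.{1, 0}, Cardinal.lift_le]
    have hlt : Order.succ s.1 < (Cardinal.aleph 1).ord :=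
      (Cardinal.isSuccLimit_ord Cardinal.aleph0_lt_aleph_one.le).succ_lt s.2
    have h2 := Cardinal.lt_ord.mp hlt
    by_contra hcon
    push_neg at hcon
    exact absurd h2 (not_lt.mpr ((Cardinal.succ_aleph0.symm.le).trans
      (Order.succ_le_of_lt hcon)))
  have hIicO : (Set.Iic s : Set Omega1).Countable := by
    have h := hIioc.preimage (Subtype.val_injective
      (p := fun o : Ordinal.{0} => o < (Cardinal.aleph 1).ord))
    exact h.mono fun x hx => hx
  haveI hYc : Countable Y := by
    rw [← Set.countable_univ_iff]
    rw [huniv]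
    exact hIicO.image g
  refine ⟨hcY, hYc, fun hinf => ?_⟩
  haveI := hinf
  haveI := hcY
  haveI : Nonempty Y := inferInstance
  haveI : BaireSpace Y := BaireSpace.of_t2Space_locallyCompactSpace
  -- existence of an isolated point, by the Baire category theorem
  have hiso : ∃ y : Y, IsOpen ({y} : Set Y) := by
    obtain ⟨y, hy⟩ := nonempty_interior_of_iUnion_of_closed
      (f := fun y : Y => ({y} : Set Y)) (fun y => isClosed_singleton) (by ext x; simp)
    refine ⟨y, ?_⟩
    have h1 : interior ({y} : Set Y) = {y} := by
      refine Set.Subset.antisymm interior_subset ?_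
      obtain ⟨z, hz⟩ := hy
      have hzy : z = y := Set.mem_singleton_iff.mp (interior_subset hz)
      subst hzy
      rw [Set.singleton_subset_iff]
      exact hz
    rw [← h1]
    exact isOpen_interior
  -- existence of a non-isolated point, by compactness and infiniteness
  have hnon : ∃ z : Y, ¬ IsOpen ({z} : Set Y) := by
    by_contra hno
    push_neg at hno
    haveI : DiscreteTopology Y := discreteTopology_iff_isOpen_singleton.mpr hno
    exact (not_infinite_iff_finite.mpr finite_of_compact_of_discrete) hinf
  refine ⟨hiso, fun hhom => ?_⟩
  obtain ⟨y, hy⟩ := hiso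
  obtain ⟨z, hz⟩ := hnon
  obtain ⟨h, hh⟩ := hhom y z
  apply hz
  have himg : h '' {y} = {z} := by rw [Set.image_singleton, hh]
  rw [← himg]
  exact h.isOpenMap _ hy
end

section
/- Let 𝒜 be an almost disjoint family on ω and let X be the space obtained from the Ψ-space Ψ(𝒜) = ω ∪ 𝒜 by replacing each point n ∈ ω with a copy {n} × K of the Cantor set K = {0,1}^ℕ. Then X is zero-dimensional, locally compact, and homogeneous. -/
open Set

/-- An almost disjoint family on `ω`: an infinite family of infinite subsets of `ℕ`
with pairwise finite intersections. -/
def AlmostDisjointFamily (𝒜 : Set (Set ℕ)) : Prop :=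
  𝒜.Infinite ∧ (∀ A ∈ 𝒜, A.Infinite) ∧
    ∀ A ∈ 𝒜, ∀ B ∈ 𝒜, A ≠ B → (A ∩ B).Finite

/-- The Cantor set `{0,1}^ℕ`. -/
abbrev CantorK : Type := ℕ → Bool

/-- The underlying set of the Ψ-space `Ψ(𝒜) = ω ∪ 𝒜`. -/
def PsiSpace (𝒜 : Set (Set ℕ)) : Type := ℕ ⊕ ↥𝒜

/-- The Ψ-space topology: points of `ω` are isolated and the sets
`{A} ∪ {m ∈ A : m ≥ n}` form a neighborhood base at `A ∈ 𝒜`. -/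
instance PsiSpace.topology (𝒜 : Set (Set ℕ)) : TopologicalSpace (PsiSpace 𝒜) :=
  TopologicalSpace.generateFrom
    ({s | ∃ n : ℕ, s = {Sum.inl n}} ∪
     {s | ∃ (A : ↥𝒜) (n : ℕ),
        s = insert (Sum.inr A) (Sum.inl '' {m | m ∈ (A : Set ℕ) ∧ n ≤ m})})

/-- The underlying set of the space `X` obtained from `Ψ(𝒜)` by replacing each
point `n ∈ ω` by a copy `{n} × K` of the Cantor set. -/
def PsiX (𝒜 : Set (Set ℕ)) : Type := (ℕ × CantorK) ⊕ ↥𝒜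

/-- The topology of `X`: basic open sets are the sets `{n} × C` with `C` open in the
Cantor set, and the sets `U_n(A) = {A} ∪ ⋃ {{m} × K : m ∈ A, m ≥ n}`. -/
instance PsiX.topology (𝒜 : Set (Set ℕ)) : TopologicalSpace (PsiX 𝒜) :=
  TopologicalSpace.generateFrom
    ({s | ∃ (n : ℕ) (C : Set CantorK), IsOpen C ∧
        s = Sum.inl '' ({n} ×ˢ C)} ∪
     {s | ∃ (A : ↥𝒜) (n : ℕ),
        s = insert (Sum.inr A)
          (Sum.inl '' {p : ℕ × CantorK | p.1 ∈ (A : Set ℕ) ∧ n ≤ p.1})})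

/-- The collapsing map `f : X → Ψ(𝒜)` sending each `{n} × K` to `n` and fixing `𝒜`. -/
def psiCollapse (𝒜 : Set (Set ℕ)) : PsiX 𝒜 → PsiSpace 𝒜 :=
  Sum.map Prod.fst id

namespace PsiXProof

open TopologicalSpace

variable {𝒜 : Set (Set ℕ)}

/-- The generating family. -/
def gens (𝒜 : Set (Set ℕ)) : Set (Set (PsiX 𝒜)) :=
  ({s | ∃ (n : ℕ) (C : Set CantorK), IsOpen C ∧
      s = Sum.inl '' ({n} ×ˢ C)} ∪
   {s | ∃ (A : ↥𝒜) (n : ℕ),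
      s = insert (Sum.inr A)
        (Sum.inl '' {p : ℕ × CantorK | p.1 ∈ (A : Set ℕ) ∧ n ≤ p.1})})

lemma isOpen_iff_gen {U : Set (PsiX 𝒜)} :
    IsOpen U ↔ TopologicalSpace.GenerateOpen (gens 𝒜) U := Iff.rfl

def col (n : ℕ) (C : Set CantorK) : Set (PsiX 𝒜) := Sum.inl '' ({n} ×ˢ C)

def UU (A : ↥𝒜) (j : ℕ) : Set (PsiX 𝒜) :=
  insert (Sum.inr A) (Sum.inl '' {p : ℕ × CantorK | p.1 ∈ (A : Set ℕ) ∧ j ≤ p.1})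

lemma mem_col {m n : ℕ} {t : CantorK} {C : Set CantorK} :
    (Sum.inl (m, t) : PsiX 𝒜) ∈ col n C ↔ m = n ∧ t ∈ C := by
  simp only [col, Set.mem_image, Set.mem_prod, Set.mem_singleton_iff]
  constructor
  · rintro ⟨⟨a, b⟩, ⟨rfl, hb⟩, heq⟩
    obtain ⟨rfl, rfl⟩ : a = m ∧ b = t := by
      have := Sum.inl.inj heq; exact ⟨congrArg Prod.fst this, congrArg Prod.snd this⟩
    exact ⟨rfl, hb⟩
  · rintro ⟨rfl, ht⟩
    exact ⟨(m, t), ⟨rfl, ht⟩, rfl⟩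

lemma inr_not_mem_col {B : ↥𝒜} {n : ℕ} {C : Set CantorK} :
    (Sum.inr B : PsiX 𝒜) ∉ col n C := by
  show ¬ (Sum.inr B : ℕ × CantorK ⊕ ↥𝒜) ∈ (Sum.inl '' ({n} ×ˢ C) : Set (ℕ × CantorK ⊕ ↥𝒜))
  simp [col]

lemma mem_UU_inl {m : ℕ} {t : CantorK} {A : ↥𝒜} {j : ℕ} :
    (Sum.inl (m, t) : PsiX 𝒜) ∈ UU A j ↔ m ∈ (A : Set ℕ) ∧ j ≤ m := by
  show (Sum.inl (m, t) : ℕ × CantorK ⊕ ↥𝒜) ∈ (insert (Sum.inr A) (Sum.inl '' {p : ℕ × CantorK | p.1 ∈ (A : Set ℕ) ∧ j ≤ p.1}) : Set (ℕ × CantorK ⊕ ↥𝒜)) ↔ _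
  simp [UU]

lemma mem_UU_inr {B A : ↥𝒜} {j : ℕ} :
    (Sum.inr B : PsiX 𝒜) ∈ UU A j ↔ B = A := by
  show (Sum.inr B : ℕ × CantorK ⊕ ↥𝒜) ∈ (insert (Sum.inr A) (Sum.inl '' {p : ℕ × CantorK | p.1 ∈ (A : Set ℕ) ∧ j ≤ p.1}) : Set (ℕ × CantorK ⊕ ↥𝒜)) ↔ _
  simp [UU]

lemma inr_mem_UU {A : ↥𝒜} {j : ℕ} : (Sum.inr A : PsiX 𝒜) ∈ UU A j := by
  show (Sum.inr A : ℕ × CantorK ⊕ ↥𝒜) ∈ (insert (Sum.inr A) (Sum.inl '' {p : ℕ × CantorK | p.1 ∈ (A : Set ℕ) ∧ j ≤ p.1}) : Set (ℕ × CantorK ⊕ ↥𝒜))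
  simp [UU]

lemma isOpen_col {n : ℕ} {C : Set CantorK} (hC : IsOpen C) : IsOpen (col n C : Set (PsiX 𝒜)) :=
  isOpen_iff_gen.2 (GenerateOpen.basic _ (Or.inl ⟨n, C, hC, rfl⟩))

lemma isOpen_UU (A : ↥𝒜) (j : ℕ) : IsOpen (UU A j) :=
  isOpen_iff_gen.2 (GenerateOpen.basic _ (Or.inr ⟨A, j, rfl⟩))

lemma UU_mono {A : ↥𝒜} {j j' : ℕ} (h : j ≤ j') : (UU A j' : Set (PsiX 𝒜)) ⊆ UU A j := by
  rintro x hx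
  rcases x with ⟨m, t⟩ | B
  · erw [mem_UU_inl] at hx ⊢; exact ⟨hx.1, h.trans hx.2⟩
  · erw [mem_UU_inr] at hx ⊢; exact hx

lemma col_mono {n : ℕ} {C C' : Set CantorK} (h : C ⊆ C') :
    (col n C : Set (PsiX 𝒜)) ⊆ col n C' := by
  rintro x hx
  rcases x with ⟨m, t⟩ | B
  · erw [mem_col] at hx ⊢; exact ⟨hx.1, h hx.2⟩
  · exact absurd hx inr_not_mem_col

lemma open_of_pointwise {P : Set (PsiX 𝒜)}
    (h1 : ∀ m t, Sum.inl (m, t) ∈ P → ∃ C, IsOpen C ∧ t ∈ C ∧ col m C ⊆ P)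
    (h2 : ∀ B, Sum.inr B ∈ P → ∃ j, UU B j ⊆ P) : IsOpen P := by
  rw [isOpen_iff_forall_mem_open]
  rintro (⟨m, t⟩ | B) hx
  · obtain ⟨C, hC, htC, hsub⟩ := h1 m t hx
    exact ⟨col m C, hsub, isOpen_col hC, mem_col.2 ⟨rfl, htC⟩⟩
  · obtain ⟨j, hsub⟩ := h2 B hx
    exact ⟨UU B j, hsub, isOpen_UU B j, inr_mem_UU⟩

/-- Cylinders in Cantor space. -/
def cyl (t : CantorK) (a : ℕ) : Set CantorK := {s | ∀ i < a, s i = t i}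

lemma mem_cyl_self {t : CantorK} {a : ℕ} : t ∈ cyl t a := fun _ _ => rfl

lemma isClopen_cyl (t : CantorK) (a : ℕ) : IsClopen (cyl t a) := by
  induction a with
  | zero => simpa [cyl] using isClopen_univ
  | succ a ih =>
    have : cyl t (a + 1) = cyl t a ∩ {s | s a = t a} := by
      ext s
      constructor
      · intro h
        exact ⟨fun i hi => h i (by omega), h a (by omega)⟩
      · rintro ⟨h1, h2⟩ i hi
        rcases Nat.lt_succ_iff_lt_or_eq.1 hi with h | h
        · exact h1 i h
        · subst h; exact h2
    rw [this]
    have hcl : IsClopen {s : CantorK | s a = t a} := by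
      have : {s : CantorK | s a = t a} = (fun s : CantorK => s a) ⁻¹' {t a} := rfl
      rw [this]
      exact ⟨(isClosed_discrete _).preimage (continuous_apply a),
        (isOpen_discrete _).preimage (continuous_apply a)⟩
    exact ih.inter hcl

lemma exists_cyl_subset {C : Set CantorK} (hC : IsOpen C) {t : CantorK} (ht : t ∈ C) :
    ∃ a, cyl t a ⊆ C := by
  obtain ⟨I, u, hu, hsub⟩ := isOpen_pi_iff.1 hC t ht
  rcases I.eq_empty_or_nonempty with h | h
  · exact ⟨0, fun s _ => hsub (by simp [h])⟩
  · refine ⟨(I.max' h) + 1, fun s hs => hsub ?_⟩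
    intro i hi
    have : s i = t i := hs i (Nat.lt_succ_of_le (I.le_max' i hi))
    rw [this]
    exact (hu i hi).2

/-- Every open set contains a basic neighborhood around each of its points. -/
lemma exists_basic {U : Set (PsiX 𝒜)} (h : IsOpen U) :
    (∀ m t, Sum.inl (m, t) ∈ U → ∃ C, IsOpen C ∧ t ∈ C ∧ col m C ⊆ U) ∧
    (∀ B, Sum.inr B ∈ U → ∃ j, UU B j ⊆ U) := by
  rw [isOpen_iff_gen] at h
  induction h with
  | basic s hs =>
    rcases hs with ⟨n, C, hC, rfl⟩ | ⟨A, j, rfl⟩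
    · constructor
      · intro m t hmt
        erw [show Sum.inl '' ({n} ×ˢ C) = (col n C : Set (PsiX 𝒜)) from rfl, mem_col] at hmt
        obtain ⟨rfl, htC⟩ := hmt
        exact ⟨C, hC, htC, subset_rfl⟩
      · intro B hB
        exact absurd hB inr_not_mem_col
    · constructor
      · intro m t hmt
        erw [show insert (Sum.inr A) (Sum.inl '' {p : ℕ × CantorK | p.1 ∈ (A : Set ℕ) ∧ j ≤ p.1})
            = (UU A j : Set (PsiX 𝒜)) from rfl, mem_UU_inl] at hmt
        refine ⟨Set.univ, isOpen_univ, trivial, ?_⟩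
        rintro x hx
        rcases x with ⟨m', t'⟩ | B
        · erw [mem_col] at hx
          exact Set.mem_insert_of_mem _ ⟨(m', t'), by exact ⟨hx.1 ▸ hmt.1, hx.1 ▸ hmt.2⟩, rfl⟩
        · exact absurd hx inr_not_mem_col
      · intro B hB
        have : B = A := by
          erw [show insert (Sum.inr A) (Sum.inl '' {p : ℕ × CantorK | p.1 ∈ (A : Set ℕ) ∧ j ≤ p.1})
              = (UU A j : Set (PsiX 𝒜)) from rfl, mem_UU_inr] at hB
          exact hB
        subst this
        exact ⟨j, subset_rfl⟩
  | univ => exact ⟨fun m t _ => ⟨Set.univ, isOpen_univ, trivial, fun _ _ => trivial⟩,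
      fun B _ => ⟨0, fun _ _ => trivial⟩⟩
  | inter s t _ _ ihs iht =>
    constructor
    · intro m u hmu
      obtain ⟨C1, hC1, h1, hs1⟩ := ihs.1 m u hmu.1
      obtain ⟨C2, hC2, h2, hs2⟩ := iht.1 m u hmu.2
      exact ⟨C1 ∩ C2, hC1.inter hC2, ⟨h1, h2⟩,
        fun x hx => ⟨hs1 (col_mono Set.inter_subset_left hx), hs2 (col_mono Set.inter_subset_right hx)⟩⟩
    · intro B hB
      obtain ⟨j1, hs1⟩ := ihs.2 B hB.1
      obtain ⟨j2, hs2⟩ := iht.2 B hB.2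
      exact ⟨max j1 j2, fun x hx => ⟨hs1 (UU_mono (le_max_left _ _) hx),
        hs2 (UU_mono (le_max_right _ _) hx)⟩⟩
  | sUnion S _ ih =>
    constructor
    · intro m t hmt
      obtain ⟨s, hsS, hms⟩ := hmt
      obtain ⟨C, hC, htC, hsub⟩ := (ih s hsS).1 m t hms
      exact ⟨C, hC, htC, fun x hx => ⟨s, hsS, hsub hx⟩⟩
    · intro B hB
      obtain ⟨s, hsS, hms⟩ := hB
      obtain ⟨j, hsub⟩ := (ih s hsS).2 B hms
      exact ⟨j, fun x hx => ⟨s, hsS, hsub hx⟩⟩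

/-! ### The clopen basis -/

def basis (𝒜 : Set (Set ℕ)) : Set (Set (PsiX 𝒜)) :=
  {s | ∃ (n : ℕ) (C : Set CantorK), IsClopen C ∧ s = col n C} ∪
  {s | ∃ (A : ↥𝒜) (j : ℕ), s = UU A j}

lemma isClosed_col {n : ℕ} {C : Set CantorK} (hC : IsClosed C) :
    IsClosed (col n C : Set (PsiX 𝒜)) := by
  rw [← isOpen_compl_iff]
  apply open_of_pointwise
  · intro m t hmt
    by_cases hm : m = n
    · subst hm
      refine ⟨Cᶜ, hC.isOpen_compl, ?_, ?_⟩
      · intro hc; exact hmt (mem_col.2 ⟨rfl, hc⟩)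
      · rintro (⟨m', t'⟩ | B) hx
        · erw [mem_col] at hx
          intro hmem
          erw [mem_col] at hmem
          exact hx.2 hmem.2
        · exact fun h => inr_not_mem_col h
    · refine ⟨Set.univ, isOpen_univ, trivial, ?_⟩
      rintro (⟨m', t'⟩ | B) hx
      · erw [mem_col] at hx
        intro hmem
        erw [mem_col] at hmem
        exact hm (hx.1 ▸ hmem.1)
      · exact fun h => inr_not_mem_col h
  · intro B _
    refine ⟨n + 1, ?_⟩
    rintro (⟨m', t'⟩ | B') hx
    · erw [mem_UU_inl] at hx
      intro hmem
      erw [mem_col] at hmem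
      omega
    · exact fun h => inr_not_mem_col h

lemma isClosed_UU (h𝒜 : AlmostDisjointFamily 𝒜) (A : ↥𝒜) (j : ℕ) :
    IsClosed (UU A j : Set (PsiX 𝒜)) := by
  rw [← isOpen_compl_iff]
  apply open_of_pointwise
  · intro m t hmt
    refine ⟨Set.univ, isOpen_univ, trivial, ?_⟩
    rintro (⟨m', t'⟩ | B) hx
    · erw [mem_col] at hx
      intro hmem
      erw [mem_UU_inl] at hmem
      exact hmt (mem_UU_inl.2 (hx.1 ▸ hmem))
    · exact absurd hx inr_not_mem_col
  · intro B hB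
    have hBA : B ≠ A := fun h => hB (h ▸ inr_mem_UU)
    have hfin : ((A : Set ℕ) ∩ (B : Set ℕ)).Finite :=
      h𝒜.2.2 A A.2 B B.2 (fun h => hBA (Subtype.ext h.symm))
    obtain ⟨b, hb⟩ := hfin.bddAbove
    refine ⟨max j (b + 1), ?_⟩
    rintro (⟨m', t'⟩ | B') hx
    · erw [mem_UU_inl] at hx
      intro hmem
      erw [mem_UU_inl] at hmem
      have : m' ∈ (A : Set ℕ) ∩ (B : Set ℕ) := ⟨hmem.1, hx.1⟩
      have := hb this
      simp only [max_le_iff] at hx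
      omega
    · erw [mem_UU_inr] at hx
      subst hx
      intro hmem
      erw [mem_UU_inr] at hmem
      exact hBA hmem

lemma isClopen_basis (h𝒜 : AlmostDisjointFamily 𝒜) :
    ∀ U ∈ basis 𝒜, IsClopen U := by
  rintro U (⟨n, C, hC, rfl⟩ | ⟨A, j, rfl⟩)
  · exact ⟨isClosed_col hC.1, isOpen_col hC.2⟩
  · exact ⟨isClosed_UU h𝒜 A j, isOpen_UU A j⟩

lemma isBasis (𝒜 : Set (Set ℕ)) : IsTopologicalBasis (basis 𝒜) := by
  apply isTopologicalBasis_of_isOpen_of_nhds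
  · rintro u (⟨n, C, hC, rfl⟩ | ⟨A, j, rfl⟩)
    · exact isOpen_col hC.2
    · exact isOpen_UU A j
  · intro x U hxU hU
    obtain ⟨h1, h2⟩ := exists_basic hU
    rcases x with ⟨m, t⟩ | B
    · obtain ⟨C, hC, htC, hsub⟩ := h1 m t hxU
      obtain ⟨a, ha⟩ := exists_cyl_subset hC htC
      exact ⟨col m (cyl t a), Or.inl ⟨m, cyl t a, isClopen_cyl t a, rfl⟩,
        mem_col.2 ⟨rfl, mem_cyl_self⟩, (col_mono ha).trans hsub⟩
    · obtain ⟨j, hsub⟩ := h2 B hxU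
      exact ⟨UU B j, Or.inr ⟨B, j, rfl⟩, inr_mem_UU, hsub⟩

/-! ### Local compactness -/

lemma continuous_inlK (n : ℕ) :
    @Continuous CantorK (PsiX 𝒜) _ (PsiX.topology 𝒜)
      (fun t : CantorK => (Sum.inl (n, t) : PsiX 𝒜)) := by
  erw [show (PsiX.topology 𝒜) = TopologicalSpace.generateFrom (gens 𝒜) from rfl,
    continuous_generateFrom_iff]
  rintro s (⟨n', C, hC, rfl⟩ | ⟨A, j, rfl⟩)
  · by_cases h : n = n'
    · subst h
      have : (fun t : CantorK => (Sum.inl (n, t) : PsiX 𝒜)) ⁻¹' (col n C) = C := by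
        ext t
        erw [Set.mem_preimage, mem_col]
        simp
      erw [show Sum.inl '' ({n} ×ˢ C) = (col n C : Set (PsiX 𝒜)) from rfl, this]
      exact hC
    · have : (fun t : CantorK => (Sum.inl (n, t) : PsiX 𝒜)) ⁻¹' (col n' C) = ∅ := by
        ext t
        simp only [Set.mem_preimage, Set.mem_empty_iff_false, iff_false]
        exact fun hh => h (mem_col.1 hh).1
      erw [show Sum.inl '' ({n'} ×ˢ C) = (col n' C : Set (PsiX 𝒜)) from rfl, this]
      exact isOpen_empty
  · rw [show insert (Sum.inr A) (Sum.inl '' {p : ℕ × CantorK | p.1 ∈ (A : Set ℕ) ∧ j ≤ p.1})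
        = (UU A j : Set (PsiX 𝒜)) from rfl]
    by_cases h : n ∈ (A : Set ℕ) ∧ j ≤ n
    · have : (fun t : CantorK => (Sum.inl (n, t) : PsiX 𝒜)) ⁻¹' (UU A j) = Set.univ := by
        ext t
        simp only [Set.mem_preimage, Set.mem_univ, iff_true]
        exact mem_UU_inl.2 ⟨h.1, h.2⟩
      erw [this]; exact isOpen_univ
    · have : (fun t : CantorK => (Sum.inl (n, t) : PsiX 𝒜)) ⁻¹' (UU A j) = ∅ := by
        ext t
        simp only [Set.mem_preimage, Set.mem_empty_iff_false, iff_false]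
        exact fun hh => h (mem_UU_inl.1 hh)
      erw [this]; exact isOpen_empty

lemma isCompact_col {n : ℕ} {C : Set CantorK} (hC : IsClosed C) :
    IsCompact (col n C : Set (PsiX 𝒜)) := by
  have : (col n C : Set (PsiX 𝒜)) = (fun t : CantorK => (Sum.inl (n, t) : PsiX 𝒜)) '' C := by
    ext x
    rcases x with ⟨m, t⟩ | B
    · erw [mem_col]
      constructor
      · rintro ⟨rfl, ht⟩; exact ⟨t, ht, rfl⟩
      · rintro ⟨t', ht', heq⟩
        obtain ⟨rfl, rfl⟩ : n = m ∧ t' = t := by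
          have := Sum.inl.inj heq
          exact ⟨congrArg Prod.fst this, congrArg Prod.snd this⟩
        exact ⟨rfl, ht'⟩
    · erw [Set.mem_image]
      constructor
      · intro h; exact absurd h inr_not_mem_col
      · rintro ⟨t', _, heq⟩; exact absurd heq (by simp)
  rw [this]
  exact (hC.isCompact).image (continuous_inlK n)

lemma isCompact_UU (A : ↥𝒜) (j : ℕ) : IsCompact (UU A j : Set (PsiX 𝒜)) := by
  rw [isCompact_iff_finite_subcover]
  intro ι V hV hcov
  classical
  obtain ⟨i₀, hi₀⟩ : ∃ i, (Sum.inr A : PsiX 𝒜) ∈ V i := by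
    exact Set.mem_iUnion.1 (hcov inr_mem_UU)
  obtain ⟨j', hj'⟩ := (exists_basic (hV i₀)).2 A hi₀
  set M : Set ℕ := {m | m ∈ (A : Set ℕ) ∧ j ≤ m ∧ m < j'} with hMdef
  have hM : M.Finite := (Set.finite_Iio j').subset (fun m hm => hm.2.2)
  set L : Set (PsiX 𝒜) := ⋃ m ∈ M, col m Set.univ with hLdef
  have hLsub : L ⊆ ⋃ i, V i := by
    intro x hx
    apply hcov
    simp only [hLdef, Set.mem_iUnion, exists_prop] at hx
    obtain ⟨m, hm, hxm⟩ := hx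
    rcases x with ⟨m', t'⟩ | B
    · erw [mem_col] at hxm
      erw [mem_UU_inl]
      exact ⟨hxm.1 ▸ hm.1, hxm.1 ▸ hm.2.1⟩
    · exact absurd hxm inr_not_mem_col
  have hLcomp : IsCompact L :=
    hM.isCompact_biUnion (fun m _ => isCompact_col isClosed_univ)
  obtain ⟨s, hs⟩ := hLcomp.elim_finite_subcover V hV hLsub
  refine ⟨insert i₀ s, ?_⟩
  rintro (⟨m, t⟩ | B) hx
  · erw [mem_UU_inl] at hx
    by_cases hm : m < j'
    · have hxL : (Sum.inl (m, t) : PsiX 𝒜) ∈ L := by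
        refine Set.mem_iUnion₂.2 ?_
        exact ⟨m, ⟨hx.1, hx.2, hm⟩, mem_col.2 ⟨rfl, trivial⟩⟩
      obtain ⟨i, hi, hxi⟩ := Set.mem_iUnion₂.1 (hs hxL)
      refine Set.mem_iUnion₂.2 ?_
      exact ⟨i, Finset.mem_insert_of_mem hi, hxi⟩
    · have : (Sum.inl (m, t) : PsiX 𝒜) ∈ UU A j' := mem_UU_inl.2 ⟨hx.1, le_of_not_gt hm⟩
      refine Set.mem_iUnion₂.2 ?_
      exact ⟨i₀, Finset.mem_insert_self i₀ s, hj' this⟩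
  · erw [mem_UU_inr] at hx
    subst hx
    refine Set.mem_iUnion₂.2 ?_
    exact ⟨i₀, Finset.mem_insert_self i₀ s, hi₀⟩

lemma locallyCompact (𝒜 : Set (Set ℕ)) : LocallyCompactSpace (PsiX 𝒜) := by
  constructor
  intro x U hU
  obtain ⟨U', hU'sub, hU'open, hxU'⟩ := mem_nhds_iff.1 hU
  obtain ⟨h1, h2⟩ := exists_basic hU'open
  rcases x with ⟨m, t⟩ | B
  · obtain ⟨C, hC, htC, hsub⟩ := h1 m t hxU'
    obtain ⟨a, ha⟩ := exists_cyl_subset hC htC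
    refine ⟨col m (cyl t a), ?_, ?_, ?_⟩
    · exact (isOpen_col (isClopen_cyl t a).2).mem_nhds (mem_col.2 ⟨rfl, mem_cyl_self⟩)
    · exact ((col_mono ha).trans hsub).trans hU'sub
    · exact isCompact_col (isClopen_cyl t a).1
  · obtain ⟨j, hsub⟩ := h2 B hxU'
    exact ⟨UU B j, (isOpen_UU B j).mem_nhds inr_mem_UU, hsub.trans hU'sub, isCompact_UU B j⟩

/-! ### Cantor space helpers for the homogeneity proof -/

/-- Translation of Cantor space moving `k` to the all-`true` sequence. -/
def tr (k t : CantorK) : CantorK := fun i => t i == k i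

lemma tr_tr (k t : CantorK) : tr k (tr k t) = t := by
  funext i
  cases h1 : t i <;> cases h2 : k i <;> simp [tr, h1, h2]

lemma continuous_tr (k : CantorK) : Continuous (tr k) := by
  apply continuous_pi
  intro i
  exact (continuous_of_discreteTopology (f := fun b : Bool => b == k i)).comp (continuous_apply i)

lemma tr_self (k : CantorK) : tr k k = fun _ => true := by
  funext i; simp [tr]

lemma tr_all_true_iff {k t : CantorK} : (∀ i, tr k t i = true) ↔ t = k := by
  constructor
  · intro h; funext i; have := h i; simpa [tr] using this
  · rintro rfl i; simp [tr]

lemma exF {u : CantorK} (h : ¬ ∀ i, u i = true) : ∃ i, u i = false := by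
  push_neg at h
  obtain ⟨i, hi⟩ := h
  exact ⟨i, by simpa using hi⟩

/-- Prepend `a` trues and a false to `s`. -/
def enc (a : ℕ) (s : CantorK) : CantorK :=
  fun i => if i < a then true else if i = a then false else s (i - a - 1)

lemma continuous_enc (a : ℕ) : Continuous (enc a) := by
  apply continuous_pi
  intro i
  unfold enc
  split_ifs
  · exact continuous_const
  · exact continuous_const
  · exact continuous_apply _

lemma enc_lt {a : ℕ} {s : CantorK} {i : ℕ} (h : i < a) : enc a s i = true := by
  simp [enc, h]

lemma enc_self {a : ℕ} {s : CantorK} : enc a s a = false := by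
  simp [enc]

lemma enc_shift (a : ℕ) (s : CantorK) : (fun i => enc a s (i + a + 1)) = s := by
  funext i
  have h1 : ¬ (i + a + 1 < a) := by omega
  have h2 : ¬ (i + a + 1 = a) := by omega
  have h3 : i + a + 1 - a - 1 = i := by omega
  simp [enc, h1, h2, h3]

lemma enc_not_all_true (a : ℕ) (s : CantorK) : ¬ ∀ i, enc a s i = true := by
  intro h
  have := h a
  rw [enc_self] at this
  exact Bool.false_ne_true this

lemma find_enc (a : ℕ) (s : CantorK) (h : ∃ i, enc a s i = false) : Nat.find h = a := by
  rw [Nat.find_eq_iff]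
  exact ⟨enc_self, fun i hi => by simp [enc_lt hi]⟩

lemma enc_of (u : CantorK) (h : ∃ i, u i = false) :
    enc (Nat.find h) (fun i => u (i + Nat.find h + 1)) = u := by
  funext i
  rcases lt_trichotomy i (Nat.find h) with hlt | heq | hgt
  · rw [enc_lt hlt]
    have := Nat.find_min h hlt
    cases hu : u i
    · exact absurd hu this
    · rfl
  · subst heq
    rw [enc_self]
    exact (Nat.find_spec h).symm
  · have h1 : ¬ (i < Nat.find h) := by omega
    have h2 : ¬ (i = Nat.find h) := by omega
    have h3 : i - Nat.find h - 1 + Nat.find h + 1 = i := by omega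
    simp only [enc, h1, h2, if_false]
    rw [h3]

/-! ### The mixed swap homeomorphism -/

/-- The column indices used for the swap: elements of `A` above `n`. -/
def SS (A : ↥𝒜) (n : ℕ) : Set ℕ := {m : ℕ | m ∈ (A : Set ℕ) ∧ n + 1 ≤ m}

open Classical in
/-- An involution of `X` exchanging the point `(n, k)` with the point `A ∈ 𝒜`. -/
noncomputable def mixedMap (n : ℕ) (k : CantorK) (A : ↥𝒜)
    (σ : ℕ ≃ ↥(SS A n)) : PsiX 𝒜 → PsiX 𝒜 := fun x =>
  match x with
  | Sum.inl (m, t) =>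
    if hm : m = n then
      (if h : ∀ i, tr k t i = true then Sum.inr A
       else Sum.inl ((σ (Nat.find (exF h)) : ℕ),
         fun i => tr k t (i + Nat.find (exF h) + 1)))
    else if hS : m ∈ SS A n then
      Sum.inl (n, tr k (enc (σ.symm ⟨m, hS⟩) t))
    else Sum.inl (m, t)
  | Sum.inr B => if B = A then Sum.inl (n, k) else Sum.inr B

section MixedMap

variable {n : ℕ} {k : CantorK} {A : ↥𝒜} {σ : ℕ ≃ ↥(SS A n)}

lemma mm_inr_A : mixedMap n k A σ (Sum.inr A) = Sum.inl (n, k) := by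
  simp [mixedMap]
  rfl

lemma mm_inr_ne {B : ↥𝒜} (h : B ≠ A) :
    mixedMap n k A σ (Sum.inr B) = Sum.inr B := by
  simp [mixedMap, h]
  rfl

lemma mm_inl_n_eq (t : CantorK) (h : ∀ i, tr k t i = true) :
    mixedMap n k A σ (Sum.inl (n, t)) = Sum.inr A := by
  simp [mixedMap, h]
  rfl

lemma mm_inl_n_ne (t : CantorK) (h : ¬ ∀ i, tr k t i = true) :
    mixedMap n k A σ (Sum.inl (n, t)) =
      Sum.inl ((σ (Nat.find (exF h)) : ℕ),
        fun i => tr k t (i + Nat.find (exF h) + 1)) := by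
  simp [mixedMap, h]
  rfl

lemma mm_inl_S {m : ℕ} (t : CantorK) (hm : m ≠ n) (hS : m ∈ SS A n) :
    mixedMap n k A σ (Sum.inl (m, t)) =
      Sum.inl (n, tr k (enc (σ.symm ⟨m, hS⟩) t)) := by
  simp only [mixedMap]
  rw [dif_neg hm]
  simp only [hS, ↓reduceDIte]
  rfl

lemma mm_inl_out {m : ℕ} (t : CantorK) (hm : m ≠ n) (hS : m ∉ SS A n) :
    mixedMap n k A σ (Sum.inl (m, t)) = Sum.inl (m, t) := by
  simp only [mixedMap]
  rw [dif_neg hm]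
  simp only [hS, ↓reduceDIte]
  rfl

lemma sigma_ne_n (b : ℕ) : (σ b : ℕ) ≠ n := by
  have := (σ b).2.2
  omega

lemma sigma_mem_SS (b : ℕ) : (σ b : ℕ) ∈ SS A n := (σ b).2

lemma mm_involutive : Function.Involutive (mixedMap n k A σ) := by
  intro x
  rcases x with ⟨m, t⟩ | B
  · by_cases hm : m = n
    · replace hm : n = m := hm.symm
      subst hm
      by_cases h : ∀ i, tr k t i = true
      · erw [mm_inl_n_eq t h, mm_inr_A, tr_all_true_iff.1 h]
      · erw [mm_inl_n_ne t h]
        have hc : ((σ (Nat.find (exF h)) : ℕ)) ≠ n := sigma_ne_n _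
        have hcS : ((σ (Nat.find (exF h)) : ℕ)) ∈ SS A n := sigma_mem_SS _
        erw [mm_inl_S _ hc hcS]
        have h1 : σ.symm ⟨(σ (Nat.find (exF h)) : ℕ), hcS⟩ = Nat.find (exF h) := by
          rw [show (⟨(σ (Nat.find (exF h)) : ℕ), hcS⟩ : ↥(SS A n)) = σ (Nat.find (exF h))
            from Subtype.ext rfl, Equiv.symm_apply_apply]
        rw [h1, enc_of (tr k t) (exF h), tr_tr]
    · by_cases hS : m ∈ SS A n
      · erw [mm_inl_S t hm hS]
        set a := σ.symm ⟨m, hS⟩ with ha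
        have hrw : tr k (tr k (enc a t)) = enc a t := tr_tr _ _
        have h' : ¬ ∀ i, tr k (tr k (enc a t)) i = true := by
          erw [hrw]; exact enc_not_all_true a t
        erw [mm_inl_n_ne _ h']
        have hF : Nat.find (exF h') = a := by
          rw [Nat.find_eq_iff]
          constructor
          · rw [show tr k (tr k (enc a t)) a = enc a t a from congrFun hrw a, enc_self]
          · intro i hi
            rw [show tr k (tr k (enc a t)) i = enc a t i from congrFun hrw i, enc_lt hi]
            simp
        rw [hF]
        have h2 : σ a = ⟨m, hS⟩ := by rw [ha, Equiv.apply_symm_apply]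
        rw [h2]
        have h3 : (fun i => tr k (tr k (enc a t)) (i + a + 1)) = t := by
          funext i
          rw [congrFun hrw (i + a + 1)]
          exact congrFun (enc_shift a t) i
        rw [h3]
      · erw [mm_inl_out t hm hS, mm_inl_out t hm hS]
  · by_cases hBA : B = A
    · subst hBA
      erw [mm_inr_A]
      exact mm_inl_n_eq k (by erw [tr_self]; exact fun _ => rfl)
    · erw [mm_inr_ne hBA, mm_inr_ne hBA]

end MixedMap

section MixedCont

variable {n : ℕ} {k : CantorK} {A : ↥𝒜} {σ : ℕ ≃ ↥(SS A n)}

lemma continuous_shift (c : ℕ) : Continuous (fun u : CantorK => fun i => u (i + c + 1)) :=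
  continuous_pi fun i => continuous_apply (i + c + 1)

lemma true_beq (b : Bool) : (true == b) = b := by cases b <;> rfl

/-- Preimage of a column generator is open. -/
lemma mm_preim_col (n₀ : ℕ) (C : Set CantorK) (hC : IsOpen C) :
    IsOpen (mixedMap n k A σ ⁻¹' (col n₀ C) : Set (PsiX 𝒜)) := by
  apply open_of_pointwise
  · intro m t hmt
    erw [Set.mem_preimage] at hmt
    by_cases hm : m = n
    · replace hm : n = m := hm.symm
      subst hm
      by_cases h : ∀ i, tr k t i = true
      · erw [mm_inl_n_eq t h] at hmt
        exact absurd hmt inr_not_mem_col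
      · erw [mm_inl_n_ne t h, mem_col] at hmt
        set i₀ := Nat.find (exF h) with hi₀
        refine ⟨tr k ⁻¹' (cyl (tr k t) (i₀ + 1) ∩
          (fun u : CantorK => fun i => u (i + i₀ + 1)) ⁻¹' C), ?_, ?_, ?_⟩
        · exact ((isClopen_cyl _ _).2.inter ((continuous_shift i₀).isOpen_preimage _ hC)).preimage
            (continuous_tr k)
        · refine ⟨fun i _ => rfl, ?_⟩
          show (fun i => tr k t (i + i₀ + 1)) ∈ C
          exact hmt.2
        · rintro (⟨m', t'⟩ | B') hx
          · erw [mem_col] at hx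
            obtain ⟨rfl, ht'⟩ := hx
            obtain ⟨hcylm, hshift⟩ := ht'
            have h'' : ¬ ∀ i, tr k t' i = true := by
              intro hall
              have h1 : tr k t' i₀ = tr k t i₀ := hcylm i₀ (by omega)
              have h2 : tr k t i₀ = false := Nat.find_spec (exF h)
              rw [hall i₀] at h1
              rw [← h1] at h2
              exact Bool.noConfusion h2
            erw [Set.mem_preimage, mm_inl_n_ne t' h'']
            have hF : Nat.find (exF h'') = i₀ := by
              rw [Nat.find_eq_iff]
              constructor
              · rw [hcylm i₀ (by omega)]
                exact Nat.find_spec (exF h)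
              · intro i hi
                rw [hcylm i (by omega)]
                exact Nat.find_min (exF h) hi
            erw [mem_col, hF]
            exact ⟨hmt.1, hshift⟩
          · exact absurd hx inr_not_mem_col
    · by_cases hS : m ∈ SS A n
      · erw [mm_inl_S t hm hS, mem_col] at hmt
        refine ⟨(fun t' => tr k (enc (σ.symm ⟨m, hS⟩) t')) ⁻¹' C,
          hC.preimage ((continuous_tr k).comp (continuous_enc _)), hmt.2, ?_⟩
        rintro (⟨m', t'⟩ | B') hx
        · erw [mem_col] at hx
          obtain ⟨rfl, ht'⟩ := hx
          erw [Set.mem_preimage, mm_inl_S t' hm hS, mem_col]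
          exact ⟨hmt.1, ht'⟩
        · exact absurd hx inr_not_mem_col
      · erw [mm_inl_out t hm hS, mem_col] at hmt
        refine ⟨C, hC, hmt.2, ?_⟩
        rintro (⟨m', t'⟩ | B') hx
        · erw [mem_col] at hx
          obtain ⟨rfl, ht'⟩ := hx
          erw [Set.mem_preimage, mm_inl_out t' hm hS, mem_col]
          exact ⟨hmt.1, ht'⟩
        · exact absurd hx inr_not_mem_col
  · intro B hB
    erw [Set.mem_preimage] at hB
    by_cases hBA : B = A
    · replace hBA : A = B := hBA.symm
      subst hBA
      erw [mm_inr_A, mem_col] at hB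
      obtain ⟨hn₀, hkC⟩ := hB
      obtain ⟨a, ha⟩ := exists_cyl_subset hC hkC
      set c := Finset.sup (Finset.range a) (fun b => (σ b : ℕ)) with hc
      refine ⟨max (n + 1) (c + 1), ?_⟩
      rintro (⟨m, t⟩ | B') hx
      · erw [mem_UU_inl] at hx
        obtain ⟨hmA, hmge⟩ := hx
        have hm : m ≠ n := by omega
        have hS : m ∈ SS A n := ⟨hmA, by omega⟩
        erw [Set.mem_preimage, mm_inl_S t hm hS, mem_col]
        refine ⟨hn₀, ha ?_⟩
        have haₘ : a ≤ σ.symm ⟨m, hS⟩ := by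
          by_contra hlt
          push_neg at hlt
          have h1 : ((σ (σ.symm ⟨m, hS⟩)) : ℕ) ≤ c := by
            rw [hc]
            exact Finset.le_sup (f := fun b => (σ b : ℕ)) (Finset.mem_range.2 hlt)
          rw [Equiv.apply_symm_apply] at h1
          simp only at h1
          omega
        intro i hi
        show (enc (σ.symm ⟨m, hS⟩) t i == k i) = k i
        rw [enc_lt (by omega), true_beq]
      · erw [mem_UU_inr] at hx
        subst hx
        erw [Set.mem_preimage, mm_inr_A, mem_col]
        exact ⟨hn₀, hkC⟩
    · erw [mm_inr_ne hBA] at hB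
      exact absurd hB inr_not_mem_col

end MixedCont

section MixedCont2

variable {n : ℕ} {k : CantorK} {A : ↥𝒜} {σ : ℕ ≃ ↥(SS A n)}

/-- Preimage of a `UU` generator is open. -/
lemma mm_preim_UU (h𝒜 : AlmostDisjointFamily 𝒜) (B : ↥𝒜) (j' : ℕ) :
    IsOpen (mixedMap n k A σ ⁻¹' (UU B j') : Set (PsiX 𝒜)) := by
  apply open_of_pointwise
  · intro m t hmt
    erw [Set.mem_preimage] at hmt
    by_cases hm : m = n
    · replace hm : n = m := hm.symm
      subst hm
      by_cases h : ∀ i, tr k t i = true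
      · -- `t = k`, maps to `Sum.inr A`, so `A = B`
        erw [mm_inl_n_eq t h, mem_UU_inr] at hmt
        -- bad set : {b | ↑(σ b) < j'} is finite
        have hfin : {b : ℕ | (σ b : ℕ) < j'}.Finite := by
          have h1 : {s : ↥(SS A n) | (s : ℕ) < j'}.Finite :=
            ((Set.finite_Iio j').preimage (Subtype.coe_injective.injOn))
          exact h1.preimage (σ.injective.injOn)
        obtain ⟨c', hc'⟩ := hfin.bddAbove
        refine ⟨cyl t (c' + 1), (isClopen_cyl _ _).2, mem_cyl_self, ?_⟩
        rintro (⟨m', t'⟩ | B') hx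
        · erw [mem_col] at hx
          obtain ⟨rfl, ht'⟩ := hx
          erw [Set.mem_preimage]
          by_cases h' : ∀ i, tr k t' i = true
          · erw [mm_inl_n_eq t' h', mem_UU_inr]
            exact hmt
          · erw [mm_inl_n_ne t' h', mem_UU_inl]
            have hge : c' + 1 ≤ Nat.find (exF h') := by
              by_contra hlt
              push_neg at hlt
              have h1 : tr k t' (Nat.find (exF h')) = false := Nat.find_spec (exF h')
              have h2 : t' (Nat.find (exF h')) = t (Nat.find (exF h')) := ht' _ hlt
              have h3 : tr k t' (Nat.find (exF h')) = tr k t (Nat.find (exF h')) := by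
                show (t' _ == k _) = (t _ == k _)
                rw [h2]
              rw [h3, h (Nat.find (exF h'))] at h1
              exact Bool.noConfusion h1
            have hnb : ¬ ((σ (Nat.find (exF h')) : ℕ) < j') := by
              intro hlt
              have : Nat.find (exF h') ∈ {b : ℕ | (σ b : ℕ) < j'} := hlt
              have := hc' this
              omega
            rw [← hmt]
            exact ⟨(sigma_mem_SS (σ := σ) (Nat.find (exF h'))).1, by omega⟩
        · exact absurd hx inr_not_mem_col
      · erw [mm_inl_n_ne t h, mem_UU_inl] at hmt
        obtain ⟨h1, h2⟩ := hmt
        set i₀ := Nat.find (exF h) with hi₀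
        refine ⟨tr k ⁻¹' cyl (tr k t) (i₀ + 1),
          ((isClopen_cyl _ _).2).preimage (continuous_tr k), fun i _ => rfl, ?_⟩
        rintro (⟨m', t'⟩ | B') hx
        · erw [mem_col] at hx
          obtain ⟨rfl, ht'⟩ := hx
          have h'' : ¬ ∀ i, tr k t' i = true := by
            intro hall
            have ha1 : tr k t' i₀ = tr k t i₀ := ht' i₀ (by omega)
            have ha2 : tr k t i₀ = false := Nat.find_spec (exF h)
            rw [hall i₀] at ha1
            rw [← ha1] at ha2
            exact Bool.noConfusion ha2
          erw [Set.mem_preimage, mm_inl_n_ne t' h'']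
          have hF : Nat.find (exF h'') = i₀ := by
            rw [Nat.find_eq_iff]
            constructor
            · rw [ht' i₀ (by omega)]
              exact Nat.find_spec (exF h)
            · intro i hi
              rw [ht' i (by omega)]
              exact Nat.find_min (exF h) hi
          erw [mem_UU_inl, hF]
          exact ⟨h1, h2⟩
        · exact absurd hx inr_not_mem_col
    · by_cases hS : m ∈ SS A n
      · erw [mm_inl_S t hm hS, mem_UU_inl] at hmt
        refine ⟨Set.univ, isOpen_univ, trivial, ?_⟩
        rintro (⟨m', t'⟩ | B') hx
        · erw [mem_col] at hx
          obtain ⟨rfl, _⟩ := hx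
          erw [Set.mem_preimage, mm_inl_S t' hm hS, mem_UU_inl]
          exact hmt
        · exact absurd hx inr_not_mem_col
      · erw [mm_inl_out t hm hS, mem_UU_inl] at hmt
        refine ⟨Set.univ, isOpen_univ, trivial, ?_⟩
        rintro (⟨m', t'⟩ | B') hx
        · erw [mem_col] at hx
          obtain ⟨rfl, _⟩ := hx
          erw [Set.mem_preimage, mm_inl_out t' hm hS, mem_UU_inl]
          exact hmt
        · exact absurd hx inr_not_mem_col
  · intro B' hB'
    erw [Set.mem_preimage] at hB'
    by_cases hBA : B' = A
    · replace hBA : A = B' := hBA.symm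
      subst hBA
      erw [mm_inr_A, mem_UU_inl] at hB'
      refine ⟨n + 1, ?_⟩
      rintro (⟨m, t⟩ | B'') hx
      · erw [mem_UU_inl] at hx
        have hm : m ≠ n := by omega
        have hS : m ∈ SS A n := ⟨hx.1, hx.2⟩
        erw [Set.mem_preimage, mm_inl_S t hm hS, mem_UU_inl]
        exact hB'
      · erw [mem_UU_inr] at hx
        subst hx
        erw [Set.mem_preimage, mm_inr_A, mem_UU_inl]
        exact hB'
    · erw [mm_inr_ne hBA, mem_UU_inr] at hB'
      subst hB'
      have hfin : ((A : Set ℕ) ∩ (B' : Set ℕ)).Finite :=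
        h𝒜.2.2 A A.2 B' B'.2 (fun hh => hBA (Subtype.ext hh.symm))
      obtain ⟨b, hb⟩ := hfin.bddAbove
      refine ⟨max (max (n + 1) j') (b + 1), ?_⟩
      rintro (⟨m, t⟩ | B'') hx
      · erw [mem_UU_inl] at hx
        obtain ⟨hmB, hmge⟩ := hx
        simp only [max_le_iff] at hmge
        have hm : m ≠ n := by omega
        have hS : m ∉ SS A n := by
          intro hmem
          have : m ∈ (A : Set ℕ) ∩ (B' : Set ℕ) := ⟨hmem.1, hmB⟩
          have := hb this
          omega
        erw [Set.mem_preimage, mm_inl_out t hm hS, mem_UU_inl]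
        exact ⟨hmB, by omega⟩
      · erw [mem_UU_inr] at hx
        subst hx
        erw [Set.mem_preimage, mm_inr_ne hBA, mem_UU_inr]

end MixedCont2

lemma mm_continuous (h𝒜 : AlmostDisjointFamily 𝒜) {n : ℕ} {k : CantorK} {A : ↥𝒜}
    (σ : ℕ ≃ ↥(SS A n)) :
    @Continuous (PsiX 𝒜) (PsiX 𝒜) (PsiX.topology 𝒜) (PsiX.topology 𝒜) (mixedMap n k A σ) := by
  erw [show (PsiX.topology 𝒜) = TopologicalSpace.generateFrom (gens 𝒜) from rfl,
    continuous_generateFrom_iff]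
  rintro G (⟨n₀, C, hC, rfl⟩ | ⟨B, j', rfl⟩)
  · exact mm_preim_col n₀ C hC
  · exact mm_preim_UU h𝒜 B j'

lemma mixed_homeo (h𝒜 : AlmostDisjointFamily 𝒜) (n : ℕ) (k : CantorK) (A : ↥𝒜) :
    ∃ H : PsiX 𝒜 ≃ₜ PsiX 𝒜,
      H (Sum.inl (n, k)) = Sum.inr A ∧ H (Sum.inr A) = Sum.inl (n, k) := by
  have hSinf : (SS A n).Infinite := by
    have hA : (A : Set ℕ).Infinite := h𝒜.2.1 A A.2
    have heq : SS A n = (A : Set ℕ) \ Set.Iio (n + 1) := by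
      ext m
      simp only [SS, Set.mem_setOf_eq, Set.mem_diff, Set.mem_Iio]
      exact ⟨fun h => ⟨h.1, by omega⟩, fun h => ⟨h.1, by omega⟩⟩
    rw [heq]
    exact hA.diff (Set.finite_Iio _)
  haveI := hSinf.to_subtype
  obtain ⟨σ⟩ : Nonempty (ℕ ≃ ↥(SS A n)) := nonempty_equiv_of_countable
  refine ⟨⟨(mm_involutive (n := n) (k := k) (A := A) (σ := σ)).toPerm _,
    mm_continuous h𝒜 σ, mm_continuous h𝒜 σ⟩, ?_, ?_⟩
  · show mixedMap n k A σ (Sum.inl (n, k)) = Sum.inr A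
    exact mm_inl_n_eq k (by erw [tr_self]; exact fun _ => rfl)
  · show mixedMap n k A σ (Sum.inr A) = Sum.inl (n, k)
    exact mm_inr_A

lemma homog (h𝒜 : AlmostDisjointFamily 𝒜) (x y : PsiX 𝒜) :
    ∃ h : PsiX 𝒜 ≃ₜ PsiX 𝒜, h x = y := by
  rcases x with p | A <;> rcases y with q | B
  · obtain ⟨A₀, hA₀⟩ := h𝒜.1.nonempty
    obtain ⟨H₁, hH₁, _⟩ := mixed_homeo h𝒜 p.1 p.2 ⟨A₀, hA₀⟩
    obtain ⟨H₂, _, hH₂⟩ := mixed_homeo h𝒜 q.1 q.2 ⟨A₀, hA₀⟩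
    exact ⟨H₁.trans H₂, by
      exact (congrArg H₂ hH₁).trans hH₂⟩
  · obtain ⟨H, hH, _⟩ := mixed_homeo h𝒜 p.1 p.2 B
    exact ⟨H, by rw [show (p.1, p.2) = p from rfl] at hH; exact hH⟩
  · obtain ⟨H, _, hH⟩ := mixed_homeo h𝒜 q.1 q.2 A
    exact ⟨H, by rw [show (q.1, q.2) = q from rfl] at hH; exact hH⟩
  · obtain ⟨H₁, _, hH₁⟩ := mixed_homeo h𝒜 0 (fun _ => true) A
    obtain ⟨H₂, hH₂, _⟩ := mixed_homeo h𝒜 0 (fun _ => true) B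
    exact ⟨H₁.trans H₂, by exact (congrArg H₂ hH₁).trans hH₂⟩

end PsiXProof

/-- The Cantor-set replacement `X` of a Ψ-space is zero-dimensional (has a base of
clopen sets), locally compact, and homogeneous. -/
theorem stmt_9 (𝒜 : Set (Set ℕ)) (h𝒜 : AlmostDisjointFamily 𝒜) :
    (∃ B : Set (Set (PsiX 𝒜)), TopologicalSpace.IsTopologicalBasis B ∧
        ∀ U ∈ B, IsClopen U) ∧
    LocallyCompactSpace (PsiX 𝒜) ∧
    (∀ x y : PsiX 𝒜, ∃ h : PsiX 𝒜 ≃ₜ PsiX 𝒜, h x = y) := by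
  exact ⟨⟨PsiXProof.basis 𝒜, PsiXProof.isBasis 𝒜, PsiXProof.isClopen_basis h𝒜⟩,
    PsiXProof.locallyCompact 𝒜, PsiXProof.homog h𝒜⟩
end

section
/- With X, Ψ(𝒜), and f : X → Ψ(𝒜) as above (Cantor-set replacement of the isolated points of a Ψ-space), the image f(Z) of every zero-set Z of X is a zero-set of Ψ(𝒜). -/
open Set

/-- A zero-set: the preimage of `0` under a continuous real-valued function. -/
def IsZeroSet {Y : Type*} [TopologicalSpace Y] (Z : Set Y) : Prop :=
  ∃ ξ : Y → ℝ, Continuous ξ ∧ Z = ξ ⁻¹' {0}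


open Topology

section Aux

/-- Every open set of `X` containing `Sum.inr A` contains a basic set `U_n(A)`. -/
lemma psiX_nhds_inr (𝒜 : Set (Set ℕ)) (A : ↥𝒜) (U : Set (PsiX 𝒜))
    (hU : IsOpen[PsiX.topology 𝒜] U) (hA : Sum.inr A ∈ U) :
    ∃ n : ℕ, insert (Sum.inr A)
      (Sum.inl '' {p : ℕ × CantorK | p.1 ∈ (A : Set ℕ) ∧ n ≤ p.1}) ⊆ U := by
  have hU' : TopologicalSpace.GenerateOpen
      ({s | ∃ (n : ℕ) (C : Set CantorK), IsOpen C ∧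
          s = Sum.inl '' ({n} ×ˢ C)} ∪
       {s | ∃ (A : ↥𝒜) (n : ℕ),
          s = insert (Sum.inr A)
            (Sum.inl '' {p : ℕ × CantorK | p.1 ∈ (A : Set ℕ) ∧ n ≤ p.1})}) U := hU
  clear hU
  induction hU' with
  | basic s hs =>
    rcases hs with ⟨n, C, hC, rfl⟩ | ⟨B, n, rfl⟩
    · exact absurd hA (by rintro ⟨_, _, h⟩; exact Sum.inl_ne_inr h)
    · have hAB : A = B := by
        rcases hA with h | h
        · exact Sum.inr_injective h
        · simp at h
      subst hAB
      exact ⟨n, subset_rfl⟩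
  | univ => exact ⟨0, fun _ _ => trivial⟩
  | inter s t hs ht ihs iht =>
    obtain ⟨n, hn⟩ := ihs hA.1
    obtain ⟨m, hm⟩ := iht hA.2
    refine ⟨max n m, ?_⟩
    rintro x (rfl | ⟨p, ⟨hp1, hp2⟩, rfl⟩)
    · exact hA
    · exact ⟨hn (Or.inr ⟨p, ⟨hp1, le_trans (le_max_left _ _) hp2⟩, rfl⟩),
        hm (Or.inr ⟨p, ⟨hp1, le_trans (le_max_right _ _) hp2⟩, rfl⟩)⟩
  | sUnion S hS ih =>
    obtain ⟨s, hsS, hAs⟩ := hA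
    obtain ⟨n, hn⟩ := ih s hsS hAs
    exact ⟨n, hn.trans (Set.subset_sUnion_of_mem hsS)⟩

/-- The embedding of the `n`-th Cantor fiber into `X` is continuous. -/
lemma psiX_cont_emb (𝒜 : Set (Set ℕ)) (n : ℕ) :
    Continuous[Pi.topologicalSpace, PsiX.topology 𝒜]
      (fun k : CantorK => (Sum.inl (n, k) : PsiX 𝒜)) := by
  apply continuous_generateFrom_iff.mpr
  rintro s (⟨m, C, hC, rfl⟩ | ⟨B, m, rfl⟩)
  · by_cases hnm : n = m
    · subst hnm
      convert hC using 1
      ext k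
      constructor
      · rintro ⟨⟨a, b⟩, ⟨ha, hb⟩, h⟩
        obtain ⟨-, h2⟩ := Prod.ext_iff.mp (Sum.inl_injective h)
        exact (show b = k from h2) ▸ hb
      · intro hk
        exact ⟨(n, k), ⟨rfl, hk⟩, rfl⟩
    · convert isOpen_empty using 1
      rw [Set.eq_empty_iff_forall_notMem]
      rintro k ⟨⟨a, b⟩, ⟨ha, hb⟩, h⟩
      obtain ⟨h1, h2⟩ := Prod.ext_iff.mp (Sum.inl_injective h)
      exact hnm (by simpa using h1.symm.trans ha)
  · by_cases h : n ∈ (B : Set ℕ) ∧ m ≤ n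
    · convert isOpen_univ using 1
      exact Set.eq_univ_of_forall fun k =>
        Set.mem_insert_iff.mpr (Or.inr ⟨(n, k), ⟨h.1, h.2⟩, rfl⟩)
    · convert isOpen_empty using 1
      rw [Set.eq_empty_iff_forall_notMem]
      rintro k hk
      rcases Set.mem_insert_iff.mp hk with h' | ⟨p, hp, hp'⟩
      · exact Sum.inl_ne_inr h'
      · rcases Sum.inl_injective hp' with rfl
        exact h hp

/-- Singletons of naturals are open in the Ψ-space. -/
lemma psiSpace_singleton_open (𝒜 : Set (Set ℕ)) (n : ℕ) :
    IsOpen ({Sum.inl n} : Set (PsiSpace 𝒜)) :=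
  TopologicalSpace.GenerateOpen.basic _ (Or.inl ⟨n, rfl⟩)

lemma psiSpace_Un_open (𝒜 : Set (Set ℕ)) (A : ↥𝒜) (n : ℕ) :
    IsOpen (insert (Sum.inr A)
      (Sum.inl '' {m | m ∈ (A : Set ℕ) ∧ n ≤ m}) : Set (PsiSpace 𝒜)) :=
  TopologicalSpace.GenerateOpen.basic _ (Or.inr ⟨A, n, rfl⟩)

lemma psiSpace_nhds_inl (𝒜 : Set (Set ℕ)) (n : ℕ) :
    @nhds (PsiSpace 𝒜) (PsiSpace.topology 𝒜) (Sum.inl n) = pure (Sum.inl n) :=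
  (isOpen_singleton_iff_nhds_eq_pure _).mp (psiSpace_singleton_open 𝒜 n)

lemma psiSpace_Un_mem_nhds (𝒜 : Set (Set ℕ)) (A : ↥𝒜) (n : ℕ) :
    insert (Sum.inr A) (Sum.inl '' {m | m ∈ (A : Set ℕ) ∧ n ≤ m}) ∈
      @nhds (PsiSpace 𝒜) (PsiSpace.topology 𝒜) (Sum.inr A) :=
  (psiSpace_Un_open 𝒜 A n).mem_nhds (Set.mem_insert _ _)

end Aux

/-- The image under the collapsing map `f : X → Ψ(𝒜)` of every zero-set of `X`
is a zero-set of `Ψ(𝒜)`. -/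
theorem stmt_11 (𝒜 : Set (Set ℕ)) (h𝒜 : AlmostDisjointFamily 𝒜)
    (Z : Set (PsiX 𝒜)) (hZ : IsZeroSet Z) :
    IsZeroSet (psiCollapse 𝒜 '' Z) := by
  obtain ⟨ξ, hξ, rfl⟩ := hZ
  classical
  set g : ℕ → CantorK → ℝ := fun n k => |ξ (Sum.inl (n, k))| with hg
  have hg_nonneg : ∀ n k, 0 ≤ g n k := fun n k => abs_nonneg _
  have hg_bdd : ∀ n, BddBelow (Set.range (g n)) := fun n =>
    ⟨0, by rintro _ ⟨k, rfl⟩; exact hg_nonneg n k⟩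
  have hg_cont : ∀ n, Continuous (g n) := fun n =>
    (continuous_abs.comp (hξ.comp (psiX_cont_emb 𝒜 n)))
  set η : PsiSpace 𝒜 → ℝ :=
    Sum.elim (fun n => ⨅ k : CantorK, g n k) (fun A => |ξ (Sum.inr A)|) with hη
  have hinf_zero : ∀ n : ℕ, (⨅ k : CantorK, g n k) = 0 ↔ ∃ k, ξ (Sum.inl (n, k)) = 0 := by
    intro n
    constructor
    · intro h
      obtain ⟨k, -, hk⟩ := isCompact_univ.exists_isMinOn (Set.univ_nonempty)
        ((hg_cont n).continuousOn)
      refine ⟨k, abs_eq_zero.mp (le_antisymm ?_ (hg_nonneg n k))⟩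
      rw [← h]
      exact le_ciInf fun j => hk (Set.mem_univ j)
    · rintro ⟨k, hk⟩
      refine le_antisymm ?_ (Real.iInf_nonneg (hg_nonneg n))
      have : g n k = 0 := by simp [hg, hk]
      rw [← this]
      exact ciInf_le (hg_bdd n) k
  refine ⟨η, ?_, ?_⟩
  · rw [continuous_iff_continuousAt]
    rintro (n | A)
    · show Filter.Tendsto η (𝓝 (Sum.inl n)) (𝓝 (η (Sum.inl n)))
      rw [psiSpace_nhds_inl 𝒜 n]
      exact tendsto_pure_nhds η _
    · show Filter.Tendsto η (𝓝 (Sum.inr A)) (𝓝 (η (Sum.inr A)))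
      rw [Metric.tendsto_nhds]
      intro ε hε
      set c : ℝ := ξ (Sum.inr A) with hc
      have hball : IsOpen (ξ ⁻¹' Metric.ball c (ε / 2)) :=
        (Metric.isOpen_ball).preimage hξ
      have hmem : Sum.inr A ∈ ξ ⁻¹' Metric.ball c (ε / 2) := by
        show dist c c < ε / 2
        rw [dist_self]; exact half_pos hε
      obtain ⟨n, hn⟩ := psiX_nhds_inr 𝒜 A _ hball hmem
      filter_upwards [psiSpace_Un_mem_nhds 𝒜 A n]
      rintro y (rfl | ⟨m, ⟨hmA, hnm⟩, rfl⟩)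
      · simpa using hε
      · have hfib : ∀ k : CantorK, |ξ (Sum.inl (m, k)) - c| < ε / 2 := by
          intro k
          have : (Sum.inl (m, k) : PsiX 𝒜) ∈ ξ ⁻¹' Metric.ball c (ε / 2) :=
            hn (Or.inr ⟨(m, k), ⟨hmA, hnm⟩, rfl⟩)
          simpa [Metric.mem_ball, Real.dist_eq] using (show dist (ξ (Sum.inl (m, k))) c < ε / 2 from this)
        have hub : ∀ k : CantorK, g m k ≤ |c| + ε / 2 := by
          intro k
          have := abs_sub_abs_le_abs_sub (ξ (Sum.inl (m, k))) c
          linarith [(hfib k).le]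
        have hlb : ∀ k : CantorK, |c| - ε / 2 ≤ g m k := by
          intro k
          have := abs_sub_abs_le_abs_sub c (ξ (Sum.inl (m, k)))
          have h2 : |c - ξ (Sum.inl (m, k))| = |ξ (Sum.inl (m, k)) - c| := abs_sub_comm _ _
          rw [h2] at this
          linarith [(hfib k).le]
        have hup : (⨅ k : CantorK, g m k) ≤ |c| + ε / 2 :=
          le_trans (ciInf_le (hg_bdd m) (fun _ => false)) (hub _)
        have hdn : |c| - ε / 2 ≤ ⨅ k : CantorK, g m k := le_ciInf hlb
        have : η (Sum.inl m) = ⨅ k : CantorK, g m k := rfl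
        rw [Real.dist_eq, this]
        have : η (Sum.inr A) = |c| := rfl
        rw [this]
        rw [abs_sub_lt_iff]
        constructor <;> linarith
  · ext p
    constructor
    · rintro ⟨x, hx, rfl⟩
      rcases x with ⟨nk⟩ | A
      · have : ξ (Sum.inl nk) = 0 := hx
        simp only [psiCollapse, Sum.map_inl, Set.mem_preimage, Set.mem_singleton_iff]
        show η (Sum.inl nk.1) = 0
        exact (hinf_zero nk.1).mpr ⟨nk.2, this⟩
      · have : ξ (Sum.inr A) = 0 := hx
        simp only [psiCollapse, Sum.map_inr, Set.mem_preimage, Set.mem_singleton_iff]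
        show η (Sum.inr A) = 0
        simp [hη, this]
    · rintro hp
      rcases p with n | A
      · have h0 : (⨅ k : CantorK, g n k) = 0 := hp
        obtain ⟨k, hk⟩ := (hinf_zero n).mp h0
        exact ⟨Sum.inl (n, k), hk, rfl⟩
      · have h0 : |ξ (Sum.inr A)| = 0 := hp
        exact ⟨Sum.inr A, abs_eq_zero.mp h0, rfl⟩
end

section
/- A Tychonoff space X is almost compact (its Čech–Stone compactification adds at most one point) if and only if of any two disjoint zero-sets in X, at least one is compact. -/
open Set Topology Filter unitInterval

/-- For a T3.5 space, the unit of the Stone–Čech compactification is inducing. -/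
lemma isInducing_stoneCechUnit' (X : Type*) [TopologicalSpace X] [T35Space X] :
    Topology.IsInducing (stoneCechUnit : X → StoneCech X) := by
  rw [isInducing_iff_nhds]
  intro x
  refine le_antisymm (continuous_stoneCechUnit.tendsto x).le_comap ?_
  intro U hU
  obtain ⟨U', hU'U, hU'open, hxU'⟩ := mem_nhds_iff.mp hU
  obtain ⟨f, fc, fx, fK⟩ := CompletelyRegularSpace.completely_regular x U'ᶜ
    hU'open.isClosed_compl (by simpa using hxU')
  have key : ∀ a, stoneCechExtend fc (stoneCechUnit a) = f a :=
    fun a => congrFun (stoneCechExtend_extends fc) a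
  refine Filter.mem_comap.mpr ⟨(stoneCechExtend fc) ⁻¹' ({1}ᶜ), ?_, ?_⟩
  · refine IsOpen.mem_nhds ((isOpen_compl_singleton).preimage (continuous_stoneCechExtend fc)) ?_
    simp only [Set.mem_preimage, Set.mem_compl_iff, Set.mem_singleton_iff]
    rw [key x, fx]
    exact zero_ne_one
  · intro y hy
    simp only [Set.mem_preimage, Set.mem_compl_iff, Set.mem_singleton_iff] at hy
    rw [key y] at hy
    by_contra hyU
    exact hy (fK (fun h : y ∈ U' => hyU (hU'U h)))

/-- If the closure of the image of a closed set `Z` under `stoneCechUnit` lies in the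
range, then `Z` is compact. -/
lemma compact_of_closure_subset_range {X : Type*} [TopologicalSpace X] [T35Space X]
    {Z : Set X} (hZ : IsClosed Z)
    (h : closure (stoneCechUnit '' Z) ⊆ Set.range (stoneCechUnit : X → StoneCech X)) :
    IsCompact Z := by
  set A := closure (stoneCechUnit '' Z) with hA
  have hAcomp : IsCompact A := isClosed_closure.isCompact
  have hpre : IsCompact (stoneCechUnit ⁻¹' A) := by
    rw [(isInducing_stoneCechUnit' X).isCompact_iff]
    rwa [Set.image_preimage_eq_of_subset h]
  exact hpre.of_isClosed_subset hZ
    (fun x hx => subset_closure ⟨x, hx, rfl⟩)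

/-- A Tychonoff space `X` is almost compact (its Čech–Stone compactification adds at
most one point) iff of any two disjoint zero-sets of `X` at least one is compact. -/
theorem stmt_12 (X : Type*) [TopologicalSpace X] [T35Space X] :
    Cardinal.mk ↥((Set.range (stoneCechUnit : X → StoneCech X))ᶜ) ≤ 1 ↔
      ∀ Z₀ Z₁ : Set X, IsZeroSet Z₀ → IsZeroSet Z₁ → Disjoint Z₀ Z₁ →
        IsCompact Z₀ ∨ IsCompact Z₁ := by
  rw [Cardinal.mk_le_one_iff_set_subsingleton]
  constructor
  · -- forward: almost compact → one of two disjoint zero sets is compact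
    rintro hsub Z₀ Z₁ ⟨ξ, hξ, rfl⟩ ⟨η, hη, rfl⟩ hdisj
    -- separating function into the unit interval
    have hden : ∀ x, 0 < |ξ x| + |η x| := by
      intro x
      rcases eq_or_ne (ξ x) 0 with h0 | h0
      · have : η x ≠ 0 := by
          intro h1
          exact (Set.disjoint_left.mp hdisj (show x ∈ ξ ⁻¹' {0} from h0)
            (show x ∈ η ⁻¹' {0} from h1))
        have := abs_pos.mpr this
        have := abs_nonneg (ξ x)
        linarith
      · have := abs_pos.mpr h0
        have := abs_nonneg (η x)
        linarith
    have hmem : ∀ x, |ξ x| / (|ξ x| + |η x|) ∈ I := by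
      intro x
      constructor
      · positivity
      · rw [div_le_one (hden x)]
        have := abs_nonneg (η x)
        linarith
    set g : X → I := fun x => ⟨|ξ x| / (|ξ x| + |η x|), hmem x⟩ with hg
    have hgc : Continuous g := by
      apply Continuous.subtype_mk
      exact (hξ.abs.div (hξ.abs.add hη.abs) (fun x => (hden x).ne'))
    set G := stoneCechExtend hgc with hG
    have hGc : Continuous G := continuous_stoneCechExtend hgc
    have hGext : ∀ a, G (stoneCechUnit a) = g a :=
      fun a => congrFun (stoneCechExtend_extends hgc) a
    -- the closures of the images
    set A := closure (stoneCechUnit '' (ξ ⁻¹' {0})) with hA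
    set B := closure (stoneCechUnit '' (η ⁻¹' {0})) with hB
    have hAsub : A ⊆ G ⁻¹' {0} := by
      apply closure_minimal ?_ (isClosed_singleton.preimage hGc)
      rintro _ ⟨x, hx, rfl⟩
      simp only [Set.mem_preimage, Set.mem_singleton_iff]
      rw [hGext x]
      have hx0 : ξ x = 0 := hx
      apply Subtype.ext
      simp [hg, hx0]
    have hBsub : B ⊆ G ⁻¹' {1} := by
      apply closure_minimal ?_ (isClosed_singleton.preimage hGc)
      rintro _ ⟨x, hx, rfl⟩
      simp only [Set.mem_preimage, Set.mem_singleton_iff]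
      rw [hGext x]
      have hx0 : η x = 0 := hx
      have hξx : ξ x ≠ 0 := by
        intro h
        exact Set.disjoint_left.mp hdisj (show x ∈ ξ ⁻¹' {0} from h) hx0
      apply Subtype.ext
      have : |ξ x| ≠ 0 := fun h => hξx (abs_eq_zero.mp h)
      simp [hg, hx0, div_self this]
    have hABdisj : Disjoint A B := by
      refine Set.disjoint_left.mpr fun p hpA hpB => ?_
      have h0 : G p = 0 := hAsub hpA
      have h1 : G p = 1 := hBsub hpB
      rw [h0] at h1
      exact zero_ne_one h1
    -- at most one of A, B escapes the range
    by_cases hAr : A ⊆ Set.range (stoneCechUnit : X → StoneCech X)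
    · exact Or.inl (compact_of_closure_subset_range
        (isClosed_singleton.preimage hξ) hAr)
    · refine Or.inr (compact_of_closure_subset_range
        (isClosed_singleton.preimage hη) ?_)
      intro p hpB
      by_contra hpr
      obtain ⟨a, haA, har⟩ := Set.not_subset.mp hAr
      have : a = p := hsub har hpr
      exact Set.disjoint_left.mp hABdisj (this ▸ haA) hpB
  · -- backward: zero-set condition → at most one point added
    intro h p hp q hq
    by_contra hpq
    have hdpq : Disjoint ({p} : Set (StoneCech X)) {q} := by
      simpa [Set.disjoint_singleton_left] using hpq
    obtain ⟨f, hf0, hf1, hfI⟩ := exists_continuous_zero_one_of_isClosed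
      isClosed_singleton isClosed_singleton hdpq
    set ξ : X → ℝ := fun x => max (f (stoneCechUnit x) - 1/3) 0 with hξdef
    set η : X → ℝ := fun x => max (2/3 - f (stoneCechUnit x)) 0 with hηdef
    have hξc : Continuous ξ :=
      ((f.continuous.comp continuous_stoneCechUnit).sub continuous_const).max continuous_const
    have hηc : Continuous η :=
      (continuous_const.sub (f.continuous.comp continuous_stoneCechUnit)).max continuous_const
    have hξmem : ∀ x, x ∈ ξ ⁻¹' {0} ↔ f (stoneCechUnit x) ≤ 1/3 := by
      intro x
      simp only [Set.mem_preimage, Set.mem_singleton_iff, hξdef, max_eq_right_iff]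
      constructor <;> intro <;> linarith
    have hηmem : ∀ x, x ∈ η ⁻¹' {0} ↔ 2/3 ≤ f (stoneCechUnit x) := by
      intro x
      simp only [Set.mem_preimage, Set.mem_singleton_iff, hηdef, max_eq_right_iff]
      constructor <;> intro <;> linarith
    have hdisj : Disjoint (ξ ⁻¹' {0}) (η ⁻¹' {0}) := by
      refine Set.disjoint_left.mpr fun x hx0 hx1 => ?_
      rw [hξmem x] at hx0
      rw [hηmem x] at hx1
      linarith
    -- neither zero-set can be compact
    have key : ∀ (r : StoneCech X), r ∉ Set.range (stoneCechUnit : X → StoneCech X) →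
        ∀ (Z : Set X) (W : Set (StoneCech X)), IsOpen W → r ∈ W →
        (W ∩ Set.range (stoneCechUnit : X → StoneCech X) ⊆ stoneCechUnit '' Z) →
        ¬ IsCompact Z := by
      intro r hr Z W hWopen hrW hWZ hZcomp
      have himg : IsCompact (stoneCechUnit '' Z) :=
        hZcomp.image continuous_stoneCechUnit
      have hclosed : IsClosed (stoneCechUnit '' Z) := himg.isClosed
      have hrcl : r ∈ closure (stoneCechUnit '' Z) := by
        rw [mem_closure_iff]
        intro O hOopen hrO
        obtain ⟨y, hy⟩ := denseRange_stoneCechUnit.inter_open_nonempty (O ∩ W)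
          (hOopen.inter hWopen) ⟨r, hrO, hrW⟩
        exact ⟨y, hy.1.1, hWZ ⟨hy.1.2, hy.2⟩⟩
      rw [hclosed.closure_eq] at hrcl
      obtain ⟨x, _, rfl⟩ := hrcl
      exact hr ⟨x, rfl⟩
    rcases h (ξ ⁻¹' {0}) (η ⁻¹' {0}) ⟨ξ, hξc, rfl⟩ ⟨η, hηc, rfl⟩ hdisj with hc | hc
    · refine key p hp (ξ ⁻¹' {0}) (f ⁻¹' (Set.Iio (1/3)))
        (isOpen_Iio.preimage f.continuous) ?_ ?_ hc
      · simp [Set.mem_preimage, hf0 (Set.mem_singleton p)]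
      · rintro _ ⟨hW, x, rfl⟩
        exact ⟨x, (hξmem x).mpr (le_of_lt hW), rfl⟩
    · refine key q hq (η ⁻¹' {0}) (f ⁻¹' (Set.Ioi (2/3)))
        (isOpen_Ioi.preimage f.continuous) ?_ ?_ hc
      · simpa [hf1 (Set.mem_singleton q)] using (by norm_num : (2:ℝ)/3 < 1)
      · rintro _ ⟨hW, x, rfl⟩
        exact ⟨x, (hηmem x).mpr (le_of_lt hW), rfl⟩
end

section
/- Let 𝒜 be a MAD family on ω such that Ψ(𝒜) is almost compact (a Mrówka family), and let X be obtained from Ψ(𝒜) by replacing each isolated point by a Cantor set. Then X is almost compact: of any two disjoint zero-sets of X, at least one is compact. -/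
open Set

/-- A MAD family: a maximal almost disjoint family on `ω`. -/
def MadFamily (𝒜 : Set (Set ℕ)) : Prop :=
  AlmostDisjointFamily 𝒜 ∧ ∀ S : Set ℕ, S.Infinite → ∃ A ∈ 𝒜, (S ∩ A).Infinite

namespace Stmt13

open TopologicalSpace Filter Topology

variable (𝒜 : Set (Set ℕ))

/-- Basic `U`-sets of the Ψ-space. -/
def UPsi (A : ↥𝒜) (n : ℕ) : Set (PsiSpace 𝒜) :=
  insert (Sum.inr A) (Sum.inl '' {m | m ∈ (A : Set ℕ) ∧ n ≤ m})

/-- Generating family of the Ψ-space topology. -/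
def genPsi : Set (Set (PsiSpace 𝒜)) :=
  {s | ∃ n : ℕ, s = {Sum.inl n}} ∪
    {s | ∃ (A : ↥𝒜) (n : ℕ),
      s = insert (Sum.inr A) (Sum.inl '' {m | m ∈ (A : Set ℕ) ∧ n ≤ m})}

/-- Basic product sets of `X`. -/
def BX (n : ℕ) (C : Set CantorK) : Set (PsiX 𝒜) := Sum.inl '' ({n} ×ˢ C)

/-- Basic `U`-sets of `X`. -/
def UXs (A : ↥𝒜) (n : ℕ) : Set (PsiX 𝒜) :=
  insert (Sum.inr A) (Sum.inl '' {p : ℕ × CantorK | p.1 ∈ (A : Set ℕ) ∧ n ≤ p.1})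

/-- Generating family of the `X` topology. -/
def genX : Set (Set (PsiX 𝒜)) :=
  {s | ∃ (n : ℕ) (C : Set CantorK), IsOpen C ∧ s = Sum.inl '' ({n} ×ˢ C)} ∪
    {s | ∃ (A : ↥𝒜) (n : ℕ),
      s = insert (Sum.inr A)
        (Sum.inl '' {p : ℕ × CantorK | p.1 ∈ (A : Set ℕ) ∧ n ≤ p.1})}

variable {𝒜}

lemma UPsi_mem_genPsi (A : ↥𝒜) (n : ℕ) : UPsi 𝒜 A n ∈ genPsi 𝒜 := Or.inr ⟨A, n, rfl⟩

lemma singleton_mem_genPsi (n : ℕ) : ({Sum.inl n} : Set (PsiSpace 𝒜)) ∈ genPsi 𝒜 :=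
  Or.inl ⟨n, rfl⟩

lemma BX_mem_genX {C : Set CantorK} (hC : IsOpen C) (n : ℕ) : BX 𝒜 n C ∈ genX 𝒜 :=
  Or.inl ⟨n, C, hC, rfl⟩

lemma UXs_mem_genX (A : ↥𝒜) (n : ℕ) : UXs 𝒜 A n ∈ genX 𝒜 := Or.inr ⟨A, n, rfl⟩

lemma mem_UPsi_iff {A : ↥𝒜} {n : ℕ} {x : PsiSpace 𝒜} :
    x ∈ UPsi 𝒜 A n ↔ x = Sum.inr A ∨ ∃ m, m ∈ (A : Set ℕ) ∧ n ≤ m ∧ x = Sum.inl m := by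
  simp only [UPsi, mem_insert_iff, mem_image, mem_setOf_eq]
  constructor
  · rintro (h | ⟨m, ⟨h1, h2⟩, rfl⟩)
    · exact Or.inl h
    · exact Or.inr ⟨m, h1, h2, rfl⟩
  · rintro (h | ⟨m, h1, h2, rfl⟩)
    · exact Or.inl h
    · exact Or.inr ⟨m, ⟨h1, h2⟩, rfl⟩

lemma mem_UXs_iff {A : ↥𝒜} {n : ℕ} {x : PsiX 𝒜} :
    x ∈ UXs 𝒜 A n ↔ x = Sum.inr A ∨
      ∃ p : ℕ × CantorK, p.1 ∈ (A : Set ℕ) ∧ n ≤ p.1 ∧ x = Sum.inl p := by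
  simp only [UXs, mem_insert_iff, mem_image, mem_setOf_eq]
  constructor
  · rintro (h | ⟨p, ⟨h1, h2⟩, rfl⟩)
    · exact Or.inl h
    · exact Or.inr ⟨p, h1, h2, rfl⟩
  · rintro (h | ⟨p, h1, h2, rfl⟩)
    · exact Or.inl h
    · exact Or.inr ⟨p, ⟨h1, h2⟩, rfl⟩

lemma basisPsi : IsTopologicalBasis (genPsi 𝒜) := by
  refine ⟨?_, ?_, rfl⟩
  · rintro t₁ h₁ t₂ h₂ x ⟨hx₁, hx₂⟩
    match x with
    | Sum.inl k =>
      refine ⟨{Sum.inl k}, singleton_mem_genPsi k, rfl, ?_⟩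
      rintro y hy
      rcases hy with rfl
      exact ⟨hx₁, hx₂⟩
    | Sum.inr B =>
      have get : ∀ t ∈ genPsi 𝒜, (Sum.inr B : PsiSpace 𝒜) ∈ t →
          ∃ n : ℕ, t = UPsi 𝒜 B n := by
        rintro t (⟨n, rfl⟩ | ⟨A, n, rfl⟩) ht
        · exact (Sum.inr_ne_inl ht).elim
        · rcases (mem_UPsi_iff).1 ht with h | ⟨m, _, _, h⟩
          · obtain rfl : B = A := Sum.inr.inj h
            exact ⟨n, rfl⟩
          · simp at h
      obtain ⟨n₁, rfl⟩ := get t₁ h₁ hx₁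
      obtain ⟨n₂, rfl⟩ := get t₂ h₂ hx₂
      refine ⟨UPsi 𝒜 B (max n₁ n₂), UPsi_mem_genPsi B _, Or.inl rfl, ?_⟩
      rintro y hy
      rcases mem_UPsi_iff.1 hy with rfl | ⟨m, hmA, hmn, rfl⟩
      · exact ⟨Or.inl rfl, Or.inl rfl⟩
      · exact ⟨mem_UPsi_iff.2 (Or.inr ⟨m, hmA, le_trans (le_max_left _ _) hmn, rfl⟩),
          mem_UPsi_iff.2 (Or.inr ⟨m, hmA, le_trans (le_max_right _ _) hmn, rfl⟩)⟩
  · apply eq_univ_of_forall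
    rintro (n | A)
    · exact ⟨{Sum.inl n}, singleton_mem_genPsi n, rfl⟩
    · exact ⟨UPsi 𝒜 A 0, UPsi_mem_genPsi A 0, Or.inl rfl⟩

lemma mem_BX_iff {n : ℕ} {C : Set CantorK} {x : PsiX 𝒜} :
    x ∈ BX 𝒜 n C ↔ ∃ c ∈ C, x = Sum.inl (n, c) := by
  simp only [BX, mem_image, mem_prod, mem_singleton_iff]
  constructor
  · rintro ⟨⟨m, c⟩, ⟨rfl, hc⟩, rfl⟩
    exact ⟨c, hc, rfl⟩
  · rintro ⟨c, hc, rfl⟩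
    exact ⟨(n, c), ⟨rfl, hc⟩, rfl⟩

lemma genX_inr {t : Set (PsiX 𝒜)} (ht : t ∈ genX 𝒜) {B : ↥𝒜}
    (hB : Sum.inr B ∈ t) : ∃ n : ℕ, t = UXs 𝒜 B n := by
  rcases ht with ⟨n, C, hC, rfl⟩ | ⟨A, n, rfl⟩
  · rcases mem_BX_iff.1 hB with ⟨c, _, h⟩
    simp at h
  · rcases mem_UXs_iff.1 hB with h | ⟨p, _, _, h⟩
    · obtain rfl : B = A := Sum.inr.inj h
      exact ⟨n, rfl⟩
    · simp at h

lemma genX_inl {t : Set (PsiX 𝒜)} (ht : t ∈ genX 𝒜) {p : ℕ × CantorK}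
    (hp : Sum.inl p ∈ t) : ∃ C : Set CantorK, IsOpen C ∧ p.2 ∈ C ∧ BX 𝒜 p.1 C ⊆ t := by
  rcases ht with ⟨n, C, hC, rfl⟩ | ⟨A, n, rfl⟩
  · rcases mem_BX_iff.1 hp with ⟨c, hc, h⟩
    obtain rfl : p = (n, c) := Sum.inl.inj h
    exact ⟨C, hC, hc, subset_rfl⟩
  · rcases mem_UXs_iff.1 hp with h | ⟨q, hq1, hq2, h⟩
    · simp at h
    · obtain rfl : p = q := Sum.inl.inj h
      refine ⟨univ, isOpen_univ, mem_univ _, ?_⟩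
      rintro y hy
      rcases mem_BX_iff.1 hy with ⟨c, _, rfl⟩
      exact mem_UXs_iff.2 (Or.inr ⟨(p.1, c), hq1, hq2, rfl⟩)

lemma basisX : IsTopologicalBasis (genX 𝒜) := by
  refine ⟨?_, ?_, rfl⟩
  · rintro t₁ h₁ t₂ h₂ x ⟨hx₁, hx₂⟩
    match x with
    | Sum.inl p =>
      obtain ⟨C₁, hC₁, hp₁, hs₁⟩ := genX_inl h₁ hx₁
      obtain ⟨C₂, hC₂, hp₂, hs₂⟩ := genX_inl h₂ hx₂
      refine ⟨BX 𝒜 p.1 (C₁ ∩ C₂), BX_mem_genX (hC₁.inter hC₂) _,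
        mem_BX_iff.2 ⟨p.2, ⟨hp₁, hp₂⟩, by rfl⟩, ?_⟩
      rintro y hy
      rcases mem_BX_iff.1 hy with ⟨c, ⟨hc₁, hc₂⟩, rfl⟩
      exact ⟨hs₁ (mem_BX_iff.2 ⟨c, hc₁, rfl⟩), hs₂ (mem_BX_iff.2 ⟨c, hc₂, rfl⟩)⟩
    | Sum.inr B =>
      obtain ⟨n₁, rfl⟩ := genX_inr h₁ hx₁
      obtain ⟨n₂, rfl⟩ := genX_inr h₂ hx₂
      refine ⟨UXs 𝒜 B (max n₁ n₂), UXs_mem_genX B _, Or.inl rfl, ?_⟩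
      rintro y hy
      rcases mem_UXs_iff.1 hy with rfl | ⟨q, hq1, hq2, rfl⟩
      · exact ⟨Or.inl rfl, Or.inl rfl⟩
      · exact ⟨mem_UXs_iff.2 (Or.inr ⟨q, hq1, le_trans (le_max_left _ _) hq2, rfl⟩),
          mem_UXs_iff.2 (Or.inr ⟨q, hq1, le_trans (le_max_right _ _) hq2, rfl⟩)⟩
  · apply eq_univ_of_forall
    rintro (p | A)
    · exact ⟨BX 𝒜 p.1 univ, BX_mem_genX isOpen_univ _, mem_BX_iff.2 ⟨p.2, mem_univ _, by rfl⟩⟩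
    · exact ⟨UXs 𝒜 A 0, UXs_mem_genX A 0, Or.inl rfl⟩

lemma isOpen_UPsi (A : ↥𝒜) (n : ℕ) : IsOpen (UPsi 𝒜 A n) :=
  basisPsi.isOpen (UPsi_mem_genPsi A n)

lemma isOpen_singleton_inl (n : ℕ) : IsOpen ({Sum.inl n} : Set (PsiSpace 𝒜)) :=
  basisPsi.isOpen (singleton_mem_genPsi n)

lemma isOpen_BX {C : Set CantorK} (hC : IsOpen C) (n : ℕ) : IsOpen (BX 𝒜 n C) :=
  basisX.isOpen (BX_mem_genX hC n)

lemma isOpen_UXs (A : ↥𝒜) (n : ℕ) : IsOpen (UXs 𝒜 A n) :=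
  basisX.isOpen (UXs_mem_genX A n)

lemma collapse_inl (p : ℕ × CantorK) :
    psiCollapse 𝒜 (Sum.inl p) = Sum.inl p.1 := rfl

lemma collapse_inr (A : ↥𝒜) : psiCollapse 𝒜 (Sum.inr A) = Sum.inr A := rfl

lemma collapse_preimage_singleton (n : ℕ) :
    psiCollapse 𝒜 ⁻¹' {Sum.inl n} = BX 𝒜 n univ := by
  ext x
  cases x with
  | inl p =>
    refine Iff.trans (Iff.rfl : _ ↔ (Sum.inl p.1 : PsiSpace 𝒜) = Sum.inl n) (Iff.trans ?_ mem_BX_iff.symm)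
    constructor
    · intro h
      obtain rfl : p.1 = n := Sum.inl.inj h
      exact ⟨p.2, mem_univ _, rfl⟩
    · rintro ⟨c, _, hc⟩
      obtain rfl : p = (n, c) := Sum.inl.inj hc
      rfl
  | inr A => exact iff_of_false (fun h => Sum.inr_ne_inl (show (Sum.inr A : PsiSpace 𝒜) = Sum.inl n from h)) (fun h => by obtain ⟨c, _, hc⟩ := mem_BX_iff.1 h; exact Sum.inr_ne_inl hc)

lemma collapse_preimage_UPsi (A : ↥𝒜) (n : ℕ) :
    psiCollapse 𝒜 ⁻¹' UPsi 𝒜 A n = UXs 𝒜 A n := by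
  ext x
  cases x with
  | inl p =>
    refine Iff.trans (mem_UPsi_iff (x := (Sum.inl p.1 : PsiSpace 𝒜))) (Iff.trans ?_ (mem_UXs_iff (x := (Sum.inl p : PsiX 𝒜))).symm)
    constructor
    · rintro (h | ⟨m, h1, h2, h3⟩)
      · simp at h
      · obtain rfl : p.1 = m := Sum.inl.inj h3
        exact Or.inr ⟨p, h1, h2, rfl⟩
    · rintro (h | ⟨q, h1, h2, h3⟩)
      · simp at h
      · obtain rfl : p = q := Sum.inl.inj h3
        exact Or.inr ⟨p.1, h1, h2, rfl⟩
  | inr B =>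
    refine Iff.trans (mem_UPsi_iff (x := (Sum.inr B : PsiSpace 𝒜))) (Iff.trans ?_ (mem_UXs_iff (x := (Sum.inr B : PsiX 𝒜))).symm)
    constructor
    · rintro (h | ⟨m, _, _, h⟩)
      · obtain rfl : B = A := Sum.inr.inj h
        exact Or.inl rfl
      · simp at h
    · rintro (h | ⟨q, _, _, h⟩)
      · obtain rfl : B = A := Sum.inr.inj h
        exact Or.inl rfl
      · simp at h

lemma continuous_collapse : Continuous (psiCollapse 𝒜) := by
  rw [basisPsi.continuous_iff]
  rintro s (⟨n, rfl⟩ | ⟨A, n, rfl⟩)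
  · rw [collapse_preimage_singleton]
    exact isOpen_BX isOpen_univ n
  · rw [show insert (Sum.inr A) (Sum.inl '' {m | m ∈ (A : Set ℕ) ∧ n ≤ m}) = UPsi 𝒜 A n from rfl,
      collapse_preimage_UPsi]
    exact isOpen_UXs A n

/-- The embedding of the `n`-th Cantor fiber into `X`. -/
def fiberMap (n : ℕ) : CantorK → PsiX 𝒜 := fun c => Sum.inl (n, c)

lemma continuous_fiberMap (n : ℕ) : Continuous (fiberMap (𝒜 := 𝒜) n) := by
  rw [basisX.continuous_iff]
  rintro s (⟨m, C, hC, rfl⟩ | ⟨A, m, rfl⟩)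
  · by_cases h : m = n
    · subst h
      have : fiberMap (𝒜 := 𝒜) m ⁻¹' (Sum.inl '' ({m} ×ˢ C)) = C := by
        ext c
        simp only [fiberMap, mem_preimage]
        refine Iff.trans (mem_BX_iff (x := (Sum.inl (m, c) : PsiX 𝒜)) (C := C)) ?_
        constructor
        · rintro ⟨c', hc', h⟩
          obtain rfl : c = c' := (Prod.ext_iff.1 (Sum.inl.inj h)).2
          exact hc'
        · intro hc
          exact ⟨c, hc, rfl⟩
      exact (congrArg (fun s : Set CantorK => IsOpen s) this).mpr hC
    · have : fiberMap (𝒜 := 𝒜) n ⁻¹' (Sum.inl '' ({m} ×ˢ C)) = ∅ := by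
        ext c
        simp only [fiberMap, mem_preimage, mem_empty_iff_false, iff_false]
        refine (not_congr (mem_BX_iff (x := (Sum.inl (n, c) : PsiX 𝒜)) (C := C))).2 ?_
        rintro ⟨c', _, hc⟩
        exact h (congrArg Prod.fst (Sum.inl.inj hc)).symm
      exact (congrArg (fun s : Set CantorK => IsOpen s) this).mpr isOpen_empty
  · by_cases h : n ∈ (A : Set ℕ) ∧ m ≤ n
    · have : fiberMap (𝒜 := 𝒜) n ⁻¹' (UXs 𝒜 A m) = univ := by
        apply eq_univ_of_forall
        intro c
        exact mem_UXs_iff.2 (Or.inr ⟨(n, c), h.1, h.2, rfl⟩)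
      rw [show insert (Sum.inr A) (Sum.inl '' {p : ℕ × CantorK | p.1 ∈ (A : Set ℕ) ∧ m ≤ p.1})
        = UXs 𝒜 A m from rfl, this]
      exact isOpen_univ
    · have : fiberMap (𝒜 := 𝒜) n ⁻¹' (UXs 𝒜 A m) = ∅ := by
        ext c
        simp only [fiberMap, mem_preimage, mem_empty_iff_false, iff_false, mem_UXs_iff]
        refine (not_congr (mem_UXs_iff (x := (Sum.inl (n, c) : PsiX 𝒜)))).2 ?_
        rintro (hc | ⟨q, hq1, hq2, hq⟩)
        · simp at hc
        · obtain rfl : (n, c) = q := Sum.inl.inj hq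
          exact h ⟨hq1, hq2⟩
      rw [show insert (Sum.inr A) (Sum.inl '' {p : ℕ × CantorK | p.1 ∈ (A : Set ℕ) ∧ m ≤ p.1})
        = UXs 𝒜 A m from rfl, this]
      exact isOpen_empty

lemma isCompact_BX_univ (n : ℕ) : IsCompact (BX 𝒜 n univ) := by
  have : BX 𝒜 n univ = range (fiberMap (𝒜 := 𝒜) n) := by
    ext x
    rw [mem_BX_iff]
    constructor
    · rintro ⟨c, _, rfl⟩
      exact ⟨c, rfl⟩
    · rintro ⟨c, rfl⟩
      exact ⟨c, mem_univ _, rfl⟩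
  rw [this]
  exact isCompact_range (continuous_fiberMap n)

lemma genPsi_inr {t : Set (PsiSpace 𝒜)} (ht : t ∈ genPsi 𝒜) {B : ↥𝒜}
    (hB : Sum.inr B ∈ t) : ∃ n : ℕ, t = UPsi 𝒜 B n := by
  rcases ht with ⟨n, rfl⟩ | ⟨A, n, rfl⟩
  · exact (Sum.inr_ne_inl hB).elim
  · rcases (mem_UPsi_iff (𝒜 := 𝒜)).1 hB with h | ⟨m, _, _, h⟩
    · obtain rfl : B = A := Sum.inr.inj h
      exact ⟨n, rfl⟩
    · simp at h

lemma collapse_fiber_inr (A : ↥𝒜) :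
    psiCollapse 𝒜 ⁻¹' {Sum.inr A} = {Sum.inr A} := by
  ext x
  cases x with
  | inl p => exact iff_of_false (fun h => Sum.inl_ne_inr (show (Sum.inl p.1 : PsiSpace 𝒜) = Sum.inr A from h)) (fun h => Sum.inl_ne_inr (show (Sum.inl p : PsiX 𝒜) = Sum.inr A from h))
  | inr B =>
    show (Sum.inr B : PsiSpace 𝒜) = Sum.inr A ↔ (Sum.inr B : PsiX 𝒜) = Sum.inr A
    constructor
    · intro h
      obtain rfl : B = A := Sum.inr.inj h
      rfl
    · intro h
      obtain rfl : B = A := Sum.inr.inj h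
      rfl

lemma isClosedMap_collapse : IsClosedMap (psiCollapse 𝒜) := by
  intro C hC
  rw [← isOpen_compl_iff, isOpen_iff_forall_mem_open]
  rintro (n | A) hy
  · refine ⟨{Sum.inl n}, ?_, isOpen_singleton_inl n, rfl⟩
    rintro z rfl
    exact hy
  · have hA : (Sum.inr A : PsiX 𝒜) ∈ Cᶜ := by
      intro h
      exact hy ⟨Sum.inr A, h, rfl⟩
    obtain ⟨t, ht, hxt, hts⟩ :=
      basisX.exists_subset_of_mem_open hA hC.isOpen_compl
    obtain ⟨m, rfl⟩ := genX_inr ht hxt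
    refine ⟨UPsi 𝒜 A m, ?_, isOpen_UPsi A m, Or.inl rfl⟩
    rintro z hz ⟨x, hxC, rfl⟩
    have : x ∈ UXs 𝒜 A m := by
      rw [← collapse_preimage_UPsi]
      exact hz
    exact (hts this) hxC

lemma isProperMap_collapse : IsProperMap (psiCollapse 𝒜) := by
  rw [isProperMap_iff_isClosedMap_and_compact_fibers]
  refine ⟨continuous_collapse, isClosedMap_collapse, ?_⟩
  rintro (n | A)
  · refine (congrArg (fun s : Set (PsiX 𝒜) => IsCompact s) (collapse_preimage_singleton n)).mpr ?_
    exact isCompact_BX_univ n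
  · refine (congrArg (fun s : Set (PsiX 𝒜) => IsCompact s) (collapse_fiber_inr A)).mpr ?_
    exact isCompact_singleton

lemma continuousAt_inl {g : PsiSpace 𝒜 → ℝ} (n : ℕ) : ContinuousAt g (Sum.inl n) := by
  have h1 : @nhds (PsiSpace 𝒜) _ (Sum.inl n) = pure (Sum.inl n) :=
    (isOpen_singleton_iff_nhds_eq_pure _).1 (isOpen_singleton_inl n)
  unfold ContinuousAt; rw [h1]
  exact tendsto_pure_nhds g _

/-- The fiberwise infimum of `|ξ|`. -/
noncomputable def eta (ξ : PsiX 𝒜 → ℝ) : PsiSpace 𝒜 → ℝ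
  | Sum.inl n => sInf (range fun c : CantorK => |ξ (Sum.inl (n, c))|)
  | Sum.inr A => |ξ (Sum.inr A)|

lemma rangeNe (ξ : PsiX 𝒜 → ℝ) (n : ℕ) :
    (range fun c : CantorK => |ξ (Sum.inl (n, c))|).Nonempty :=
  ⟨_, ⟨(fun _ => false), rfl⟩⟩

lemma rangeBdd (ξ : PsiX 𝒜 → ℝ) (n : ℕ) :
    BddBelow (range fun c : CantorK => |ξ (Sum.inl (n, c))|) := by
  refine ⟨0, ?_⟩
  rintro r ⟨c, rfl⟩
  exact abs_nonneg _

lemma continuous_eta {ξ : PsiX 𝒜 → ℝ} (hξ : Continuous ξ) : Continuous (eta ξ) := by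
  rw [continuous_iff_continuousAt]
  rintro (n | A)
  · exact continuousAt_inl n
  · unfold ContinuousAt; rw [Metric.tendsto_nhds]
    intro ε hε
    have hball : ξ ⁻¹' Metric.ball (ξ (Sum.inr A)) (ε/2) ∈ @nhds (PsiX 𝒜) _ (Sum.inr A) :=
      hξ.continuousAt.preimage_mem_nhds (Metric.ball_mem_nhds _ (by positivity))
    obtain ⟨V, hVsub, hVopen, hVmem⟩ := mem_nhds_iff.1 hball
    obtain ⟨t, ht, hxt, hts⟩ := basisX.exists_subset_of_mem_open hVmem hVopen
    obtain ⟨m, rfl⟩ := genX_inr ht hxt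
    refine Filter.eventually_iff_exists_mem.2
      ⟨UPsi 𝒜 A m, (isOpen_UPsi A m).mem_nhds (Or.inl rfl), ?_⟩
    intro y hy
    have key : ∀ x : PsiX 𝒜, x ∈ UXs 𝒜 A m → |ξ x - ξ (Sum.inr A)| < ε/2 := by
      intro x hx
      have h2 := hVsub (hts hx)
      rw [mem_preimage, Metric.mem_ball, Real.dist_eq] at h2
      exact h2
    rcases mem_UPsi_iff.1 hy with rfl | ⟨k, hkA, hkm, rfl⟩
    · simpa using hε
    · rw [Real.dist_eq]
      have hub : ∀ r ∈ range (fun c : CantorK => |ξ (Sum.inl (k, c))|),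
          abs (r - |ξ (Sum.inr A)|) ≤ ε/2 := by
        rintro r ⟨c, rfl⟩
        have h := key (Sum.inl (k, c)) (mem_UXs_iff.2 (Or.inr ⟨(k, c), hkA, hkm, rfl⟩))
        exact le_trans (abs_abs_sub_abs_le_abs_sub _ _) (le_of_lt h)
      have hne := rangeNe ξ k
      have hbdd := rangeBdd ξ k
      obtain ⟨r₀, hr₀⟩ := hne
      have h1 : sInf (range fun c : CantorK => |ξ (Sum.inl (k, c))|)
          ≤ |ξ (Sum.inr A)| + ε/2 := by
        refine csInf_le_of_le hbdd hr₀ ?_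
        have := hub r₀ hr₀
        have := (abs_le.1 this).2
        linarith
      have h2 : |ξ (Sum.inr A)| - ε/2
          ≤ sInf (range fun c : CantorK => |ξ (Sum.inl (k, c))|) := by
        refine le_csInf ⟨r₀, hr₀⟩ ?_
        intro r hr
        have := (abs_le.1 (hub r hr)).1
        linarith
      show |eta ξ (Sum.inl k) - eta ξ (Sum.inr A)| < ε
      have he1 : eta ξ (Sum.inl k)
          = sInf (range fun c : CantorK => |ξ (Sum.inl (k, c))|) := rfl
      have he2 : eta ξ (Sum.inr A) = |ξ (Sum.inr A)| := rfl
      rw [he1, he2]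
      rw [abs_sub_lt_iff]
      constructor <;> linarith

lemma image_zeroSet {ξ : PsiX 𝒜 → ℝ} (hξ : Continuous ξ) :
    psiCollapse 𝒜 '' (ξ ⁻¹' {0}) = eta ξ ⁻¹' {0} := by
  ext y
  simp only [mem_preimage, mem_singleton_iff]
  constructor
  · rintro ⟨x, hx, rfl⟩
    have hx0 : ξ x = 0 := hx
    cases x with
    | inl p =>
      show eta ξ (Sum.inl p.1) = 0
      have he1 : eta ξ (Sum.inl p.1)
          = sInf (range fun c : CantorK => |ξ (Sum.inl (p.1, c))|) := rfl
      rw [he1]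
      have h1 : (0:ℝ) ∈ range fun c : CantorK => |ξ (Sum.inl (p.1, c))| := by
        refine ⟨p.2, ?_⟩
        show |ξ (Sum.inl p)| = 0
        rw [hx0, abs_zero]
      refine le_antisymm (csInf_le (rangeBdd ξ p.1) h1) ?_
      refine le_csInf (rangeNe ξ p.1) ?_
      rintro r ⟨c, rfl⟩
      exact abs_nonneg _
    | inr A =>
      show |ξ (Sum.inr A)| = 0
      rw [hx0, abs_zero]
  · intro hy
    cases y with
    | inl n =>
      have hcont : ContinuousOn (fun c : CantorK => |ξ (Sum.inl (n, c))|) univ :=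
        ((hξ.comp (continuous_fiberMap n)).abs).continuousOn
      obtain ⟨c, -, hc⟩ := isCompact_univ.exists_isMinOn ⟨(fun _ => false), mem_univ _⟩ hcont
      have hlb : ∀ r ∈ range fun c' : CantorK => |ξ (Sum.inl (n, c'))|,
          |ξ (Sum.inl (n, c))| ≤ r := by
        rintro r ⟨c', rfl⟩
        exact hc (mem_univ c')
      have h1 : |ξ (Sum.inl (n, c))|
          ≤ sInf (range fun c' : CantorK => |ξ (Sum.inl (n, c'))|) :=
        le_csInf (rangeNe ξ n) hlb
      have h2 : eta ξ (Sum.inl n)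
          = sInf (range fun c' : CantorK => |ξ (Sum.inl (n, c'))|) := rfl
      rw [h2] at hy
      have h3 : |ξ (Sum.inl (n, c))| = 0 :=
        le_antisymm (hy ▸ h1) (abs_nonneg _)
      exact ⟨Sum.inl (n, c), abs_eq_zero.1 h3, rfl⟩
    | inr A =>
      have h : ξ (Sum.inr A) = 0 := abs_eq_zero.1 hy
      exact ⟨Sum.inr A, h, rfl⟩

open Classical in
/-- Indicator of a single point. -/
noncomputable def chi (y₀ : PsiSpace 𝒜) : PsiSpace 𝒜 → ℝ := fun y => if y = y₀ then 1 else 0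

lemma chi_nonneg (y₀ y : PsiSpace 𝒜) : 0 ≤ chi y₀ y := by
  by_cases h : y = y₀ <;> simp [chi, h]

lemma chi_eq_zero_iff {y₀ y : PsiSpace 𝒜} : chi y₀ y = 0 ↔ y ≠ y₀ := by
  by_cases h : y = y₀ <;> simp [chi, h]

lemma continuous_chi_inl (n : ℕ) : Continuous (chi (Sum.inl n : PsiSpace 𝒜)) := by
  rw [continuous_iff_continuousAt]
  rintro (m | A)
  · exact continuousAt_inl m
  · have hev : chi (Sum.inl n) =ᶠ[@nhds (PsiSpace 𝒜) _ (Sum.inr A)] fun _ => (0:ℝ) := by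
      refine Filter.eventuallyEq_of_mem ((isOpen_UPsi A (n+1)).mem_nhds (Or.inl rfl)) ?_
      intro y hy
      rcases mem_UPsi_iff.1 hy with rfl | ⟨k, hkA, hkn, rfl⟩
      · exact chi_eq_zero_iff.2 Sum.inr_ne_inl
      · refine chi_eq_zero_iff.2 ?_
        intro h
        obtain rfl : k = n := Sum.inl.inj h
        omega
    exact continuousAt_const.congr hev.symm

lemma isZeroSet_diff {ξ : PsiX 𝒜 → ℝ} (hξ : Continuous ξ) {D : Set (PsiSpace 𝒜)}
    (hD : D.Finite) (hDl : D ⊆ range Sum.inl) :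
    IsZeroSet (eta ξ ⁻¹' {0} \ D) := by
  classical
  refine ⟨fun y => |eta ξ y| + ∑ d ∈ hD.toFinset, chi d y, ?_, ?_⟩
  · refine ((continuous_eta hξ).abs).add (continuous_finset_sum _ ?_)
    intro d hd
    obtain ⟨n, rfl⟩ := hDl (hD.mem_toFinset.1 hd)
    exact continuous_chi_inl n
  · ext y
    simp only [mem_diff, mem_preimage, mem_singleton_iff]
    have hnn : 0 ≤ ∑ d ∈ hD.toFinset, chi d y :=
      Finset.sum_nonneg fun d _ => chi_nonneg d y
    constructor
    · rintro ⟨h1, h2⟩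
      have hs : ∑ d ∈ hD.toFinset, chi d y = 0 :=
        Finset.sum_eq_zero fun d hd =>
          chi_eq_zero_iff.2 (fun h => h2 (h ▸ hD.mem_toFinset.1 hd))
      show |eta ξ y| + _ = 0
      rw [h1, abs_zero, hs, add_zero]
    · intro h
      have h0 : |eta ξ y| = 0 ∧ ∑ d ∈ hD.toFinset, chi d y = 0 :=
        (add_eq_zero_iff_of_nonneg (abs_nonneg _) hnn).1 h
      refine ⟨abs_eq_zero.1 h0.1, ?_⟩
      intro hyD
      have hc := (Finset.sum_eq_zero_iff_of_nonneg (fun d _ => chi_nonneg d y)).1 h0.2 y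
        (hD.mem_toFinset.2 hyD)
      rw [chi_eq_zero_iff] at hc
      exact hc rfl

lemma inter_finite (hmad : MadFamily 𝒜) {W₀ W₁ : Set (PsiSpace 𝒜)}
    (hW : IsClosed (W₀ ∩ W₁)) (hsub : W₀ ∩ W₁ ⊆ range Sum.inl) :
    (W₀ ∩ W₁).Finite := by
  by_contra hinf
  rw [← Set.not_infinite, not_not] at hinf
  have hS : (Sum.inl ⁻¹' (W₀ ∩ W₁) : Set ℕ).Infinite := by
    intro hfin
    refine hinf (Finite.subset (hfin.image Sum.inl) ?_)
    intro y hy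
    obtain ⟨n, rfl⟩ := hsub hy
    exact mem_image_of_mem _ hy
  obtain ⟨A, hA, hAinf⟩ := hmad.2 _ hS
  have hmem : Sum.inr (⟨A, hA⟩ : ↥𝒜) ∈ W₀ ∩ W₁ := by
    by_contra hx
    have hx' : Sum.inr (⟨A, hA⟩ : ↥𝒜) ∈ (W₀ ∩ W₁)ᶜ := hx
    obtain ⟨t, ht, hxt, hts⟩ :=
      basisPsi.exists_subset_of_mem_open hx' hW.isOpen_compl
    obtain ⟨m, rfl⟩ := genPsi_inr ht hxt
    obtain ⟨k, hk, hkm⟩ := hAinf.exists_gt m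
    exact hts (mem_UPsi_iff.2 (Or.inr ⟨k, hk.2, le_of_lt hkm, rfl⟩)) hk.1
  obtain ⟨n, hn⟩ := hsub hmem
  simp at hn

lemma compact_side {ξ : PsiX 𝒜 → ℝ} (hξ : Continuous ξ) {D : Set (PsiSpace 𝒜)}
    (hD : D.Finite) (hcmp : IsCompact (eta ξ ⁻¹' {0} \ D)) :
    IsCompact (ξ ⁻¹' {0}) := by
  have hK : IsCompact ((eta ξ ⁻¹' {0} \ D) ∪ D) := hcmp.union hD.isCompact
  have hpre : IsCompact (psiCollapse 𝒜 ⁻¹' ((eta ξ ⁻¹' {0} \ D) ∪ D)) :=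
    isProperMap_collapse.isCompact_preimage hK
  refine hpre.of_isClosed_subset (isClosed_singleton.preimage hξ) ?_
  intro x hx
  have hxm : psiCollapse 𝒜 x ∈ eta ξ ⁻¹' {0} := by
    rw [← image_zeroSet hξ]
    exact ⟨x, hx, rfl⟩
  by_cases hD' : psiCollapse 𝒜 x ∈ D
  · exact Or.inr hD'
  · exact Or.inl ⟨hxm, hD'⟩

end Stmt13

open Stmt13 in
/-- If `𝒜` is a Mrówka family (a MAD family whose Ψ-space is almost compact), then the
Cantor-set replacement `X` of `Ψ(𝒜)` is almost compact: of any two disjoint zero-sets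
of `X`, at least one is compact. -/
theorem stmt_13 (𝒜 : Set (Set ℕ)) (hmad : MadFamily 𝒜)
    (hac : ∀ Z₀ Z₁ : Set (PsiSpace 𝒜), IsZeroSet Z₀ → IsZeroSet Z₁ →
      Disjoint Z₀ Z₁ → IsCompact Z₀ ∨ IsCompact Z₁)
    (Z₀ Z₁ : Set (PsiX 𝒜)) (h₀ : IsZeroSet Z₀) (h₁ : IsZeroSet Z₁)
    (hdisj : Disjoint Z₀ Z₁) :
    IsCompact Z₀ ∨ IsCompact Z₁ := by
  classical
  obtain ⟨ξ₀, hc₀, rfl⟩ := h₀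
  obtain ⟨ξ₁, hc₁, rfl⟩ := h₁
  set D : Set (PsiSpace 𝒜) := (eta ξ₀ ⁻¹' {0}) ∩ (eta ξ₁ ⁻¹' {0}) with hDdef
  have hDl : D ⊆ Set.range Sum.inl := by
    rintro (n | A) hy
    · exact ⟨n, rfl⟩
    · exfalso
      have key : ∀ (ξ : PsiX 𝒜 → ℝ), Continuous ξ → eta ξ (Sum.inr A) = 0 →
          Sum.inr A ∈ ξ ⁻¹' {0} := by
        intro ξ hc hz
        have h0 : (Sum.inr A : PsiSpace 𝒜) ∈ psiCollapse 𝒜 '' (ξ ⁻¹' {0}) := by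
          rw [image_zeroSet hc]
          exact hz
        obtain ⟨x, hx, hxe⟩ := h0
        cases x with
        | inl p => simp [collapse_inl] at hxe
        | inr B =>
          obtain rfl : B = A := Sum.inr.inj hxe
          exact hx
      exact Set.disjoint_left.1 hdisj
        (key ξ₀ hc₀ hy.1) (key ξ₁ hc₁ hy.2)
  have hDcl : IsClosed D :=
    (isClosed_singleton.preimage (continuous_eta hc₀)).inter
      (isClosed_singleton.preimage (continuous_eta hc₁))
  have hDfin : D.Finite := inter_finite hmad hDcl hDl
  have hz0 : IsZeroSet ((eta ξ₀ ⁻¹' {0}) \ D) := isZeroSet_diff hc₀ hDfin hDl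
  have hz1 : IsZeroSet ((eta ξ₁ ⁻¹' {0}) \ D) := isZeroSet_diff hc₁ hDfin hDl
  have hdd : Disjoint ((eta ξ₀ ⁻¹' {0}) \ D) ((eta ξ₁ ⁻¹' {0}) \ D) := by
    rw [Set.disjoint_left]
    rintro y ⟨hy0, hyD⟩ ⟨hy1, -⟩
    exact hyD ⟨hy0, hy1⟩
  rcases hac _ _ hz0 hz1 hdd with h | h
  · exact Or.inl (compact_side hc₀ hDfin h)
  · exact Or.inr (compact_side hc₁ hDfin h)
end

section
/- Let X be a topological space that is locally 𝔠 and 𝔠-fair, and let κ ≤ 𝔠 be a regular cardinal such that the union of every strongly increasing κ-sequence of closed subsets of X is closed. If |X| > 𝔠, then for every subset A of X with |A| ≤ 𝔠 there exists a clopen set U ⊇ A with |U| = 𝔠 and Lindelöf number L(U) ≥ κ. -/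
open Set Cardinal

set_option linter.unusedSectionVars false

variable {X : Type} [TopologicalSpace X]

/-- auxiliary: one enlargement step -/
def stmtStep (nb : X → Set X) (pt : Set X → X) (S : Set X) : Set X :=
  S ∪ (⋃ x ∈ S, nb x) ∪ {pt S}

noncomputable def stmtF (nb : X → Set X) (pt : Set X → X) (A : Set X) (α : Ordinal.{0}) : Set X :=
  closure (A ∪ ⋃ β : Set.Iio α, stmtStep nb pt (stmtF nb pt A β.1))
termination_by α
decreasing_by exact β.2

theorem stmtF_def (nb : X → Set X) (pt : Set X → X) (A : Set X) (α : Ordinal.{0}) :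
    stmtF nb pt A α = closure (A ∪ ⋃ β : Set.Iio α, stmtStep nb pt (stmtF nb pt A β.1)) := by
  rw [stmtF]

theorem isClosed_stmtF (nb : X → Set X) (pt : Set X → X) (A : Set X) (α : Ordinal.{0}) :
    IsClosed (stmtF nb pt A α) := by
  rw [stmtF_def]; exact isClosed_closure

theorem subset_stmtF (nb : X → Set X) (pt : Set X → X) (A : Set X) (α : Ordinal.{0}) :
    A ⊆ stmtF nb pt A α := by
  rw [stmtF_def]; exact subset_closure.trans (closure_mono (subset_union_left))

theorem stmtStep_subset_stmtF (nb : X → Set X) (pt : Set X → X) (A : Set X)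
    {β α : Ordinal.{0}} (h : β < α) :
    stmtStep nb pt (stmtF nb pt A β) ⊆ stmtF nb pt A α := by
  rw [stmtF_def nb pt A α]
  refine subset_trans ?_ subset_closure
  intro x hx
  exact Or.inr (Set.mem_iUnion.2 ⟨⟨β, h⟩, hx⟩)

theorem stmtF_mono (nb : X → Set X) (pt : Set X → X) (A : Set X)
    {α γ : Ordinal.{0}} (h : α ≤ γ) :
    stmtF nb pt A α ⊆ stmtF nb pt A γ := by
  rw [stmtF_def nb pt A α, stmtF_def nb pt A γ]
  refine closure_mono (union_subset_union_right _ ?_)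
  intro x hx
  obtain ⟨β, hβ⟩ := Set.mem_iUnion.1 hx
  exact Set.mem_iUnion.2 ⟨⟨β.1, lt_of_lt_of_le β.2 h⟩, hβ⟩

theorem stmtF_subset_interior_succ {nb : X → Set X} (hnb : ∀ x, nb x ∈ nhds x)
    (pt : Set X → X) (A : Set X) (β : Ordinal.{0}) :
    stmtF nb pt A β ⊆ interior (stmtF nb pt A (β + 1)) := by
  have hlt : β < β + 1 := by
    rw [Ordinal.add_one_eq_succ]; exact Order.lt_succ β
  intro x hx
  rw [mem_interior_iff_mem_nhds]
  refine Filter.mem_of_superset (hnb x) ?_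
  refine subset_trans ?_ (stmtStep_subset_stmtF nb pt A hlt)
  intro y hy
  exact Or.inl (Or.inr (Set.mem_biUnion hx hy))

theorem stmtPt_mem_succ (nb : X → Set X) (pt : Set X → X) (A : Set X) (β : Ordinal.{0}) :
    pt (stmtF nb pt A β) ∈ stmtF nb pt A (β + 1) := by
  have hlt : β < β + 1 := by
    rw [Ordinal.add_one_eq_succ]; exact Order.lt_succ β
  exact stmtStep_subset_stmtF nb pt A hlt (Or.inr rfl)

theorem my_ciSup_le {ι : Type} {f : ι → Cardinal.{0}} {c : Cardinal.{0}}
    (h : ∀ i, f i ≤ c) : iSup f ≤ c := by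
  rcases isEmpty_or_nonempty ι with hι | hι
  · simp only [ciSup_of_empty, csSup_empty]
    exact bot_le
  · exact ciSup_le' h

theorem mk_stmtStep_le {nb : X → Set X} (hnbc : ∀ x, #(nb x) ≤ continuum)
    (pt : Set X → X) {S : Set X} (hS : #S ≤ continuum) :
    #(stmtStep nb pt S) ≤ continuum := by
  have h2 : #(⋃ x ∈ S, nb x : Set X) ≤ continuum := by
    refine (mk_biUnion_le _ _).trans ?_
    refine (mul_le_mul' hS (my_ciSup_le fun x : S => hnbc x)).trans
      (mul_eq_self aleph0_le_continuum).le
  have h3 : #({pt S} : Set X) ≤ continuum := by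
    rw [mk_singleton]
    exact (one_lt_aleph0.le.trans aleph0_le_continuum)
  calc #(stmtStep nb pt S) ≤ #(S ∪ ⋃ x ∈ S, nb x : Set X) + #({pt S} : Set X) :=
        mk_union_le _ _
    _ ≤ (#S + #(⋃ x ∈ S, nb x : Set X)) + #({pt S} : Set X) :=
        add_le_add_left (mk_union_le _ _) _
    _ ≤ (continuum + continuum) + continuum := by
        exact add_le_add (add_le_add hS h2) h3
    _ = continuum := by
        rw [add_eq_self aleph0_le_continuum, add_eq_self aleph0_le_continuum]

theorem iUnion_Iio_eq (α : Ordinal.{0}) (f : Ordinal.{0} → Set X) :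
    (⋃ β : Set.Iio α, f β.1) = ⋃ i : α.ToType, f ((Ordinal.ToType.mk (o := α)).symm i).1 := by
  ext x
  simp only [Set.mem_iUnion]
  constructor
  · rintro ⟨β, h⟩
    exact ⟨Ordinal.ToType.mk (o := α) β, by simpa using h⟩
  · rintro ⟨i, h⟩
    exact ⟨_, h⟩

theorem mk_stmtF {nb : X → Set X} (hnbc : ∀ x, #(nb x) ≤ continuum)
    (pt : Set X → X) {A : Set X}
    (hfair : ∀ S : Set X, #S = continuum → #(closure S) = continuum)
    (hA : #A = continuum) :
    ∀ α : Ordinal.{0}, α.card ≤ continuum → #(stmtF nb pt A α) = continuum := by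
  intro α
  induction α using Ordinal.induction with
  | h α ih =>
    intro hcard
    rw [stmtF_def]
    refine hfair _ (le_antisymm ?_ ?_)
    · refine (mk_union_le _ _).trans ?_
      have hW : #(⋃ β : Set.Iio α, stmtStep nb pt (stmtF nb pt A β.1) : Set X) ≤ continuum := by
        refine le_trans (mk_le_mk_of_subset
          (iUnion_Iio_eq α (fun β => stmtStep nb pt (stmtF nb pt A β))).subset) ?_
        refine (mk_iUnion_le _).trans ?_
        rw [Cardinal.mk_toType]
        have hb : ∀ i : α.ToType,
            #(stmtStep nb pt (stmtF nb pt A ((Ordinal.ToType.mk (o := α)).symm i).1)) ≤ continuum := by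
          intro i
          have hβ := ((Ordinal.ToType.mk (o := α)).symm i).2
          refine mk_stmtStep_le hnbc pt ?_
          exact (ih _ hβ ((Ordinal.card_le_card hβ.le).trans hcard)).le
        exact (mul_le_mul' hcard (my_ciSup_le hb)).trans (mul_eq_self aleph0_le_continuum).le
      calc #A + _ ≤ continuum + continuum := add_le_add hA.le hW
        _ = continuum := add_eq_self aleph0_le_continuum
    · rw [← hA]
      exact mk_le_mk_of_subset Set.subset_union_left

open Classical in
noncomputable def stmtPt {X : Type} (hne : Nonempty X) : Set X → X :=
  fun S => if h : Sᶜ.Nonempty then h.choose else hne.some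

theorem stmtPt_not_mem {X : Type} (hne : Nonempty X) {S : Set X} (h : Sᶜ.Nonempty) :
    stmtPt hne S ∉ S := by
  unfold stmtPt
  rw [dif_pos h]
  exact h.choose_spec

/-- The Lindelöf number of a subset: the least cardinal `λ` such that every open
cover has a subcover of cardinality `≤ λ`. -/
noncomputable def lindelofNumber {X : Type} [TopologicalSpace X] (s : Set X) : Cardinal :=
  sInf {κ | ∀ 𝒰 : Set (Set X), (∀ U ∈ 𝒰, IsOpen U) → s ⊆ ⋃₀ 𝒰 →
    ∃ 𝒱 ⊆ 𝒰, Cardinal.mk 𝒱 ≤ κ ∧ s ⊆ ⋃₀ 𝒱}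

/-- Let `X` be locally `𝔠` and `𝔠`-fair, and let `κ ≤ 𝔠` be a regular cardinal such
that the union of every strongly increasing `κ`-sequence of closed subsets of `X` is
closed. If `|X| > 𝔠`, then every `A ⊆ X` with `|A| ≤ 𝔠` is contained in a clopen set
`U` with `|U| = 𝔠` and `L(U) ≥ κ`. -/
theorem stmt_15 (X : Type) [TopologicalSpace X]
    (hloc : ∀ x : X, ∃ U ∈ nhds x, Cardinal.mk U ≤ Cardinal.continuum)
    (hfair : ∀ S : Set X, Cardinal.mk S = Cardinal.continuum →
      Cardinal.mk (closure S) = Cardinal.continuum)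
    (κ : Cardinal) (hκreg : κ.IsRegular) (hκc : κ ≤ Cardinal.continuum)
    (hclosed : ∀ F : Ordinal → Set X,
      (∀ α < κ.ord, IsClosed (F α)) →
      (∀ α < κ.ord, F α ⊆ interior (F (α + 1))) →
      IsClosed (⋃ α < κ.ord, F α))
    (hX : Cardinal.continuum < Cardinal.mk X)
    (A : Set X) (hA : Cardinal.mk A ≤ Cardinal.continuum) :
    ∃ U : Set X, IsClopen U ∧ A ⊆ U ∧ Cardinal.mk U = Cardinal.continuum ∧
      κ ≤ lindelofNumber U := by
  classical
  choose nb hnb hnbc using hloc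
  have hXne : Nonempty X := mk_ne_zero_iff.1 (lt_of_le_of_lt zero_le hX).ne'
  set pt := stmtPt hXne with hptdef
  have hpt : ∀ S : Set X, #S ≤ continuum → pt S ∉ S := by
    intro S hS
    refine stmtPt_not_mem hXne ?_
    rw [Set.nonempty_compl]
    intro h
    rw [h, mk_univ] at hS
    exact hX.not_ge hS
  -- enlarge A to cardinality continuum
  obtain ⟨B, hB⟩ : ∃ B : Set X, #B = continuum := le_mk_iff_exists_set.1 hX.le
  set A' := A ∪ B with hA'def
  have hA' : #A' = continuum := by
    refine le_antisymm ((mk_union_le _ _).trans ?_) ?_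
    · calc #A + #B ≤ continuum + continuum := add_le_add hA hB.le
        _ = continuum := add_eq_self aleph0_le_continuum
    · rw [← hB]; exact mk_le_mk_of_subset Set.subset_union_right
  set F := stmtF nb pt A' with hFdef
  have hord : Order.IsSuccLimit κ.ord := Cardinal.isSuccLimit_ord hκreg.aleph0_le
  have hsucc : ∀ α < κ.ord, α + 1 < κ.ord := by
    intro α h
    rw [Ordinal.add_one_eq_succ]
    exact hord.succ_lt h
  have hcard : ∀ α < κ.ord, #(F α) = continuum := by
    intro α hα
    exact mk_stmtF hnbc pt hfair hA' α ((Cardinal.lt_ord.1 hα).le.trans hκc)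
  set U := ⋃ α < κ.ord, F α with hUdef
  have hmemU : ∀ {α : Ordinal}, α < κ.ord → ∀ {x : X}, x ∈ F α → x ∈ U := by
    intro α hα x hx
    exact Set.mem_iUnion.2 ⟨α, Set.mem_iUnion.2 ⟨hα, hx⟩⟩
  have hUclosed : IsClosed U :=
    hclosed F (fun α _ => isClosed_stmtF nb pt A' α)
      (fun α _ => stmtF_subset_interior_succ hnb pt A' α)
  have hUopen : IsOpen U := by
    have hsub : U ⊆ interior U := by
      intro x hx
      simp only [U, Set.mem_iUnion] at hx
      obtain ⟨α, hα, hxα⟩ := hx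
      have h1 : x ∈ interior (F (α + 1)) := stmtF_subset_interior_succ hnb pt A' α hxα
      refine interior_mono ?_ h1
      intro y hy
      exact hmemU (hsucc α hα) hy
    have : interior U = U := subset_antisymm interior_subset hsub
    rw [← this]
    exact isOpen_interior
  have hAU : A ⊆ U := by
    intro x hx
    exact hmemU hord.pos (subset_stmtF nb pt A' 0 (Or.inl hx))
  have hUcard : #U = continuum := by
    refine le_antisymm ?_ ?_
    · have hsub : U ⊆ ⋃ i : κ.ord.ToType, F ((Ordinal.ToType.mk (o := κ.ord)).symm i).1 := by
        intro x hx
        simp only [U, Set.mem_iUnion] at hx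
        obtain ⟨α, hα, hxα⟩ := hx
        refine Set.mem_iUnion.2 ⟨Ordinal.ToType.mk (o := κ.ord) ⟨α, hα⟩, ?_⟩
        simpa using hxα
      refine (mk_le_mk_of_subset hsub).trans ?_
      refine (mk_iUnion_le _).trans ?_
      rw [Cardinal.mk_toType, Cardinal.card_ord]
      refine (mul_le_mul' hκc (my_ciSup_le fun i => ?_)).trans
        (mul_eq_self aleph0_le_continuum).le
      exact (hcard _ ((Ordinal.ToType.mk (o := κ.ord)).symm i).2).le
    · rw [← hcard 0 hord.pos]
      refine mk_le_mk_of_subset ?_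
      intro x hx
      exact hmemU hord.pos hx
  refine ⟨U, ⟨hUclosed, hUopen⟩, hAU, hUcard, ?_⟩
  -- Lindelöf number bound
  set 𝒰 : Set (Set X) := {V | ∃ α : Ordinal, α < κ.ord ∧ V = interior (F (α + 1))} with h𝒰def
  have hopen : ∀ V ∈ 𝒰, IsOpen V := by
    rintro V ⟨α, _, rfl⟩
    exact isOpen_interior
  have hcover : U ⊆ ⋃₀ 𝒰 := by
    intro x hx
    simp only [U, Set.mem_iUnion] at hx
    obtain ⟨α, hα, hxα⟩ := hx
    exact ⟨interior (F (α + 1)), ⟨α, hα, rfl⟩, stmtF_subset_interior_succ hnb pt A' α hxα⟩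
  have hSne : ({c | ∀ 𝒰' : Set (Set X), (∀ V ∈ 𝒰', IsOpen V) → U ⊆ ⋃₀ 𝒰' →
      ∃ 𝒱 ⊆ 𝒰', Cardinal.mk 𝒱 ≤ c ∧ U ⊆ ⋃₀ 𝒱} : Set Cardinal).Nonempty :=
    ⟨#(Set X), fun 𝒰' _ hc => ⟨𝒰', subset_rfl, mk_set_le _, hc⟩⟩
  refine le_csInf hSne ?_
  intro c hc
  by_contra hlt
  push_neg at hlt
  obtain ⟨𝒱, h𝒱sub, h𝒱card, h𝒱cov⟩ := hc 𝒰 hopen hcover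
  have hidx : ∀ V : 𝒱, ∃ α : Ordinal, α < κ.ord ∧ (V : Set X) = interior (F (α + 1)) :=
    fun V => h𝒱sub V.2
  choose idx hidx1 hidx2 using hidx
  have hcof : #𝒱 < κ.ord.cof := by
    rw [hκreg.cof_eq]
    exact lt_of_le_of_lt h𝒱card hlt
  have hγlt : (⨆ V : 𝒱, idx V + 1) < κ.ord :=
    Ordinal.iSup_lt_ord hcof fun V => hsucc _ (hidx1 V)
  set γ := ⨆ V : 𝒱, idx V + 1 with hγdef
  have hcovF : U ⊆ F γ := by
    refine h𝒱cov.trans ?_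
    rintro x ⟨V, hV, hxV⟩
    have hxV' : x ∈ ((⟨V, hV⟩ : 𝒱) : Set X) := hxV
    rw [hidx2 ⟨V, hV⟩] at hxV'
    exact stmtF_mono nb pt A' (Ordinal.le_iSup _ (⟨V, hV⟩ : 𝒱)) (interior_subset hxV')
  have hp1 : pt (F γ) ∈ F (γ + 1) := stmtPt_mem_succ nb pt A' γ
  have hp2 : pt (F γ) ∈ U := hmemU (hsucc γ hγlt) hp1
  have hp3 : pt (F γ) ∉ F γ := hpt _ (hcard γ hγlt).le
  exact hp3 (hcovF hp2)
end

section
/- Let X be a locally 𝔠 and 𝔠-fair topological space such that t(x,X) < cf(𝔠) for every x ∈ X. If |X| > 𝔠, then there is a clopen subset U of X with |U| = L(U) = 𝔠. -/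
/-- The tightness of `X` at `x`: the least cardinal `τ` such that whenever
`x ∈ cl A` there is `B ⊆ A` with `|B| ≤ τ` and `x ∈ cl B`. -/
noncomputable def tightness {X : Type} [TopologicalSpace X] (x : X) : Cardinal :=
  sInf {τ | ∀ A : Set X, x ∈ closure A →
    ∃ B ⊆ A, Cardinal.mk B ≤ τ ∧ x ∈ closure B}

open Cardinal Set Ordinal

local instance (o : Ordinal.{0}) : IsWellOrder o.ToType (· < ·) := isWellOrder_lt

theorem stmt16_bounded_of_lt_cof {o : Ordinal.{0}} {S : Set o.ToType} (h : #S < o.cof) :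
    Set.Bounded (· < ·) S := by
  by_contra hb
  have hc : IsCofinal S := by
    intro a
    by_contra hc
    push_neg at hc
    exact hb ⟨a, fun b hbS => hc b hbS⟩
  rw [← cof_toType] at h
  exact absurd (Order.cof_le hc) (not_le.2 h)

namespace Stmt16Aux

set_option linter.unusedSectionVars false

variable {X : Type} [TopologicalSpace X]

noncomputable def ordRec (o : Ordinal.{0}) (H : Set X → Set X) : o.ToType → Set X :=
  (IsWellFounded.wf (r := ((· < ·) : o.ToType → o.ToType → Prop))).fix
    fun i ih => H (⋃ j : {j : o.ToType // j < i}, ih j.1 j.2)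

theorem ordRec_eq (o : Ordinal.{0}) (H : Set X → Set X) (i : o.ToType) :
    ordRec o H i = H (⋃ j : {j : o.ToType // j < i}, ordRec o H j.1) :=
  WellFounded.fix_eq _ _ i

theorem mk_iUnion_le_c {ι : Type} (f : ι → Set X) (hι : #ι ≤ continuum)
    (h : ∀ i, #(f i) ≤ continuum) : #(⋃ i, f i) ≤ continuum :=
  calc #(⋃ i, f i) ≤ sum fun i => #(f i) := mk_iUnion_le_sum_mk
    _ ≤ sum fun _ : ι => continuum := sum_le_sum _ _ h
    _ = #ι * continuum := sum_const' ι continuum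
    _ ≤ continuum * continuum := mul_le_mul_left hι _
    _ = continuum := mul_eq_self aleph0_le_continuum

theorem exists_succ {o : Ordinal.{0}} (ho : Order.IsSuccLimit o) (i : o.ToType) : ∃ i', i < i' :=
  (Ordinal.toType_noMax_of_succ_lt fun _ ha => ho.succ_lt ha).exists_gt i

/-- From the tightness hypothesis, extract small approximating sets. -/
theorem tight (ht : ∀ x : X, tightness x < (Cardinal.continuum.ord).cof) :
    ∀ (x : X) (A : Set X), x ∈ closure A →
      ∃ B ⊆ A, #B < (Cardinal.continuum.ord).cof ∧ x ∈ closure B := by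
  intro x A hA
  have hne : {τ : Cardinal | ∀ A : Set X, x ∈ closure A →
      ∃ B ⊆ A, Cardinal.mk B ≤ τ ∧ x ∈ closure B}.Nonempty :=
    ⟨#X, fun A hA => ⟨A, Subset.rfl, Cardinal.mk_set_le A, hA⟩⟩
  obtain ⟨B, hBA, hB, hxB⟩ := csInf_mem hne A hA
  exact ⟨B, hBA, lt_of_le_of_lt hB (ht x), hxB⟩

/-- Closures of small sets are small. -/
theorem closure_card_le
    (hfair : ∀ S : Set X, Cardinal.mk S = Cardinal.continuum →
      Cardinal.mk (closure S) = Cardinal.continuum)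
    (hcX : continuum ≤ #X) :
    ∀ S : Set X, #S ≤ continuum → #(closure S) ≤ continuum := by
  intro S hS
  obtain ⟨T, hT⟩ := Cardinal.le_mk_iff_exists_set.1 hcX
  have hST : #(S ∪ T : Set X) = continuum := by
    refine le_antisymm ((mk_union_le S T).trans ?_) ?_
    · rw [hT]
      exact (add_le_add_left hS _).trans (Cardinal.add_eq_self aleph0_le_continuum).le
    · rw [← hT]
      exact mk_le_mk_of_subset subset_union_right
  have := hfair _ hST
  calc #(closure S) ≤ #(closure (S ∪ T)) :=
        mk_le_mk_of_subset (closure_mono subset_union_left)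
    _ = continuum := this

/-- Every set of size at most continuum is contained in a clopen set of size continuum. -/
theorem clopenize
    (hloc : ∀ x : X, ∃ U ∈ nhds x, Cardinal.mk U ≤ Cardinal.continuum)
    (hfair : ∀ S : Set X, Cardinal.mk S = Cardinal.continuum →
      Cardinal.mk (closure S) = Cardinal.continuum)
    (ht : ∀ x : X, tightness x < (Cardinal.continuum.ord).cof)
    (hcX : continuum ≤ #X) :
    ∀ S : Set X, #S ≤ continuum → ∃ C : Set X, IsClopen C ∧ S ⊆ C ∧ #C = continuum := by
  classical
  have hclim : Order.IsSuccLimit (continuum.ord) := isSuccLimit_ord aleph0_le_continuum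
  set θ : Cardinal := (Cardinal.continuum.ord).cof with hθdef
  have hθreg : Cardinal.IsRegular θ := isRegular_cof hclim
  have hθc : θ ≤ continuum := cof_ord_le continuum
  have hθlim : Order.IsSuccLimit θ.ord := isSuccLimit_ord hθreg.aleph0_le
  set o : Ordinal := θ.ord with hodef
  haveI hne : Nonempty o.ToType :=
    toType_nonempty_iff_ne_zero.2 (by rw [hodef]; exact hθreg.ord_pos.ne')
  have hnbhd : ∀ y : X, ∃ O : Set X, IsOpen O ∧ y ∈ O ∧ #O ≤ continuum := by
    intro y
    obtain ⟨N, hN, hNc⟩ := hloc y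
    exact ⟨interior N, isOpen_interior, mem_interior_iff_mem_nhds.2 hN,
      (mk_le_mk_of_subset interior_subset).trans hNc⟩
  choose O hOopen hOmem hOcard using hnbhd
  intro S hS
  obtain ⟨T, hT⟩ := Cardinal.le_mk_iff_exists_set.1 hcX
  set S₀ : Set X := S ∪ T with hS₀def
  have hS₀c : #S₀ = continuum := by
    refine le_antisymm ((mk_union_le S T).trans ?_) ?_
    · rw [hT]
      exact (add_le_add_left hS _).trans (Cardinal.add_eq_self aleph0_le_continuum).le
    · rw [← hT]
      exact mk_le_mk_of_subset subset_union_right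
  set step : Set X → Set X := fun A => ⋃ y : closure A, O y.1 with hstepdef
  have hstep_card : ∀ A : Set X, #A ≤ continuum → #(step A) ≤ continuum := by
    intro A hA
    exact mk_iUnion_le_c _ (closure_card_le hfair hcX A hA) fun y => hOcard y.1
  have hstep_sub : ∀ A : Set X, ∀ z ∈ closure A, O z ⊆ step A := by
    intro A z hz
    exact subset_iUnion (fun y : closure A => O y.1) ⟨z, hz⟩
  set V : o.ToType → Set X := ordRec o (fun A => S₀ ∪ A ∪ step A) with hVdef
  set A : o.ToType → Set X := fun i => ⋃ j : {j : o.ToType // j < i}, V j.1 with hAdef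
  have hV : ∀ i, V i = S₀ ∪ A i ∪ step (A i) := fun i => ordRec_eq o _ i
  have hmono : ∀ {j i : o.ToType}, j < i → V j ⊆ A i := by
    intro j i hj
    exact subset_iUnion (fun j : {j : o.ToType // j < i} => V j.1) ⟨j, hj⟩
  have hAV : ∀ i, A i ⊆ V i := by
    intro i
    rw [hV i]
    exact subset_union_right.trans subset_union_left
  have hS₀V : ∀ i, S₀ ⊆ V i := by
    intro i
    rw [hV i]
    exact subset_union_left.trans subset_union_left
  have hιcard : #(o.ToType) ≤ continuum := by
    rw [mk_toType, hodef, card_ord]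
    exact hθc
  have hVcard : ∀ i, #(V i) ≤ continuum := by
    intro i
    refine (IsWellFounded.wf (r := ((· < ·) : o.ToType → o.ToType → Prop))).induction
      (C := fun i => #(V i) ≤ continuum) i ?_
    intro i IH
    have hAc : #(A i) ≤ continuum :=
      mk_iUnion_le_c _ ((mk_subtype_le _).trans hιcard) fun j => IH j.1 j.2
    rw [hV i]
    refine (mk_union_le _ _).trans ?_
    refine le_trans (add_le_add ((mk_union_le _ _).trans (add_le_add hS₀c.le hAc))
      (hstep_card _ hAc)) ?_
    rw [Cardinal.add_eq_self aleph0_le_continuum, Cardinal.add_eq_self aleph0_le_continuum]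
  set C : Set X := ⋃ i, V i with hCdef
  have hVC : ∀ i, V i ⊆ C := fun i => subset_iUnion V i
  have hCopen : IsOpen C := by
    rw [isOpen_iff_forall_mem_open]
    intro z hz
    obtain ⟨i, hzi⟩ := mem_iUnion.1 hz
    obtain ⟨i', hii'⟩ := exists_succ (hodef ▸ hθlim) i
    have hzA : z ∈ closure (A i') := subset_closure (hmono hii' hzi)
    refine ⟨O z, ?_, hOopen z, hOmem z⟩
    refine ((hstep_sub _ _ hzA).trans ?_)
    refine le_trans ?_ (hVC i')
    rw [hV i']
    exact subset_union_right
  have hCclosed : IsClosed C := by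
    refine isClosed_of_closure_subset ?_
    intro z hz
    obtain ⟨B, hBC, hBθ, hzB⟩ := tight ht z C hz
    have hBmem : ∀ b : B, ∃ i, (b : X) ∈ V i := fun b => mem_iUnion.1 (hBC b.2)
    choose g hg using hBmem
    have hbd : Set.Bounded (· < ·) (Set.range g) := by
      refine stmt16_bounded_of_lt_cof ?_
      have h1 : #(Set.range g) ≤ #B := mk_range_le
      exact h1.trans_lt (by rwa [hodef, hθreg.cof_eq])
    obtain ⟨istar, histar⟩ := hbd
    have hBA : B ⊆ A istar := by
      intro b hb
      exact hmono (histar _ (mem_range_self ⟨b, hb⟩)) (hg ⟨b, hb⟩)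
    have hzA : z ∈ closure (A istar) := (closure_mono hBA) hzB
    refine hVC istar ?_
    rw [hV istar]
    exact subset_union_right (hstep_sub _ _ hzA (hOmem z))
  refine ⟨C, ⟨hCclosed, hCopen⟩, ?_, ?_⟩
  · exact (subset_union_left : S ⊆ S₀).trans ((hS₀V (Classical.arbitrary _)).trans
      (hVC (Classical.arbitrary _)))
  · refine le_antisymm (mk_iUnion_le_c _ hιcard hVcard) ?_
    rw [← hS₀c]
    exact mk_le_mk_of_subset ((hS₀V (Classical.arbitrary _)).trans (hVC (Classical.arbitrary _)))

/-- The increasing chain of clopen sets with chosen new points. -/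
theorem exists_chain
    (hloc : ∀ x : X, ∃ U ∈ nhds x, Cardinal.mk U ≤ Cardinal.continuum)
    (hfair : ∀ S : Set X, Cardinal.mk S = Cardinal.continuum →
      Cardinal.mk (closure S) = Cardinal.continuum)
    (ht : ∀ x : X, tightness x < (Cardinal.continuum.ord).cof)
    (hX : continuum < #X) :
    ∃ (C : (continuum : Cardinal.{0}).ord.ToType → Set X)
      (x : (continuum : Cardinal.{0}).ord.ToType → X),
      (∀ i, IsClopen (C i)) ∧ (∀ i, #(C i) = continuum) ∧
      (∀ j i, j ≤ i → C j ⊆ C i) ∧ (∀ i, x i ∈ C i) ∧ (∀ j i, j < i → x i ∉ C j) := by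
  classical
  have hcX : continuum ≤ #X := hX.le
  haveI : Nonempty X := Cardinal.mk_ne_zero_iff.1 ((zero_le : (0 : Cardinal) ≤ continuum).trans_lt hX).ne' 
  set pk : Set X → X := fun A => if h : Aᶜ.Nonempty then h.choose else Classical.arbitrary X
    with hpkdef
  have hpk : ∀ A : Set X, #A ≤ continuum → pk A ∉ A := by
    intro A hA
    have hcomp : Aᶜ.Nonempty := by
      rw [nonempty_compl]
      intro h
      rw [h, mk_univ] at hA
      exact absurd hA (not_le.2 hX)
    have : pk A = hcomp.choose := by rw [hpkdef]; exact dif_pos hcomp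
    rw [this]
    exact hcomp.choose_spec
  set clopF : Set X → Set X := fun A =>
    if h : ∃ C : Set X, IsClopen C ∧ A ⊆ C ∧ #C = continuum then h.choose else ∅ with hclopdef
  have hclopF : ∀ A : Set X, #A ≤ continuum →
      IsClopen (clopF A) ∧ A ⊆ clopF A ∧ #(clopF A) = continuum := by
    intro A hA
    have h := clopenize hloc hfair ht hcX A hA
    have heq : clopF A = h.choose := by rw [hclopdef]; exact dif_pos h
    rw [heq]
    exact h.choose_spec
  set Cb : continuum.ord.ToType → Set X :=
    ordRec continuum.ord (fun A => clopF (insert (pk A) A)) with hCbdef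
  set A : continuum.ord.ToType → Set X :=
    fun i => ⋃ j : {j : continuum.ord.ToType // j < i}, Cb j.1 with hAdef
  have hCb : ∀ i, Cb i = clopF (insert (pk (A i)) (A i)) := fun i => ordRec_eq _ _ i
  have hιcard : #(continuum.ord.ToType) ≤ continuum := by rw [mk_toType, card_ord]
  have hinv : ∀ i, IsClopen (Cb i) ∧ #(Cb i) = continuum ∧
      insert (pk (A i)) (A i) ⊆ Cb i := by
    intro i
    refine (IsWellFounded.wf
        (r := ((· < ·) : continuum.ord.ToType → continuum.ord.ToType → Prop))).induction
      (C := fun i => IsClopen (Cb i) ∧ #(Cb i) = continuum ∧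
        insert (pk (A i)) (A i) ⊆ Cb i) i ?_
    intro i IH
    have hAc : #(A i) ≤ continuum :=
      mk_iUnion_le_c _ ((mk_subtype_le _).trans hιcard) fun j => (IH j.1 j.2).2.1.le
    have hins : #(insert (pk (A i)) (A i) : Set X) ≤ continuum := by
      refine mk_insert_le.trans ?_
      refine le_trans (add_le_add hAc (one_lt_aleph0.le.trans aleph0_le_continuum)) ?_
      exact (Cardinal.add_eq_self aleph0_le_continuum).le
    obtain ⟨h1, h2, h3⟩ := hclopF _ hins
    rw [← hCb i] at h1 h2 h3
    exact ⟨h1, h3, h2⟩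
  have hAc : ∀ i, #(A i) ≤ continuum := fun i =>
    mk_iUnion_le_c _ ((mk_subtype_le _).trans hιcard) fun j => (hinv j.1).2.1.le
  refine ⟨Cb, fun i => pk (A i), fun i => (hinv i).1, fun i => (hinv i).2.1, ?_, ?_, ?_⟩
  · intro j i hji
    rcases eq_or_lt_of_le hji with rfl | hlt
    · exact Subset.rfl
    · refine le_trans ?_ ((subset_insert _ _).trans (hinv i).2.2)
      exact subset_iUnion (fun j : {j : continuum.ord.ToType // j < i} => Cb j.1) ⟨j, hlt⟩
  · intro i
    exact (hinv i).2.2 (mem_insert _ _)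
  · intro j i hji hmem
    refine hpk (A i) (hAc i) ?_
    refine subset_iUnion (fun j : {j : continuum.ord.ToType // j < i} => Cb j.1) ⟨j, hji⟩ hmem

end Stmt16Aux

/-- If `X` is locally `𝔠`, `𝔠`-fair, `t(x,X) < cf(𝔠)` for all `x`, and `|X| > 𝔠`,
then `X` has a clopen subset `U` with `|U| = L(U) = 𝔠`. -/
theorem stmt_16 (X : Type) [TopologicalSpace X]
    (hloc : ∀ x : X, ∃ U ∈ nhds x, Cardinal.mk U ≤ Cardinal.continuum)
    (hfair : ∀ S : Set X, Cardinal.mk S = Cardinal.continuum →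
      Cardinal.mk (closure S) = Cardinal.continuum)
    (ht : ∀ x : X, tightness x < (Cardinal.continuum.ord).cof)
    (hX : Cardinal.continuum < Cardinal.mk X) :
    ∃ U : Set X, IsClopen U ∧ Cardinal.mk U = Cardinal.continuum ∧
      lindelofNumber U = Cardinal.continuum := by
  classical
  obtain ⟨Cb, xp, hclo, hcard, hmono, hxmem, hxnot⟩ :=
    Stmt16Aux.exists_chain hloc hfair ht hX
  have hclim : Order.IsSuccLimit (continuum.ord) := isSuccLimit_ord aleph0_le_continuum
  haveI hne : Nonempty continuum.ord.ToType :=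
    toType_nonempty_iff_ne_zero.2 hclim.pos.ne'
  have hιcard : #(continuum.ord.ToType) = continuum := by rw [mk_toType, card_ord]
  set U : Set X := ⋃ i, Cb i with hUdef
  have hCbU : ∀ i, Cb i ⊆ U := fun i => subset_iUnion Cb i
  have hUopen : IsOpen U := isOpen_iUnion fun i => (hclo i).isOpen
  have hUclosed : IsClosed U := by
    refine isClosed_of_closure_subset ?_
    intro z hz
    obtain ⟨B, hBU, hBθ, hzB⟩ := Stmt16Aux.tight ht z U hz
    have hBmem : ∀ b : B, ∃ i, (b : X) ∈ Cb i := fun b => mem_iUnion.1 (hBU b.2)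
    choose g hg using hBmem
    have hbd : Set.Bounded (· < ·) (Set.range g) := by
      refine stmt16_bounded_of_lt_cof ?_
      exact mk_range_le.trans_lt hBθ
    obtain ⟨istar, histar⟩ := hbd
    have hBA : B ⊆ Cb istar := fun b hb =>
      hmono _ _ (histar _ (mem_range_self ⟨b, hb⟩)).le (hg ⟨b, hb⟩)
    exact hCbU istar (((hclo istar).isClosed.closure_subset_iff).2 hBA hzB)
  have hUcard : #U = continuum := by
    refine le_antisymm (Stmt16Aux.mk_iUnion_le_c _ hιcard.le fun i => (hcard i).le) ?_
    rw [← hcard (Classical.arbitrary _)]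
    exact mk_le_mk_of_subset (hCbU _)
  set Lset : Set Cardinal := {κ | ∀ 𝒰 : Set (Set X), (∀ V ∈ 𝒰, IsOpen V) → U ⊆ ⋃₀ 𝒰 →
    ∃ 𝒱 ⊆ 𝒰, Cardinal.mk 𝒱 ≤ κ ∧ U ⊆ ⋃₀ 𝒱} with hLdef
  have hLrfl : lindelofNumber U = sInf Lset := rfl
  have hcmem : continuum ∈ Lset := by
    intro 𝒰 hop hcov
    have hpick : ∀ u : U, ∃ V, V ∈ 𝒰 ∧ (u : X) ∈ V := by
      intro u
      obtain ⟨V, hV, hu⟩ := hcov u.2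
      exact ⟨V, hV, hu⟩
    choose f hf1 hf2 using hpick
    refine ⟨Set.range f, range_subset_iff.2 hf1, mk_range_le.trans hUcard.le, ?_⟩
    intro u hu
    exact ⟨f ⟨u, hu⟩, mem_range_self _, hf2 ⟨u, hu⟩⟩
  have hLle : lindelofNumber U ≤ continuum := by
    rw [hLrfl]
    exact csInf_le (OrderBot.bddBelow _) hcmem
  have hLmem : sInf Lset ∈ Lset := csInf_mem ⟨continuum, hcmem⟩
  -- notation for the enumeration of the index type
  set e := ToType.mk (o := continuum.ord) with hedef
  set ti : continuum.ord.ToType → Ordinal := fun i => ((e.symm i : Iio continuum.ord) : Ordinal)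
    with htidef
  have hback : ∀ (b : Ordinal) (h : b < continuum.ord), ti (e ⟨b, h⟩) = b := by
    intro b h
    show ((e.symm (e ⟨b, h⟩) : Iio continuum.ord) : Ordinal) = b
    rw [OrderIso.symm_apply_apply]
  have hti_iff : ∀ i k : continuum.ord.ToType, ti i < ti k ↔ i < k := by
    intro i k
    exact (Subtype.coe_lt_coe).trans (e.symm.lt_iff_lt)
  -- the key lower bound
  have hlow : ∀ ν : Cardinal, ν.IsRegular → continuum.ord.cof ≤ ν → ν ≤ continuum →
      ν ≤ lindelofNumber U := by
    intro ν hνreg hθν hνc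
    have hνo : ν.ord ≤ continuum.ord := ord_le_ord.2 hνc
    have hνlim : Order.IsSuccLimit ν.ord := isSuccLimit_ord hνreg.aleph0_le
    set P : Set continuum.ord.ToType := {i | ti i < ν.ord} with hPdef
    set T : continuum.ord.ToType → Set X := fun i => xp '' {j | j ∈ P ∧ i < j} with hTdef
    have hTsub : ∀ i, closure (T i) ⊆ (Cb i)ᶜ := by
      intro i
      refine closure_minimal ?_ (hclo i).isOpen.isClosed_compl
      rintro _ ⟨j, ⟨hjP, hij⟩, rfl⟩
      exact hxnot i j hij
    set G : continuum.ord.ToType → Set X := fun i => U \ closure (T i) with hGdef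
    have hGopen : ∀ i, IsOpen (G i) := fun i => hUopen.sdiff isClosed_closure
    have hGmem : ∀ k i : continuum.ord.ToType, k ≤ i → xp k ∈ G i := by
      intro k i hki
      exact ⟨hCbU k (hxmem k), fun hmem => hTsub i hmem (hmono k i hki (hxmem k))⟩
    have hGnot : ∀ i k : continuum.ord.ToType, i < k → k ∈ P → xp k ∉ G i := by
      intro i k hik hkP hG
      exact hG.2 (subset_closure ⟨k, ⟨hkP, hik⟩, rfl⟩)
    have hcover : ∀ z ∈ U, ∃ i ∈ P, z ∈ G i := by
      intro z hz
      by_contra hcon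
      push_neg at hcon
      have hz' : ∀ i ∈ P, z ∈ closure (T i) := by
        intro i hi
        by_contra h'
        exact hcon i hi ⟨hz, h'⟩
      set i₀ : continuum.ord.ToType := e ⟨0, hclim.pos⟩ with hi₀def
      have hi₀P : i₀ ∈ P := by
        show ti i₀ < ν.ord
        rw [hi₀def, hback]
        exact hνreg.ord_pos
      obtain ⟨B, hBT, hBθ, hzB⟩ := Stmt16Aux.tight ht z (T i₀) (hz' i₀ hi₀P)
      have hBj : ∀ b : B, ∃ j, (j ∈ P ∧ i₀ < j) ∧ xp j = b := fun b => hBT b.2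
      choose j hj hxj using hBj
      have hflt : ∀ b : B, ti (j b) + 1 < ν.ord := fun b => by
        rw [Ordinal.add_one_eq_succ]
        exact hνlim.succ_lt (hj b).1
      have hBcof : #B < ν.ord.cof := by
        rw [hνreg.cof_eq]
        exact hBθ.trans_le hθν
      have hs : (⨆ b : B, (ti (j b) + 1)) < ν.ord := Ordinal.iSup_lt_ord hBcof hflt
      set istar : continuum.ord.ToType := e ⟨_, hs.trans_le hνo⟩ with histardef
      have histarP : istar ∈ P := by
        show ti istar < ν.ord
        rw [histardef, hback]
        exact hs
      have hjlt : ∀ b : B, j b < istar := by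
        intro b
        rw [← hti_iff]
        rw [histardef, hback]
        refine lt_of_lt_of_le ?_ (Ordinal.le_iSup _ b)
        rw [Ordinal.add_one_eq_succ]
        exact Order.lt_succ _
      have hBC : B ⊆ Cb istar := by
        intro b hb
        have h1 : xp (j ⟨b, hb⟩) ∈ Cb istar := hmono _ _ (hjlt ⟨b, hb⟩).le (hxmem _)
        rwa [hxj ⟨b, hb⟩] at h1
      have hzC : z ∈ Cb istar := ((hclo istar).isClosed.closure_subset_iff).2 hBC hzB
      exact hTsub istar (hz' istar histarP) hzC
    obtain ⟨𝒱, h𝒱𝒰, h𝒱card, h𝒱cov⟩ := hLmem (G '' P)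
      (by rintro _ ⟨i, _, rfl⟩; exact hGopen i)
      (fun z hz => by
        obtain ⟨i, hiP, hzG⟩ := hcover z hz
        exact ⟨G i, ⟨i, hiP, rfl⟩, hzG⟩)
    set I : Set continuum.ord.ToType := {i | i ∈ P ∧ G i ∈ 𝒱} with hIdef
    have hcof2 : ∀ k ∈ P, ∃ i ∈ I, k ≤ i := by
      intro k hk
      have hxk : xp k ∈ ⋃₀ 𝒱 := h𝒱cov (hCbU k (hxmem k))
      obtain ⟨V, hV, hxV⟩ := hxk
      obtain ⟨i, hiP, rfl⟩ := h𝒱𝒰 hV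
      exact ⟨i, ⟨hiP, hV⟩, le_of_not_gt fun hik => hGnot i k hik hk hxV⟩
    have hinj : Set.InjOn G I := by
      intro a ha b hb hab
      by_contra hne'
      rcases lt_or_gt_of_ne hne' with h | h
      · refine hGnot a b h hb.1 ?_
        rw [hab]
        exact hGmem b b le_rfl
      · refine hGnot b a h ha.1 ?_
        rw [← hab]
        exact hGmem a a le_rfl
    have hνI : ν ≤ #I := by
      by_contra hlt
      push_neg at hlt
      have hflt : ∀ i : I, ti i.1 + 1 < ν.ord := fun i => by
        rw [Ordinal.add_one_eq_succ]
        exact hνlim.succ_lt i.2.1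
      have hs : (⨆ i : I, (ti i.1 + 1)) < ν.ord :=
        Ordinal.iSup_lt_ord (by rw [hνreg.cof_eq]; exact hlt) hflt
      set k : continuum.ord.ToType := e ⟨_, hs.trans_le hνo⟩ with hkdef
      have hkP : k ∈ P := by
        show ti k < ν.ord
        rw [hkdef, hback]
        exact hs
      obtain ⟨i, hiI, hki⟩ := hcof2 k hkP
      have hik : i < k := by
        rw [← hti_iff]
        rw [hkdef, hback]
        refine lt_of_lt_of_le ?_ (Ordinal.le_iSup _ ⟨i, hiI⟩)
        rw [Ordinal.add_one_eq_succ]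
        exact Order.lt_succ _
      exact absurd hki (not_le.2 hik)
    have hI𝒱 : #I ≤ #𝒱 := by
      refine Cardinal.mk_le_of_injective (f := fun i : I => (⟨G i.1, i.2.2⟩ : 𝒱)) ?_
      intro a b hab
      exact Subtype.ext (hinj a.2 b.2 (congrArg Subtype.val hab))
    exact le_trans hνI (le_trans hI𝒱 h𝒱card)
  have hge : continuum ≤ lindelofNumber U := by
    refine le_of_forall_lt ?_
    intro μ hμ
    by_cases hμθ : continuum.ord.cof ≤ μ
    · have h1 : ℵ₀ ≤ μ := (isRegular_cof hclim).aleph0_le.trans hμθ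
      have h2 := hlow (Order.succ μ) (isRegular_succ h1) (hμθ.trans (Order.le_succ μ))
        (Order.succ_le_of_lt hμ)
      exact lt_of_lt_of_le (Order.lt_succ μ) h2
    · push_neg at hμθ
      exact lt_of_lt_of_le hμθ (hlow _ (isRegular_cof hclim) le_rfl (cof_ord_le _))
  exact ⟨U, ⟨hUclosed, hUopen⟩, hUcard, le_antisymm hLle hge⟩
end
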